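/- arXiv:1702.02085 — 11 statements merged into one kernel-verified Lean document; each statement's English description precedes it below -/
import Mathlib

section
/- Let Z be an n×n complex matrix with singular values r_1,...,r_n all satisfying 0 ≤ r_k < 1 (i.e., Z is a strict contraction). Then for any n×n unitary matrix U, ∏_{k=1}^n (1-r_k)/(1+r_k) ≤ det(I - Z*Z)/|det(I - UZ)|² ≤ ∏_{k=1}^n (1+r_k)/(1-r_k). -/
open Matrix BigOperators
open scoped ComplexOrder

/-- Key norm identity: if `BᴴB = diagonal (r²)` then `‖B u‖² = ∑ rᵢ²|uᵢ|²`. -/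
lemma tung_norm_identity {n : ℕ} (B : Matrix (Fin n) (Fin n) ℂ) (r : Fin n → ℝ)
    (hB : Bᴴ * B = Matrix.diagonal (fun i => ((r i : ℂ)) ^ 2)) (u : Fin n → ℂ) :
    ∑ i, Complex.normSq ((B *ᵥ u) i) = ∑ i, (r i) ^ 2 * Complex.normSq (u i) := by
  have key : star (B *ᵥ u) ⬝ᵥ (B *ᵥ u)
      = (star u ᵥ* Matrix.diagonal (fun i => ((r i : ℂ)) ^ 2)) ⬝ᵥ u := by
    rw [Matrix.star_mulVec, Matrix.dotProduct_mulVec, Matrix.vecMul_vecMul, hB]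
  have lhs : star (B *ᵥ u) ⬝ᵥ (B *ᵥ u)
      = ((∑ i, Complex.normSq ((B *ᵥ u) i) : ℝ) : ℂ) := by
    simp only [dotProduct, Pi.star_apply, Complex.ofReal_sum]
    refine Finset.sum_congr rfl fun i _ => ?_
    rw [Complex.star_def, ← Complex.normSq_eq_conj_mul_self]
  have rhs : (star u ᵥ* Matrix.diagonal (fun i => ((r i : ℂ)) ^ 2)) ⬝ᵥ u
      = ((∑ i, (r i) ^ 2 * Complex.normSq (u i) : ℝ) : ℂ) := by
    simp only [dotProduct, Matrix.vecMul_diagonal, Pi.star_apply, Complex.ofReal_sum]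
    refine Finset.sum_congr rfl fun i _ => ?_
    push_cast
    rw [Complex.star_def, mul_assoc, mul_comm ((starRingEnd ℂ) (u i)), mul_assoc, mul_comm (u i),
      ← Complex.normSq_eq_conj_mul_self]
  have := lhs ▸ rhs ▸ key
  exact_mod_cast this

/-- Column-peeling induction: determinant bounds for `1 - B·E_s`. -/
lemma tung_det_bound_aux {n : ℕ} (B : Matrix (Fin n) (Fin n) ℂ) (r : Fin n → ℝ)
    (hB : Bᴴ * B = Matrix.diagonal (fun i => ((r i : ℂ)) ^ 2))
    (hr0 : ∀ i, 0 ≤ r i) (hr1 : ∀ i, r i < 1) (s : Finset (Fin n)) :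
    ∏ i ∈ s, (1 - r i)
      ≤ ‖Matrix.det (1 - B * Matrix.diagonal (fun i => if i ∈ s then (1:ℂ) else 0))‖
    ∧ ‖Matrix.det (1 - B * Matrix.diagonal (fun i => if i ∈ s then (1:ℂ) else 0))‖
      ≤ ∏ i ∈ s, (1 + r i) := by
  classical
  induction s using Finset.induction_on with
  | empty => simp
  | @insert a s ha ih =>
    obtain ⟨ih1, ih2⟩ := ih
    set Es := Matrix.diagonal (fun i => if i ∈ s then (1:ℂ) else 0) with hEs
    set M := 1 - B * Es with hMdef
    have hprodpos : (0:ℝ) < ∏ i ∈ s, (1 - r i) :=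
      Finset.prod_pos fun i _ => by linarith [hr1 i]
    have hdetMpos : (0:ℝ) < ‖M.det‖ := lt_of_lt_of_le hprodpos ih1
    have hdetM : IsUnit M.det :=
      isUnit_iff_ne_zero.mpr (fun h => by simp [h] at hdetMpos)
    set x := M⁻¹ *ᵥ (fun i => B i a) with hxdef
    have hMx : M *ᵥ x = fun i => B i a := by
      rw [hxdef, Matrix.mulVec_mulVec, Matrix.mul_nonsing_inv _ hdetM, Matrix.one_mulVec]
    -- x = B *ᵥ u
    set u : Fin n → ℂ := Pi.single a 1 + Es *ᵥ x with hudef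
    have hxu : x = B *ᵥ u := by
      have h2 : M *ᵥ x = x - (B * Es) *ᵥ x := by
        rw [hMdef, Matrix.sub_mulVec, Matrix.one_mulVec]
      have h3 : (fun i => B i a) = B *ᵥ Pi.single a 1 := by
        rw [Matrix.mulVec_single]; ext i; simp
      have h4 : x - (B * Es) *ᵥ x = B *ᵥ Pi.single a 1 := by
        rw [← h2, hMx, h3]
      have h1 : x = B *ᵥ Pi.single a 1 + (B * Es) *ᵥ x := sub_eq_iff_eq_add.mp h4
      rw [hudef, Matrix.mulVec_add, Matrix.mulVec_mulVec]
      exact h1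
    -- |x a| ≤ r a
    have hu_a : u a = 1 := by
      simp [hudef, hEs, Matrix.mulVec_diagonal, ha]
    have hu_ne : ∀ i, i ≠ a → u i = if i ∈ s then x i else 0 := by
      intro i hi
      simp [hudef, hEs, Matrix.mulVec_diagonal, Pi.single_apply, hi, ite_mul, one_mul, zero_mul]
    have hnorm := tung_norm_identity B r hB u
    rw [← hxu] at hnorm
    have hsplit : ∀ i, (r i) ^ 2 * Complex.normSq (u i)
        = (if i = a then (r a) ^ 2 else 0)
          + (if i ∈ s then (r i) ^ 2 * Complex.normSq (x i) else 0) := by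
      intro i
      by_cases hi : i = a
      · subst hi
        simp [hu_a, ha]
      · rw [hu_ne i hi]
        by_cases hi2 : i ∈ s <;> simp [hi, hi2]
    have hsum1 : ∑ i, (r i) ^ 2 * Complex.normSq (u i)
        = (r a) ^ 2 + ∑ i ∈ s, (r i) ^ 2 * Complex.normSq (x i) := by
      rw [Finset.sum_congr rfl (fun i _ => hsplit i), Finset.sum_add_distrib]
      congr 1
      · simp
      · rw [Finset.sum_ite_mem, Finset.univ_inter]
    have hsum2 : Complex.normSq (x a) + ∑ i ∈ s, Complex.normSq (x i)
        ≤ ∑ i, Complex.normSq (x i) := by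
      have h5 : ∑ i ∈ insert a s, Complex.normSq (x i) ≤ ∑ i, Complex.normSq (x i) :=
        Finset.sum_le_sum_of_subset_of_nonneg (Finset.subset_univ _)
          (fun i _ _ => Complex.normSq_nonneg _)
      rwa [Finset.sum_insert ha] at h5
    have hsum3 : ∑ i ∈ s, (r i) ^ 2 * Complex.normSq (x i)
        ≤ ∑ i ∈ s, Complex.normSq (x i) := by
      refine Finset.sum_le_sum fun i _ => ?_
      have h1 : (r i) ^ 2 ≤ 1 := by nlinarith [hr0 i, hr1 i]
      nlinarith [Complex.normSq_nonneg (x i)]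
    have hxa : Complex.normSq (x a) ≤ (r a) ^ 2 := by
      rw [hnorm, hsum1] at hsum2
      linarith
    have habs_xa : ‖x a‖ ≤ r a := by
      have h1 := Complex.sq_norm (x a)
      nlinarith [norm_nonneg (x a), hr0 a]
    -- determinant identity
    have hN : (1 - B * Matrix.diagonal (fun i => if i ∈ insert a s then (1:ℂ) else 0))
        = M.updateCol a (fun i => M i a - B i a) := by
      ext i j
      by_cases hj : j = a
      · subst hj
        rw [Matrix.updateCol_self]
        simp [hMdef, hEs, Matrix.mul_diagonal, ha]
      · rw [Matrix.updateCol_ne hj]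
        simp [hMdef, hEs, Matrix.mul_diagonal, Finset.mem_insert, hj]
    have hcramer : Matrix.cramer M (fun i => B i a) = M.det • x := by
      rw [Matrix.cramer_eq_adjugate_mulVec, ← hMx, Matrix.mulVec_mulVec, Matrix.adjugate_mul,
        Matrix.smul_mulVec, Matrix.one_mulVec]
    have hdetN : Matrix.det (1 - B * Matrix.diagonal
        (fun i => if i ∈ insert a s then (1:ℂ) else 0)) = M.det * (1 - x a) := by
      rw [hN]
      have hcol : (fun i => M i a - B i a) = (fun i => M i a) + fun i => (-1 : ℂ) * B i a := by
        ext i; simp only [Pi.add_apply]; ring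
      rw [hcol, Matrix.det_updateCol_add]
      have h1 : M.updateCol a (fun i => M i a) = M := Matrix.updateCol_eq_self M a
      have h2 : (fun i => (-1:ℂ) * B i a) = (-1 : ℂ) • (fun i => B i a) := by
        ext i; simp
      rw [h1, h2, Matrix.det_updateCol_smul, ← Matrix.cramer_apply, hcramer]
      simp only [Pi.smul_apply, smul_eq_mul]
      ring
    rw [hdetN, norm_mul]
    have habs1 : ‖1 - x a‖ ≤ 1 + r a := by
      have h := norm_sub_le (1 : ℂ) (x a)
      rw [norm_one] at h
      linarith
    have habs2 : 1 - r a ≤ ‖1 - x a‖ := by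
      have h := norm_sub_norm_le (1 : ℂ) (x a)
      rw [norm_one] at h
      linarith
    rw [Finset.prod_insert ha, Finset.prod_insert ha]
    constructor
    · calc (1 - r a) * ∏ i ∈ s, (1 - r i)
          ≤ ‖1 - x a‖ * ‖M.det‖ := by
            apply mul_le_mul habs2 ih1 (le_of_lt hprodpos) (norm_nonneg _)
        _ = ‖M.det‖ * ‖1 - x a‖ := mul_comm _ _
    · calc ‖M.det‖ * ‖1 - x a‖
          ≤ (∏ i ∈ s, (1 + r i)) * (1 + r a) := by
            apply mul_le_mul ih2 habs1 (norm_nonneg _)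
            exact Finset.prod_nonneg fun i _ => by linarith [hr0 i]
        _ = (1 + r a) * ∏ i ∈ s, (1 + r i) := mul_comm _ _

/-- Determinant bounds via singular values. -/
lemma tung_det_bound {n : ℕ} (B : Matrix (Fin n) (Fin n) ℂ) (r : Fin n → ℝ)
    (hB : Bᴴ * B = Matrix.diagonal (fun i => ((r i : ℂ)) ^ 2))
    (hr0 : ∀ i, 0 ≤ r i) (hr1 : ∀ i, r i < 1) :
    ∏ i, (1 - r i) ≤ ‖Matrix.det (1 - B)‖
      ∧ ‖Matrix.det (1 - B)‖ ≤ ∏ i, (1 + r i) := by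
  have h := tung_det_bound_aux B r hB hr0 hr1 Finset.univ
  have h1 : (Matrix.diagonal (fun i : Fin n => if i ∈ Finset.univ then (1:ℂ) else 0)) = 1 := by
    simp [Matrix.diagonal_one]
  rw [h1, mul_one] at h
  exact h

/-- Harnack type determinantal inequality of Tung (1964): for a strict contraction `Z`
(all singular values `r k < 1`) and any unitary `U`,
`∏ (1-r k)/(1+r k) ≤ det(I - ZᴴZ)/|det(I - UZ)|² ≤ ∏ (1+r k)/(1-r k)`. -/
theorem tung_harnack_inequality (n : ℕ) (Z : Matrix (Fin n) (Fin n) ℂ)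
    (r : Fin n → ℝ)
    (hr : ∀ k, r k = Real.sqrt ((Matrix.isHermitian_conjTranspose_mul_self Z).eigenvalues k))
    (hr1 : ∀ k, r k < 1)
    (U : Matrix (Fin n) (Fin n) ℂ) (hU : U ∈ Matrix.unitaryGroup (Fin n) ℂ) :
    ∏ k, (1 - r k) / (1 + r k) ≤ ((1 - Zᴴ * Z).det).re / ‖(1 - U * Z).det‖ ^ 2 ∧
    ((1 - Zᴴ * Z).det).re / ‖(1 - U * Z).det‖ ^ 2 ≤ ∏ k, (1 + r k) / (1 - r k) := by
  have hH := Matrix.isHermitian_conjTranspose_mul_self Z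
  set lam : Fin n → ℝ := hH.eigenvalues with hlam
  have hlam0 : ∀ k, 0 ≤ lam k := fun k =>
    (Matrix.posSemidef_conjTranspose_mul_self Z).eigenvalues_nonneg k
  have hr0 : ∀ k, 0 ≤ r k := fun k => (hr k) ▸ Real.sqrt_nonneg _
  have hrsq : ∀ k, (r k) ^ 2 = lam k := fun k => by
    rw [hr k, Real.sq_sqrt (hlam0 k)]
  set W : Matrix (Fin n) (Fin n) ℂ := (hH.eigenvectorUnitary : Matrix (Fin n) (Fin n) ℂ)
    with hWdef
  have hW1 : star W * W = 1 := Matrix.mem_unitaryGroup_iff'.mp hH.eigenvectorUnitary.2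
  have hW2 : W * star W = 1 := Matrix.mem_unitaryGroup_iff.mp hH.eigenvectorUnitary.2
  have hU1 : star U * U = 1 := Matrix.mem_unitaryGroup_iff'.mp hU
  have hspec : Zᴴ * Z = W * Matrix.diagonal (fun i => ((lam i : ℂ)))
      * star W := by
    have := hH.spectral_theorem
    rw [Unitary.conjStarAlgAut_apply] at this
    exact this
  -- the matrix B
  set B : Matrix (Fin n) (Fin n) ℂ := star W * (U * Z) * W with hBdef
  have hB : Bᴴ * B = Matrix.diagonal (fun i => ((r i : ℂ)) ^ 2) := by
    have hBH : Bᴴ = star W * (Zᴴ * star U) * W := by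
      rw [hBdef]
      simp [Matrix.conjTranspose_mul, Matrix.star_eq_conjTranspose, mul_assoc]
    rw [hBH, hBdef]
    calc star W * (Zᴴ * star U) * W * (star W * (U * Z) * W)
        = star W * Zᴴ * (star U * (W * star W) * U) * Z * W := by
          simp only [Matrix.star_eq_conjTranspose] at *
          noncomm_ring
      _ = star W * (Zᴴ * Z) * W := by
          rw [hW2, mul_one, hU1]
          noncomm_ring
      _ = star W * W * Matrix.diagonal (fun i => ((lam i : ℂ))) * (star W * W) := by
          rw [hspec]
          noncomm_ring
      _ = Matrix.diagonal (fun i => ((r i : ℂ)) ^ 2) := by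
          have hfun : (fun i => ((lam i : ℂ))) = fun i => ((r i : ℂ)) ^ 2 := by
            funext i
            rw [← hrsq i]
            push_cast
            ring
          rw [hW1, one_mul, mul_one, hfun]
  -- |det (1 - B)| = |det (1 - U Z)|
  have hdet1 : Matrix.det (1 - B) = Matrix.det (1 - U * Z) := by
    have h1 : (1 : Matrix (Fin n) (Fin n) ℂ) - B = star W * (1 - U * Z) * W := by
      rw [hBdef, Matrix.mul_sub, Matrix.sub_mul, mul_one, hW1]
    rw [h1, Matrix.det_mul, Matrix.det_mul]
    have h2 : (star W).det * W.det = 1 := by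
      rw [← Matrix.det_mul, hW1, Matrix.det_one]
    calc (star W).det * (1 - U * Z).det * W.det
        = (star W).det * W.det * (1 - U * Z).det := by ring
      _ = (1 - U * Z).det := by rw [h2, one_mul]
  -- numerator
  have hnum : ((1 - Zᴴ * Z).det).re = (∏ k, (1 - r k)) * ∏ k, (1 + r k) := by
    have hdiag : (1 : Matrix (Fin n) (Fin n) ℂ) - Matrix.diagonal (fun i => ((lam i : ℂ)))
        = Matrix.diagonal (fun i => 1 - (lam i : ℂ)) := by
      ext i j
      by_cases h : i = j
      · subst h; simp
      · simp [Matrix.one_apply_ne h, Matrix.diagonal_apply_ne _ h]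
    have h1 : (1 : Matrix (Fin n) (Fin n) ℂ) - Zᴴ * Z
        = W * (Matrix.diagonal (fun i => 1 - (lam i : ℂ))) * star W := by
      rw [← hdiag, Matrix.mul_sub, Matrix.sub_mul, mul_one, hW2, hspec]
    have h2 : ((1 : Matrix (Fin n) (Fin n) ℂ) - Zᴴ * Z).det = ∏ k, (1 - (lam k : ℂ)) := by
      rw [h1, Matrix.det_mul, Matrix.det_mul]
      have h3 : W.det * (star W).det = 1 := by
        rw [← Matrix.det_mul, hW2, Matrix.det_one]
      rw [Matrix.det_diagonal]
      calc W.det * (∏ k, (1 - (lam k : ℂ))) * (star W).det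
          = W.det * (star W).det * ∏ k, (1 - (lam k : ℂ)) := by ring
        _ = ∏ k, (1 - (lam k : ℂ)) := by rw [h3, one_mul]
    have h4 : (∏ k, (1 - (lam k : ℂ))) = (((∏ k, (1 - lam k)) : ℝ) : ℂ) := by
      push_cast
      rfl
    rw [h2, h4, Complex.ofReal_re, ← Finset.prod_mul_distrib]
    refine Finset.prod_congr rfl fun k _ => ?_
    rw [← hrsq k]
    ring
  -- bounds on the denominator
  obtain ⟨hD1, hD2⟩ := tung_det_bound B r hB hr0 hr1
  rw [hdet1] at hD1 hD2
  set D : ℝ := ‖(1 - U * Z).det‖ with hDdef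
  set P1 : ℝ := ∏ k, (1 - r k) with hP1def
  set P2 : ℝ := ∏ k, (1 + r k) with hP2def
  have hP1pos : 0 < P1 := Finset.prod_pos fun k _ => by linarith [hr1 k]
  have hP2pos : 0 < P2 := Finset.prod_pos fun k _ => by linarith [hr0 k]
  have hDpos : 0 < D := lt_of_lt_of_le hP1pos hD1
  rw [hnum]
  constructor
  · rw [Finset.prod_div_distrib, ← hP1def, ← hP2def]
    calc P1 / P2 = P1 * P2 / P2 ^ 2 := by
          field_simp
      _ ≤ P1 * P2 / D ^ 2 := by
          exact div_le_div_of_nonneg_left (by positivity) (pow_pos hDpos 2)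
            (pow_le_pow_left₀ hDpos.le hD2 2)
  · rw [Finset.prod_div_distrib, ← hP1def, ← hP2def]
    calc P1 * P2 / D ^ 2 ≤ P1 * P2 / P1 ^ 2 := by
          exact div_le_div_of_nonneg_left (by positivity) (pow_pos hP1pos 2)
            (pow_le_pow_left₀ hP1pos.le hD1 2)
      _ = P2 / P1 := by
          field_simp
end

section
/- Let A be an n×n complex matrix with singular values r_1,...,r_n. Then |det(I - A)| ≤ ∏_{k=1}^n (1 + r_k). -/
open Matrix BigOperators
open scoped ComplexOrder


lemma myTrace_eq {n : ℕ} {H : Matrix (Fin n) (Fin n) ℂ} (hH : H.IsHermitian) :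
    H.trace = ∑ i, (hH.eigenvalues i : ℂ) := by
  conv_lhs => rw [hH.spectral_theorem]
  rw [Unitary.conjStarAlgAut_apply, Matrix.trace_mul_cycle, Unitary.coe_star_mul_self, one_mul, trace_diagonal]
  simp

lemma myDiag_nonneg {n : ℕ} {H : Matrix (Fin n) (Fin n) ℂ} (hH : H.PosSemidef) (i : Fin n) :
    0 ≤ (H i i).re := by
  have := hH.re_dotProduct_nonneg (Pi.single i 1)
  simpa [dotProduct, Pi.single_apply, mulVec, Finset.sum_ite_eq] using this

lemma myDiag_real {n : ℕ} {H : Matrix (Fin n) (Fin n) ℂ} (hH : H.IsHermitian) (i : Fin n) :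
    H i i = ((H i i).re : ℂ) := (hH.coe_re_apply_self i).symm

lemma myHadamardPSD {n : ℕ} {H : Matrix (Fin n) (Fin n) ℂ} (hH : H.PosSemidef) :
    H.det.re ≤ ∏ i, (H i i).re := by
  rcases Nat.eq_zero_or_pos n with hn | hn
  · subst hn; simp
  by_cases hz : ∀ i, 0 < (H i i).re
  · -- all diagonal entries positive
    set d : Fin n → ℝ := fun i => (H i i).re with hd
    set s : Fin n → ℝ := fun i => Real.sqrt (d i) with hsdef
    have hs : ∀ i, 0 < s i := fun i => Real.sqrt_pos.mpr (hz i)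
    have hss : ∀ i, s i * s i = d i := fun i => Real.mul_self_sqrt (hz i).le
    set D : Matrix (Fin n) (Fin n) ℂ := diagonal (fun i => (((s i)⁻¹ : ℝ) : ℂ)) with hD
    have hDH : Dᴴ = D := by
      rw [hD, diagonal_conjTranspose]
      have : (star fun i : Fin n => (((s i)⁻¹ : ℝ) : ℂ)) = fun i : Fin n => (((s i)⁻¹ : ℝ) : ℂ) := by
        funext i
        simp [Complex.conj_ofReal]
      rw [this]
    have hK : (Dᴴ * H * D).PosSemidef := hH.conjTranspose_mul_mul_same D
    set K := Dᴴ * H * D with hKdef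
    have hKapp : ∀ i, K i i = (((s i)⁻¹ : ℝ) : ℂ) * H i i * (((s i)⁻¹ : ℝ) : ℂ) := by
      intro i
      rw [hKdef, hDH, hD, Matrix.mul_diagonal, Matrix.diagonal_mul]
    have hone : ∀ i, (s i)⁻¹ * d i * (s i)⁻¹ = 1 := by
      intro i
      rw [← hss i]
      field_simp
      rw [div_self (hs i).ne']
    have hKdiag : ∀ i, (K i i).re = 1 := by
      intro i
      rw [hKapp i, myDiag_real hH.1 i]
      have h2 : ((((s i)⁻¹ : ℝ) : ℂ) * (((H i i).re : ℝ) : ℂ) * (((s i)⁻¹ : ℝ) : ℂ))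
          = ((((s i)⁻¹ * (H i i).re * (s i)⁻¹ : ℝ)) : ℂ) := by push_cast; ring
      rw [h2, Complex.ofReal_re]
      exact hone i
    set μ := hK.1.eigenvalues with hμdef
    have hμ0 : ∀ i, 0 ≤ μ i := hK.eigenvalues_nonneg
    have hμsum : ∑ i, μ i = n := by
      have h1 : K.trace = ∑ i, (μ i : ℂ) := myTrace_eq hK.1
      have h2 : (K.trace).re = ∑ i, (K i i).re := by
        rw [Matrix.trace, Complex.re_sum]; rfl
      have h3 : (K.trace).re = ∑ i, μ i := by
        rw [h1, Complex.re_sum]; simp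
      rw [← h3, h2]
      simp [hKdiag]
    have hdetK : K.det.re = ∏ i, μ i := by
      rw [hK.1.det_eq_prod_eigenvalues]
      norm_cast
    have hAMGM : ∏ i, μ i ≤ 1 := by
      have hw : ∀ i ∈ (Finset.univ : Finset (Fin n)), (0:ℝ) ≤ (n:ℝ)⁻¹ := fun i _ => by positivity
      have hw' : ∑ _i : Fin n, (n:ℝ)⁻¹ = 1 := by
        rw [Finset.sum_const, Finset.card_univ, Fintype.card_fin, nsmul_eq_mul]
        field_simp
      have hzz : ∀ i ∈ (Finset.univ : Finset (Fin n)), (0:ℝ) ≤ μ i := fun i _ => hμ0 i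
      have hgm := Real.geom_mean_le_arith_mean_weighted Finset.univ _ _ hw hw' hzz
      have hrhs : ∑ i, (n:ℝ)⁻¹ * μ i ≤ 1 := by
        rw [← Finset.mul_sum, hμsum]
        field_simp
        exact le_refl _
      have key : ∏ i, μ i ^ ((n:ℝ)⁻¹) ≤ 1 := le_trans hgm hrhs
      have hmul : ((n:ℝ)⁻¹) * (n:ℕ) = 1 := by field_simp
      have expand : (∏ i, μ i ^ ((n:ℝ)⁻¹)) ^ (n:ℕ) = ∏ i, μ i := by
        rw [← Finset.prod_pow]
        apply Finset.prod_congr rfl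
        intro i _
        rw [← Real.rpow_natCast (μ i ^ ((n:ℝ)⁻¹)) n, ← Real.rpow_mul (hμ0 i), hmul, Real.rpow_one]
      calc ∏ i, μ i = (∏ i, μ i ^ ((n:ℝ)⁻¹)) ^ (n:ℕ) := expand.symm
        _ ≤ 1 ^ (n:ℕ) := by
            apply pow_le_pow_left₀ _ key
            exact Finset.prod_nonneg fun i _ => Real.rpow_nonneg (hμ0 i) _
        _ = 1 := one_pow _
    have hdetD : D.det = ((∏ i, (s i)⁻¹ : ℝ) : ℂ) := by
      rw [hD, det_diagonal, Complex.ofReal_prod]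
    have hKH : K.det = ((∏ i, (s i)⁻¹ : ℝ):ℂ) * H.det * ((∏ i, (s i)⁻¹ : ℝ):ℂ) := by
      rw [hKdef, det_mul, det_mul, hDH, hdetD]
    have hsd : ((∏ i, d i : ℝ):ℂ) * ((∏ i, (s i)⁻¹ : ℝ):ℂ) * ((∏ i, (s i)⁻¹ : ℝ):ℂ) = 1 := by
      rw [← Complex.ofReal_mul, ← Complex.ofReal_mul, ← Finset.prod_mul_distrib,
        ← Finset.prod_mul_distrib, Complex.ofReal_eq_one]
      apply Finset.prod_eq_one
      intro i _
      calc d i * (s i)⁻¹ * (s i)⁻¹ = (s i)⁻¹ * d i * (s i)⁻¹ := by ring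
        _ = 1 := hone i
    have hHdet : H.det = ((∏ i, d i : ℝ):ℂ) * K.det := by
      calc H.det = 1 * H.det := (one_mul _).symm
        _ = (((∏ i, d i : ℝ):ℂ) * ((∏ i, (s i)⁻¹ : ℝ):ℂ) * ((∏ i, (s i)⁻¹ : ℝ):ℂ)) * H.det := by
            rw [hsd]
        _ = ((∏ i, d i : ℝ):ℂ) * (((∏ i, (s i)⁻¹ : ℝ):ℂ) * H.det * ((∏ i, (s i)⁻¹ : ℝ):ℂ)) := by
            ring
        _ = ((∏ i, d i : ℝ):ℂ) * K.det := by rw [← hKH]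
    rw [hHdet, Complex.re_ofReal_mul]
    calc (∏ i, d i) * K.det.re ≤ (∏ i, d i) * 1 := by
          apply mul_le_mul_of_nonneg_left _ (Finset.prod_nonneg fun i _ => (hz i).le)
          rw [hdetK]; exact hAMGM
      _ = ∏ i, (H i i).re := by rw [mul_one]
  · push_neg at hz
    obtain ⟨i, hi⟩ := hz
    have hi0 : (H i i).re = 0 := le_antisymm hi (myDiag_nonneg hH i)
    obtain ⟨B, hB⟩ : ∃ B : Matrix (Fin n) (Fin n) ℂ, H = Bᴴ * B := by
      classical
      open scoped MatrixOrder in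
      obtain ⟨X, hX, -, hXH⟩ := CFC.exists_sqrt_of_isSelfAdjoint_of_quasispectrumRestricts
        hH.isHermitian (QuasispectrumRestricts.nnreal_of_nonneg hH.nonneg)
      exact ⟨X, by rw [← hXH, ← Matrix.star_eq_conjTranspose, hX.star_eq]⟩
    have hsum : (H i i).re = ∑ j, Complex.normSq (B j i) := by
      rw [hB, Matrix.mul_apply, Complex.re_sum]
      apply Finset.sum_congr rfl
      intro j _
      rw [conjTranspose_apply, Complex.star_def, ← Complex.normSq_eq_conj_mul_self,
        Complex.ofReal_re]
    have hBcol : ∀ j, B j i = 0 := by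
      intro j
      have h0 : ∑ j, Complex.normSq (B j i) = 0 := by rw [← hsum, hi0]
      have := (Finset.sum_eq_zero_iff_of_nonneg
        (fun j _ => Complex.normSq_nonneg (B j i))).mp h0 j (Finset.mem_univ j)
      exact Complex.normSq_eq_zero.mp this
    have hHcol : ∀ j, H j i = 0 := by
      intro j
      rw [hB, Matrix.mul_apply]
      exact Finset.sum_eq_zero fun k _ => by rw [hBcol k, mul_zero]
    rw [Matrix.det_eq_zero_of_column_eq_zero i hHcol]
    simp only [Complex.zero_re]
    exact Finset.prod_nonneg fun j _ => myDiag_nonneg hH j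

lemma myHadamardCol {n : ℕ} (N : Matrix (Fin n) (Fin n) ℂ) :
    ‖N.det‖ ≤ ∏ k, Real.sqrt (((Nᴴ * N) k k).re) := by
  have hpsd := posSemidef_conjTranspose_mul_self N
  have hdet : ((Nᴴ * N).det).re = ‖N.det‖ ^ 2 := by
    rw [det_mul, det_conjTranspose, Complex.star_def, ← Complex.normSq_eq_conj_mul_self,
      Complex.ofReal_re, Complex.normSq_eq_norm_sq]
  have h1 : ‖N.det‖ ^ 2 ≤ ∏ k, ((Nᴴ*N) k k).re := hdet ▸ myHadamardPSD hpsd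
  have hnn : ∀ k, 0 ≤ ((Nᴴ*N) k k).re := myDiag_nonneg hpsd
  calc ‖N.det‖ = Real.sqrt (‖N.det‖ ^ 2) :=
        (Real.sqrt_sq (norm_nonneg _)).symm
    _ ≤ Real.sqrt (∏ k, ((Nᴴ*N) k k).re) := Real.sqrt_le_sqrt h1
    _ = Real.sqrt ((∏ k, Real.sqrt (((Nᴴ*N) k k).re))^2) := by
        congr 1
        rw [← Finset.prod_pow]
        exact Finset.prod_congr rfl fun k _ => (Real.sq_sqrt (hnn k)).symm
    _ = ∏ k, Real.sqrt (((Nᴴ*N) k k).re) :=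
        Real.sqrt_sq (Finset.prod_nonneg fun k _ => Real.sqrt_nonneg _)

lemma myColSum {n : ℕ} (N : Matrix (Fin n) (Fin n) ℂ) (k : Fin n) :
    ((Nᴴ * N) k k).re = ∑ j, ‖N j k‖ ^ 2 := by
  rw [Matrix.mul_apply, Complex.re_sum]
  apply Finset.sum_congr rfl
  intro j _
  rw [conjTranspose_apply, Complex.star_def, ← Complex.normSq_eq_conj_mul_self,
    Complex.ofReal_re, Complex.normSq_eq_norm_sq]

/-- For any `n×n` complex matrix `A` with singular values `r k`,
`|det(I - A)| ≤ ∏ (1 + r k)`. -/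
theorem abs_det_one_sub_le_prod (n : ℕ) (A : Matrix (Fin n) (Fin n) ℂ)
    (r : Fin n → ℝ)
    (hr : ∀ k, r k = Real.sqrt ((Matrix.isHermitian_conjTranspose_mul_self A).eigenvalues k)) :
    ‖(1 - A).det‖ ≤ ∏ k, (1 + r k) := by
  set hH := Matrix.isHermitian_conjTranspose_mul_self A with hHdef
  set V : Matrix (Fin n) (Fin n) ℂ := (hH.eigenvectorUnitary : Matrix (Fin n) (Fin n) ℂ) with hVdef
  have hV1 : star V * V = 1 := Unitary.coe_star_mul_self _
  have hV2 : V * star V = 1 := Unitary.coe_mul_star_self _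
  set M : Matrix (Fin n) (Fin n) ℂ := star V * A * V with hMdef
  have hMH : Mᴴ = star V * Aᴴ * V := by
    rw [hMdef, conjTranspose_mul, conjTranspose_mul]
    simp [Matrix.star_eq_conjTranspose, Matrix.mul_assoc]
  have hMM : Mᴴ * M = diagonal (RCLike.ofReal ∘ hH.eigenvalues) := by
    have key : V * (star V * (A * V)) = A * V := by
      rw [← Matrix.mul_assoc, hV2, Matrix.one_mul]
    have hspec := hH.conjStarAlgAut_star_eigenvectorUnitary
    simp only [Unitary.conjStarAlgAut_apply, Unitary.coe_star, star_star] at hspec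
    rw [hMH, hMdef]
    simp only [Matrix.mul_assoc]
    rw [key]
    simp only [Matrix.mul_assoc] at hspec
    exact hspec
  have hdet : (1 - M).det = (1 - A).det := by
    have h1M : (1 : Matrix (Fin n) (Fin n) ℂ) - M = star V * (1 - A) * V := by
      rw [Matrix.mul_sub, Matrix.mul_one, Matrix.sub_mul, hV1, ← hMdef]
    have hdV : (star V).det * V.det = 1 := by rw [← det_mul, hV1, det_one]
    rw [h1M, det_mul, det_mul]
    calc (star V).det * (1-A).det * V.det = (star V).det * V.det * (1-A).det := by ring
      _ = (1-A).det := by rw [hdV, one_mul]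
  have hr0 : ∀ k, 0 ≤ r k := fun k => hr k ▸ Real.sqrt_nonneg _
  -- column norms of 1 - M
  have hcol : ∀ k, Real.sqrt (((((1-M)ᴴ * (1-M) : Matrix (Fin n) (Fin n) ℂ)) k k).re) ≤ 1 + r k := by
    intro k
    set u : EuclideanSpace ℂ (Fin n) := WithLp.toLp 2 (fun j => (1 : Matrix (Fin n) (Fin n) ℂ) j k) with hu
    set v : EuclideanSpace ℂ (Fin n) := WithLp.toLp 2 (fun j => M j k) with hv
    have hun : ‖u‖ = 1 := by
      rw [EuclideanSpace.norm_eq]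
      have : ∀ j, ‖u j‖ ^ 2 = if j = k then 1 else 0 := by
        intro j
        rw [hu]
        simp [Matrix.one_apply, apply_ite]
      rw [Finset.sum_congr rfl fun j _ => this j]
      simp
    have hvn : ‖v‖ = r k := by
      rw [EuclideanSpace.norm_eq, hr k]
      congr 1
      have : ∑ j, ‖v j‖ ^ 2 = ((Mᴴ * M) k k).re := by
        rw [myColSum M k]
      rw [this, hMM]
      simp [diagonal_apply_eq]
    have htri : ‖u - v‖ ≤ 1 + r k := by
      rw [← hun, ← hvn]; exact norm_sub_le u v
    have hcoleq : ((((1-M)ᴴ * (1-M) : Matrix (Fin n) (Fin n) ℂ)) k k).re = ‖u - v‖ ^ 2 := by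
      rw [myColSum, EuclideanSpace.norm_eq, Real.sq_sqrt (Finset.sum_nonneg fun j _ => sq_nonneg _)]
      apply Finset.sum_congr rfl
      intro j _
      congr 1
    rw [hcoleq, Real.sqrt_sq (norm_nonneg _)]
    exact htri
  calc ‖(1 - A).det‖ = ‖(1 - M).det‖ := by rw [hdet]
    _ ≤ ∏ k, Real.sqrt (((((1-M)ᴴ * (1-M) : Matrix (Fin n) (Fin n) ℂ)) k k).re) := myHadamardCol (1 - M)
    _ ≤ ∏ k, (1 + r k) := by
        apply Finset.prod_le_prod
        · intro k _; exact Real.sqrt_nonneg _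
        · intro k _; exact hcol k
end

section
/- Let A be an n×n complex matrix with singular values r_1,...,r_n all satisfying 0 ≤ r_k < 1. Then ∏_{k=1}^n (1 - r_k) ≤ |det(I - A)| ≤ ∏_{k=1}^n (1 + r_k). -/
open Matrix BigOperators
open scoped ComplexOrder

lemma key_lemma (n : ℕ) (B : Matrix (Fin n) (Fin n) ℂ) (d : Fin n → ℝ)
    (hd0 : ∀ k, 0 ≤ d k) (hd1 : ∀ k, d k < 1)
    (hB : Bᴴ * B = Matrix.diagonal (fun k => ((d k : ℂ) ^ 2)))
    (s : Finset (Fin n)) :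
    ∏ k ∈ s, (1 - d k) ≤
        ‖(1 - B * Matrix.diagonal (fun j => if j ∈ s then (1:ℂ) else 0)).det‖ ∧
      ‖(1 - B * Matrix.diagonal (fun j => if j ∈ s then (1:ℂ) else 0)).det‖ ≤
        ∏ k ∈ s, (1 + d k) := by
  classical
  induction s using Finset.induction_on with
  | empty => simp
  | @insert m s hm ih =>
      set Q : Matrix (Fin n) (Fin n) ℂ :=
        Matrix.diagonal (fun j => if j ∈ s then (1:ℂ) else 0) with hQ
      set M : Matrix (Fin n) (Fin n) ℂ := 1 - B * Q with hM
      have hprodpos : 0 < ∏ k ∈ s, (1 - d k) :=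
        Finset.prod_pos (fun k _ => by linarith [hd1 k])
      have hdet0 : 0 < ‖M.det‖ := lt_of_lt_of_le hprodpos ih.1
      have hdetne : M.det ≠ 0 := by
        intro h; rw [h] at hdet0; simp at hdet0
      have hdet : IsUnit M.det := isUnit_iff_ne_zero.mpr hdetne
      set bm : Fin n → ℂ := fun i => B i m with hbm
      set y : Fin n → ℂ := M⁻¹ *ᵥ bm with hy
      have hMy : M *ᵥ y = bm := by
        rw [hy, Matrix.mulVec_mulVec, Matrix.mul_nonsing_inv _ hdet, Matrix.one_mulVec]
      have hyeq : y = bm + (B * Q) *ᵥ y := by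
        have h := hMy
        rw [hM, Matrix.sub_mulVec, Matrix.one_mulVec] at h
        funext i
        have := congrFun h i
        simp only [Pi.sub_apply] at this
        simp only [Pi.add_apply]
        linear_combination this
      set w : Fin n → ℂ := (B * Q) *ᵥ y with hw
      -- Q is self-adjoint
      have hQH : Qᴴ = Q := by
        have e0 : (star fun j => if j ∈ s then (1:ℂ) else 0)
            = (fun j => if j ∈ s then (1:ℂ) else 0) := by
          funext j; by_cases hj : j ∈ s <;> simp [hj]
        rw [hQ, Matrix.diagonal_conjTranspose, e0]
      set c : Fin n → ℝ := fun j => if j ∈ s then d j ^ 2 else 0 with hc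
      have h1 : (B*Q)ᴴ * (B*Q) = Matrix.diagonal (fun j => ((c j : ℝ) : ℂ)) := by
        have e : (B*Q)ᴴ * (B*Q) = Q * ((Bᴴ * B) * Q) := by
          rw [Matrix.conjTranspose_mul, hQH]
          simp only [Matrix.mul_assoc]
        rw [e, hB, hQ, Matrix.diagonal_mul_diagonal, Matrix.diagonal_mul_diagonal]
        have e1 : (fun i => (if i ∈ s then (1:ℂ) else 0) * ((d i:ℂ)^2 * (if i ∈ s then (1:ℂ) else 0)))
            = fun j => ((c j : ℝ) : ℂ) := by
          funext j; by_cases hj : j ∈ s <;> simp [hc, hj]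
        rw [e1]
      have hBBQ : Bᴴ * (B * Q) =
          Matrix.diagonal (fun j => (d j:ℂ)^2 * (if j ∈ s then 1 else 0)) := by
        rw [← Matrix.mul_assoc, hB, hQ, Matrix.diagonal_mul_diagonal]
      have hbw : dotProduct (star bm) w = 0 := by
        rw [hw, Matrix.dotProduct_mulVec]
        have hvm : Matrix.vecMul (star bm) (B * Q) = 0 := by
          funext j
          have e : Matrix.vecMul (star bm) (B * Q) j = (Bᴴ * (B * Q)) m j := by
            simp [Matrix.vecMul, Matrix.mul_apply, dotProduct, hbm,
              Matrix.conjTranspose_apply]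
          rw [e, hBBQ]
          by_cases hj : m = j
          · subst hj; simp [Matrix.diagonal_apply_eq, hm]
          · simp [Matrix.diagonal_apply_ne _ hj]
        rw [hvm, zero_dotProduct]
      have hwb : dotProduct (star w) bm = 0 := by
        rw [star_dotProduct, hbw, star_zero]
      have hbb : dotProduct (star bm) bm = (d m : ℂ)^2 := by
        have e : dotProduct (star bm) bm = (Bᴴ * B) m m := by
          simp [Matrix.mul_apply, dotProduct, hbm, Matrix.conjTranspose_apply]
        rw [e, hB, Matrix.diagonal_apply_eq]
      have hww : dotProduct (star w) w =
          dotProduct (star y) (Matrix.diagonal (fun j => ((c j : ℝ) : ℂ)) *ᵥ y) := by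
        rw [hw, Matrix.star_mulVec, ← Matrix.dotProduct_mulVec, Matrix.mulVec_mulVec, h1]
      have hmain : dotProduct (star y) y =
          (d m : ℂ)^2 + dotProduct (star y) (Matrix.diagonal (fun j => ((c j : ℝ) : ℂ)) *ᵥ y) := by
        calc dotProduct (star y) y
            = dotProduct (star (bm + w)) (bm + w) := by rw [← hyeq]
          _ = dotProduct (star bm) bm + dotProduct (star bm) w
              + (dotProduct (star w) bm + dotProduct (star w) w) := by
              rw [star_add, add_dotProduct, dotProduct_add, dotProduct_add]
          _ = _ := by rw [hbb, hbw, hwb, hww]; ring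
      -- to reals
      have hsum1 : dotProduct (star y) y = ((∑ j, Complex.normSq (y j) : ℝ) : ℂ) := by
        rw [dotProduct]
        push_cast
        refine Finset.sum_congr rfl fun j _ => ?_
        rw [Pi.star_apply, Complex.star_def, mul_comm, Complex.mul_conj]
      have hsum2 : dotProduct (star y) (Matrix.diagonal (fun j => ((c j : ℝ) : ℂ)) *ᵥ y)
          = ((∑ j, c j * Complex.normSq (y j) : ℝ) : ℂ) := by
        rw [dotProduct]
        push_cast
        refine Finset.sum_congr rfl fun j _ => ?_
        rw [Matrix.mulVec_diagonal, Pi.star_apply, Complex.star_def]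
        rw [show (starRingEnd ℂ) (y j) * ((c j : ℂ) * y j)
            = (c j : ℂ) * (y j * (starRingEnd ℂ) (y j)) by ring, Complex.mul_conj]
      have hre : (∑ j, Complex.normSq (y j)) = (d m)^2 + ∑ j, c j * Complex.normSq (y j) := by
        have := hmain
        rw [hsum1, hsum2] at this
        exact_mod_cast this
      have hcle : ∀ j, c j ≤ 1 := by
        intro j
        have h2 : d j ^ 2 ≤ 1 := by nlinarith [hd0 j, hd1 j]
        by_cases hj : j ∈ s
        · simpa [hc, hj] using h2
        · simp [hc, hj]
      have hsumEq : ∑ j, (1 - c j) * Complex.normSq (y j) = (d m)^2 := by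
        simp only [sub_mul, one_mul, Finset.sum_sub_distrib]
        linarith [hre]
      have hym : Complex.normSq (y m) ≤ (d m)^2 := by
        have hcm : c m = 0 := by simp [hc, hm]
        calc Complex.normSq (y m) = (1 - c m) * Complex.normSq (y m) := by rw [hcm]; ring
          _ ≤ ∑ j, (1 - c j) * Complex.normSq (y j) :=
              Finset.single_le_sum (f := fun j => (1 - c j) * Complex.normSq (y j))
                (fun j _ => mul_nonneg (by linarith [hcle j]) (Complex.normSq_nonneg _))
                (Finset.mem_univ m)
          _ = (d m)^2 := hsumEq
      have hym' : ‖y m‖ ≤ d m := by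
        rw [Complex.norm_def]
        calc Real.sqrt (Complex.normSq (y m)) ≤ Real.sqrt ((d m)^2) := Real.sqrt_le_sqrt hym
          _ = d m := Real.sqrt_sq (hd0 m)
      -- determinant identity
      have hupd : (1 : Matrix (Fin n) (Fin n) ℂ)
            - B * Matrix.diagonal (fun j => if j ∈ insert m s then (1:ℂ) else 0)
          = M.updateCol m ((fun i => M i m) + fun i => -(bm i)) := by
        ext i j
        rw [Matrix.updateCol_apply]
        by_cases hj : j = m
        · subst hj
          simp [hM, hQ, Matrix.mul_diagonal, Matrix.sub_apply, hm, hbm, sub_eq_add_neg]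
        · simp [hj, hM, hQ, Matrix.mul_diagonal, Matrix.sub_apply, Finset.mem_insert]
      have hcr : (M.updateCol m bm).det = M.det * y m := by
        have h4 := congrFun (Matrix.det_smul_inv_mulVec_eq_cramer M bm hdet) m
        rw [Matrix.cramer_apply] at h4
        rw [← h4, hy]
        simp
      have hdet' : ((1 : Matrix (Fin n) (Fin n) ℂ)
            - B * Matrix.diagonal (fun j => if j ∈ insert m s then (1:ℂ) else 0)).det
          = M.det * (1 - y m) := by
        rw [hupd, Matrix.det_updateCol_add, Matrix.updateCol_eq_self]
        have h2 : (fun i => -(bm i)) = (-1 : ℂ) • bm := by funext i; simp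
        rw [h2, Matrix.det_updateCol_smul, hcr]
        ring
      have hablo : 1 - d m ≤ ‖1 - y m‖ := by
        have h5 : ‖(1:ℂ)‖ - ‖y m‖ ≤ ‖1 - y m‖ := by
          simpa using norm_sub_norm_le (1 : ℂ) (y m)
        rw [show ‖(1:ℂ)‖ = 1 from norm_one] at h5
        linarith
      have habhi : ‖1 - y m‖ ≤ 1 + d m := by
        have h6 : ‖1 - y m‖ ≤ ‖(1:ℂ)‖ + ‖y m‖ := by
          simpa using norm_sub_le (1 : ℂ) (y m)
        rw [show ‖(1:ℂ)‖ = 1 from norm_one] at h6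
        linarith
      rw [hdet', norm_mul, Finset.prod_insert hm, Finset.prod_insert hm]
      constructor
      · calc (1 - d m) * ∏ k ∈ s, (1 - d k)
            ≤ ‖1 - y m‖ * ‖M.det‖ := by
              apply mul_le_mul hablo ih.1 hprodpos.le (norm_nonneg _)
          _ = ‖M.det‖ * ‖1 - y m‖ := mul_comm _ _
      · calc ‖M.det‖ * ‖1 - y m‖
            ≤ (∏ k ∈ s, (1 + d k)) * (1 + d m) := by
              apply mul_le_mul ih.2 habhi (norm_nonneg _)
                (Finset.prod_nonneg fun k _ => by linarith [hd0 k])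
          _ = (1 + d m) * ∏ k ∈ s, (1 + d k) := mul_comm _ _

/-- For a strict contraction `A` with singular values `r k ∈ [0,1)`,
`∏ (1 - r k) ≤ |det(I - A)| ≤ ∏ (1 + r k)`. -/
theorem prod_one_sub_le_abs_det_le (n : ℕ) (A : Matrix (Fin n) (Fin n) ℂ)
    (r : Fin n → ℝ)
    (hr : ∀ k, r k = Real.sqrt ((Matrix.isHermitian_conjTranspose_mul_self A).eigenvalues k))
    (hr1 : ∀ k, r k < 1) :
    ∏ k, (1 - r k) ≤ ‖(1 - A).det‖ ∧
      ‖(1 - A).det‖ ≤ ∏ k, (1 + r k) := by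
  classical
  have hH := Matrix.isHermitian_conjTranspose_mul_self A
  set V : Matrix (Fin n) (Fin n) ℂ := (hH.eigenvectorUnitary : Matrix (Fin n) (Fin n) ℂ) with hV
  have hVV : V * star V = 1 := (Matrix.mem_unitaryGroup_iff).mp (hH.eigenvectorUnitary).2
  have hsVV : star V * V = 1 := (Matrix.mem_unitaryGroup_iff').mp (hH.eigenvectorUnitary).2
  have hmu : ∀ k, 0 ≤ hH.eigenvalues k := fun k =>
    Matrix.eigenvalues_conjTranspose_mul_self_nonneg A k
  have hr0 : ∀ k, 0 ≤ r k := fun k => (hr k) ▸ Real.sqrt_nonneg _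
  have hrsq : ∀ k, (r k)^2 = hH.eigenvalues k := fun k => by
    rw [hr k, Real.sq_sqrt (hmu k)]
  have hspec : star V * (Aᴴ * A) * V = Matrix.diagonal (RCLike.ofReal ∘ hH.eigenvalues) :=
    by have h := hH.conjStarAlgAut_star_eigenvectorUnitary
       rwa [Unitary.conjStarAlgAut_star_apply] at h
  have hBH : (star V * A * V)ᴴ = star V * Aᴴ * V := by
    simp only [Matrix.conjTranspose_mul, Matrix.star_eq_conjTranspose,
      Matrix.conjTranspose_conjTranspose, Matrix.mul_assoc]
  have hBdiag : (star V * A * V)ᴴ * (star V * A * V)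
      = Matrix.diagonal (fun k => ((r k : ℂ))^2) := by
    have e : (star V * A * V)ᴴ * (star V * A * V) = star V * (Aᴴ * A) * V := by
      rw [hBH]
      have e0 : star V * Aᴴ * V * (star V * A * V)
          = star V * Aᴴ * (V * star V) * (A * V) := by
        simp only [Matrix.mul_assoc]
      rw [e0, hVV, Matrix.mul_one]
      simp only [Matrix.mul_assoc]
    have e4 : (RCLike.ofReal ∘ hH.eigenvalues : Fin n → ℂ) = fun k => ((r k:ℂ))^2 := by
      funext k
      rw [Function.comp_apply, ← hrsq k]
      norm_cast
    rw [e, hspec, e4]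
  have hdetEq : (1 - star V * A * V).det = (1 - A).det := by
    have e : (1 : Matrix (Fin n) (Fin n) ℂ) - star V * A * V = star V * (1 - A) * V := by
      rw [Matrix.mul_sub, Matrix.mul_one, Matrix.sub_mul, hsVV]
    rw [e, Matrix.det_mul, Matrix.det_mul]
    have e2 : (star V).det * V.det = 1 := by
      rw [← Matrix.det_mul, hsVV, Matrix.det_one]
    calc (star V).det * (1 - A).det * V.det
        = ((star V).det * V.det) * (1 - A).det := by ring
      _ = (1 - A).det := by rw [e2, one_mul]
  have hkey := key_lemma n (star V * A * V) r hr0 hr1 hBdiag Finset.univ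
  have huniv : (star V * A * V) * Matrix.diagonal
      (fun j => if j ∈ (Finset.univ : Finset (Fin n)) then (1:ℂ) else 0)
      = star V * A * V := by
    have e3 : (fun j : Fin n => if j ∈ (Finset.univ : Finset (Fin n)) then (1:ℂ) else 0)
        = fun _ => (1:ℂ) := by funext j; simp
    rw [e3, Matrix.diagonal_one, Matrix.mul_one]
  rw [huniv, hdetEq] at hkey
  exact hkey
end

section
/- Let Z be any n×n complex matrix with singular values r_1,...,r_n, and let U be any n×n unitary matrix. Then ∏_{k=1}^n |1-r_k|/(1+r_k) · |det(I - UZ)|² ≤ |det(I - Z*Z)|. -/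
open Matrix BigOperators
open scoped ComplexOrder

/-- Hadamard's inequality (columns version). -/
lemma hadamard_col {n : ℕ} (A : Matrix (Fin n) (Fin n) ℂ) (c : Fin n → ℝ)
    (hc : ∀ j, Real.sqrt (∑ i, ‖A i j‖ ^ 2) ≤ c j) :
    ‖A.det‖ ≤ ∏ j, c j := by
  classical
  haveI : WellFoundedLT (Fin n) := inferInstance
  set E := EuclideanSpace ℂ (Fin n)
  set f : Fin n → E := fun j => (WithLp.equiv 2 (Fin n → ℂ)).symm (fun i => A i j) with hf
  have hfin : Module.finrank ℂ E = Fintype.card (Fin n) := by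
    simp [E, finrank_euclideanSpace]
  set e : OrthonormalBasis (Fin n) ℂ E := EuclideanSpace.basisFun (Fin n) ℂ with he
  set g : OrthonormalBasis (Fin n) ℂ E := InnerProductSpace.gramSchmidtOrthonormalBasis hfin f with hg
  have hnormf : ∀ j, ‖f j‖ = Real.sqrt (∑ i, ‖A i j‖ ^ 2) := by
    intro j
    rw [EuclideanSpace.norm_eq]
    congr 1
  have hA : e.toBasis.toMatrix f = A := by
    ext i j
    rw [Module.Basis.toMatrix_apply]
    simp [EuclideanSpace.basisFun_repr]
    rfl
  have hdet : A.det = (e.toBasis.toMatrix g.toBasis).det * (g.toBasis.toMatrix f).det := by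
    rw [← hA, ← Matrix.det_mul, Module.Basis.toMatrix_mul_toMatrix]
  have h1 : ‖(e.toBasis.toMatrix g.toBasis).det‖ = 1 := by
    have := e.det_to_matrix_orthonormalBasis g
    rwa [Module.Basis.det_apply] at this
  have h2 : (g.toBasis.toMatrix f).det = ∏ i, (inner ℂ (g i) (f i) : ℂ) := by
    rw [← Module.Basis.det_apply]
    exact InnerProductSpace.gramSchmidtOrthonormalBasis_det hfin f
  rw [hdet, norm_mul, h1, one_mul, h2, norm_prod]
  refine Finset.prod_le_prod (fun i _ => norm_nonneg _) (fun i _ => ?_)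
  calc ‖(inner ℂ (g i) (f i) : ℂ)‖ = ‖(inner ℂ (g i) (f i) : ℂ)‖ := rfl
    _ ≤ ‖g i‖ * ‖f i‖ := norm_inner_le_norm _ _
    _ = ‖f i‖ := by rw [g.orthonormal.1 i, one_mul]
    _ ≤ c i := by rw [hnormf i]; exact hc i

/-- SVD for square complex matrices. -/
lemma exists_svd {n : ℕ} (Z : Matrix (Fin n) (Fin n) ℂ) (r : Fin n → ℝ)
    (hr : ∀ k, r k = Real.sqrt ((Matrix.isHermitian_conjTranspose_mul_self Z).eigenvalues k)) :
    ∃ V : Matrix (Fin n) (Fin n) ℂ, V ∈ Matrix.unitaryGroup (Fin n) ℂ ∧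
      Z = V * Matrix.diagonal (fun k => (r k : ℂ))
        * ((Matrix.isHermitian_conjTranspose_mul_self Z).eigenvectorUnitary : Matrix (Fin n) (Fin n) ℂ)ᴴ := by
  classical
  set hZ := Matrix.isHermitian_conjTranspose_mul_self Z with hhZ
  set μ : Fin n → ℝ := hZ.eigenvalues with hμ
  have hμ0 : ∀ k, 0 ≤ μ k := fun k => Matrix.eigenvalues_conjTranspose_mul_self_nonneg Z k
  have hr0 : ∀ k, 0 ≤ r k := fun k => (hr k) ▸ Real.sqrt_nonneg _
  have hr2 : ∀ k, (r k) ^ 2 = μ k := fun k => by rw [hr k]; exact Real.sq_sqrt (hμ0 k)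
  set W : Matrix (Fin n) (Fin n) ℂ := (hZ.eigenvectorUnitary : Matrix (Fin n) (Fin n) ℂ) with hW
  have hWmem : W ∈ Matrix.unitaryGroup (Fin n) ℂ := hZ.eigenvectorUnitary.2
  have hWW : Wᴴ * W = 1 := by
    rw [← Matrix.star_eq_conjTranspose]
    exact Matrix.mem_unitaryGroup_iff'.mp hWmem
  have hWW' : W * Wᴴ = 1 := by
    rw [← Matrix.star_eq_conjTranspose]
    exact Matrix.mem_unitaryGroup_iff.mp hWmem
  have spec : Zᴴ * Z = W * Matrix.diagonal (fun k => (μ k : ℂ)) * Wᴴ := by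
    have := hZ.spectral_theorem
    rw [Unitary.conjStarAlgAut_apply] at this
    rw [← Matrix.star_eq_conjTranspose]
    exact this
  have gram : (Z * W)ᴴ * (Z * W) = Matrix.diagonal (fun k => (μ k : ℂ)) := by
    rw [Matrix.conjTranspose_mul]
    calc Wᴴ * Zᴴ * (Z * W) = Wᴴ * (Zᴴ * Z) * W := by
          rw [Matrix.mul_assoc, Matrix.mul_assoc, Matrix.mul_assoc]
      _ = (Wᴴ * W) * Matrix.diagonal (fun k => (μ k : ℂ)) * (Wᴴ * W) := by
          rw [spec]; simp only [Matrix.mul_assoc]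
      _ = Matrix.diagonal (fun k => (μ k : ℂ)) := by rw [hWW, one_mul, mul_one]
  set E := EuclideanSpace ℂ (Fin n)
  set c : Fin n → E := fun k => (WithLp.equiv 2 (Fin n → ℂ)).symm (fun i => (Z * W) i k) with hc
  have hinner : ∀ j k, (inner ℂ (c j) (c k) : ℂ)
      = Matrix.diagonal (fun k => (μ k : ℂ)) j k := by
    intro j k
    rw [← gram, Matrix.mul_apply]
    simp only [PiLp.inner_apply, RCLike.inner_apply, Matrix.conjTranspose_apply]
    exact Finset.sum_congr rfl fun i _ => mul_comm _ _
  set v : Fin n → E := fun k => ((r k : ℂ))⁻¹ • c k with hv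
  have hon : Orthonormal ℂ (Set.restrict {k | r k ≠ 0} v) := by
    rw [orthonormal_iff_ite]
    rintro ⟨j, hj⟩ ⟨k, hk⟩
    simp only [Set.restrict, Set.domRestrict, hv, inner_smul_left, inner_smul_right, hinner]
    by_cases hjk : j = k
    · subst hjk
      simp only [Matrix.diagonal_apply_eq]
      have : (r j : ℂ) ≠ 0 := by exact_mod_cast hj
      rw [← hr2 j]
      push_cast
      simp only [map_inv₀, Complex.conj_ofReal]
      field_simp
    · have : (⟨j, hj⟩ : {k | r k ≠ 0}) ≠ ⟨k, hk⟩ := by simpa using hjk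
      rw [Matrix.diagonal_apply_ne _ hjk, if_neg this]
      simp
  have hfin : Module.finrank ℂ E = Fintype.card (Fin n) := by
    simp [E, finrank_euclideanSpace]
  obtain ⟨b, hb⟩ := hon.exists_orthonormalBasis_extension_of_card_eq hfin
  set V : Matrix (Fin n) (Fin n) ℂ := Matrix.of (fun i k => b k i) with hVdef
  have hVmem : V ∈ Matrix.unitaryGroup (Fin n) ℂ := by
    rw [Matrix.mem_unitaryGroup_iff']
    ext j k
    rw [Matrix.mul_apply, Matrix.one_apply]
    have := orthonormal_iff_ite.mp b.orthonormal j k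
    rw [← this]
    simp only [PiLp.inner_apply, RCLike.inner_apply, Matrix.star_apply, hVdef, Matrix.of_apply]
    exact Finset.sum_congr rfl fun i _ => mul_comm _ _
  have hczero : ∀ k, r k = 0 → c k = 0 := by
    intro k hk
    have h0 : (inner ℂ (c k) (c k) : ℂ) = 0 := by
      rw [hinner k k, Matrix.diagonal_apply_eq, ← hr2 k, hk]
      norm_num
    exact inner_self_eq_zero.mp h0
  have hZW : Z * W = V * Matrix.diagonal (fun k => (r k : ℂ)) := by
    ext i k
    rw [Matrix.mul_diagonal]
    by_cases hk : r k = 0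
    · have : c k = 0 := hczero k hk
      have h1 : (Z * W) i k = 0 := by
        have := congrFun (congrArg (WithLp.equiv 2 (Fin n → ℂ)) this) i
        simpa [hc] using this
      rw [h1, hk]
      simp
    · have hbk : b k = v k := hb k hk
      have : V i k = ((r k : ℂ))⁻¹ * c k i := by
        rw [hVdef]
        show b k i = _
        rw [hbk, hv]
        rfl
      rw [this]
      have hrk : (r k : ℂ) ≠ 0 := by exact_mod_cast hk
      have : c k i = (Z * W) i k := rfl
      rw [this]
      field_simp
  refine ⟨V, hVmem, ?_⟩
  calc Z = Z * (W * Wᴴ) := by rw [hWW', mul_one]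
    _ = (Z * W) * Wᴴ := by rw [Matrix.mul_assoc]
    _ = V * Matrix.diagonal (fun k => (r k : ℂ)) * Wᴴ := by rw [hZW]

/-- For an arbitrary complex matrix `Z` with singular values `r k` and any unitary `U`,
`∏ |1 - r k|/(1 + r k) · |det(I - UZ)|² ≤ |det(I - ZᴴZ)|`. -/
theorem harnack_lower_general (n : ℕ) (Z : Matrix (Fin n) (Fin n) ℂ)
    (r : Fin n → ℝ)
    (hr : ∀ k, r k = Real.sqrt ((Matrix.isHermitian_conjTranspose_mul_self Z).eigenvalues k))
    (U : Matrix (Fin n) (Fin n) ℂ) (hU : U ∈ Matrix.unitaryGroup (Fin n) ℂ) :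
    (∏ k, |1 - r k| / (1 + r k)) * ‖(1 - U * Z).det‖ ^ 2
      ≤ ‖(1 - Zᴴ * Z).det‖ := by
  classical
  set hZ := Matrix.isHermitian_conjTranspose_mul_self Z with hhZ
  set μ : Fin n → ℝ := hZ.eigenvalues with hμ
  have hμ0 : ∀ k, 0 ≤ μ k := fun k => Matrix.eigenvalues_conjTranspose_mul_self_nonneg Z k
  have hr0 : ∀ k, 0 ≤ r k := fun k => (hr k) ▸ Real.sqrt_nonneg _
  have hr2 : ∀ k, (r k) ^ 2 = μ k := fun k => by rw [hr k]; exact Real.sq_sqrt (hμ0 k)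
  set W : Matrix (Fin n) (Fin n) ℂ := (hZ.eigenvectorUnitary : Matrix (Fin n) (Fin n) ℂ) with hW
  have hWmem : W ∈ Matrix.unitaryGroup (Fin n) ℂ := hZ.eigenvectorUnitary.2
  have hWW' : W * Wᴴ = 1 := by
    rw [← Matrix.star_eq_conjTranspose]
    exact Matrix.mem_unitaryGroup_iff.mp hWmem
  have spec : Zᴴ * Z = W * Matrix.diagonal (fun k => (μ k : ℂ)) * Wᴴ := by
    have := hZ.spectral_theorem
    rw [Unitary.conjStarAlgAut_apply] at this
    rw [← Matrix.star_eq_conjTranspose]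
    exact this
  -- Part A : |det (1 - ZᴴZ)| = ∏ |1 - r k| * (1 + r k)
  have partA : ‖(1 - Zᴴ * Z).det‖ = ∏ k, |1 - r k| * (1 + r k) := by
    have h1 : 1 - Zᴴ * Z = W * (1 - Matrix.diagonal (fun k => (μ k : ℂ))) * Wᴴ := by
      rw [Matrix.mul_sub, Matrix.sub_mul, Matrix.mul_one, hWW', spec]
    have hdetW : ‖W.det‖ * ‖Wᴴ.det‖ = 1 := by
      have : ‖(W * Wᴴ).det‖ = 1 := by rw [hWW']; simp
      rwa [Matrix.det_mul, norm_mul] at this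
    rw [h1, Matrix.det_mul, Matrix.det_mul, norm_mul, norm_mul]
    rw [show (1 : Matrix (Fin n) (Fin n) ℂ) - Matrix.diagonal (fun k => (μ k : ℂ))
        = Matrix.diagonal (fun k => 1 - (μ k : ℂ)) by
      rw [← Matrix.diagonal_one, Matrix.diagonal_sub]]
    rw [Matrix.det_diagonal, norm_prod]
    have : ∀ k, ‖1 - (μ k : ℂ)‖ = |1 - r k| * (1 + r k) := by
      intro k
      have : (1 : ℂ) - (μ k : ℂ) = ((1 - μ k : ℝ) : ℂ) := by push_cast; ring
      rw [this, Complex.norm_real, Real.norm_eq_abs, ← hr2 k]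
      have h1r : (0:ℝ) ≤ 1 + r k := by linarith [hr0 k]
      rw [show 1 - r k ^ 2 = (1 - r k) * (1 + r k) by ring, abs_mul, abs_of_nonneg h1r]
    calc ‖W.det‖ * (∏ k, ‖1 - (μ k : ℂ)‖) * ‖Wᴴ.det‖
        = (‖W.det‖ * ‖Wᴴ.det‖) * ∏ k, ‖1 - (μ k : ℂ)‖ := by ring
      _ = ∏ k, ‖1 - (μ k : ℂ)‖ := by rw [hdetW, one_mul]
      _ = ∏ k, |1 - r k| * (1 + r k) := Finset.prod_congr rfl (fun k _ => this k)
  -- Part B : |det (1 - U Z)| ≤ ∏ (1 + r k)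
  obtain ⟨V, hVmem, hsvd⟩ := exists_svd Z r hr
  have partB : ‖(1 - U * Z).det‖ ≤ ∏ k, (1 + r k) := by
    set D : Matrix (Fin n) (Fin n) ℂ := Matrix.diagonal (fun k => (r k : ℂ)) with hD
    set M : Matrix (Fin n) (Fin n) ℂ := Wᴴ * (U * V) with hM
    have hMmem : M ∈ Matrix.unitaryGroup (Fin n) ℂ := by
      rw [hM]
      refine mul_mem ?_ (mul_mem hU hVmem)
      rw [show Wᴴ = star W from rfl]
      exact Unitary.star_mem hWmem
    have hdeteq : (1 - U * Z).det = (1 - M * D).det := by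
      have : (1 : Matrix (Fin n) (Fin n) ℂ) - U * Z = 1 - (U * V * D) * Wᴴ := by
        rw [hsvd]; noncomm_ring
      rw [this, Matrix.det_one_sub_mul_comm]
      congr 2
      rw [hM]; noncomm_ring
    have hMcol : ∀ j, (∑ i, ‖M i j‖ ^ 2) = 1 := by
      intro j
      have h1 : (star M * M) j j = 1 := by
        rw [Matrix.mem_unitaryGroup_iff'.mp hMmem]
        simp
      rw [Matrix.mul_apply] at h1
      have : ∀ i, (star M) j i * M i j = (‖M i j‖ ^ 2 : ℝ) := by
        intro i
        rw [Matrix.star_apply, ← Complex.normSq_eq_norm_sq]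
        push_cast
        rw [Complex.normSq_eq_conj_mul_self]
        rfl
      rw [Finset.sum_congr rfl (fun i _ => this i)] at h1
      exact_mod_cast (by exact_mod_cast h1 : ((∑ i, ‖M i j‖ ^ 2 : ℝ) : ℂ) = 1)
    have hMjj : ∀ j, ‖M j j‖ ≤ 1 := by
      intro j
      have h1 : ‖M j j‖ ^ 2 ≤ 1 := by
        rw [← hMcol j]
        exact Finset.single_le_sum (f := fun i => ‖M i j‖ ^ 2)
          (fun i _ => sq_nonneg _) (Finset.mem_univ j)
      nlinarith [norm_nonneg (M j j)]
    rw [hdeteq]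
    apply hadamard_col
    intro j
    have key : (∑ i, ‖(1 - M * D) i j‖ ^ 2) ≤ (1 + r j) ^ 2 := by
      have hentry : ∀ i, (1 - M * D) i j = (if i = j then 1 else 0) - M i j * (r j : ℂ) := by
        intro i
        simp [hD, Matrix.sub_apply, Matrix.one_apply, Matrix.mul_diagonal]
      have expand : (∑ i, ‖(1 - M * D) i j‖ ^ 2)
          = 1 + (r j) ^ 2 * (∑ i, ‖M i j‖ ^ 2)
            - 2 * (r j) * (M j j).re := by
        have : ∀ i, ‖(1 - M * D) i j‖ ^ 2
            = (if i = j then 1 else 0) + (r j) ^ 2 * ‖M i j‖ ^ 2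
              - (if i = j then 2 * (r j) * (M i j).re else 0) := by
          intro i
          rw [hentry i, ← Complex.normSq_eq_norm_sq, ← Complex.normSq_eq_norm_sq]
          by_cases hij : i = j
          · subst hij
            simp only [eq_self_iff_true, if_true]
            rw [Complex.normSq_sub, Complex.normSq_one, Complex.normSq_mul,
              Complex.normSq_eq_norm_sq, Complex.normSq_eq_norm_sq]
            have habs : ‖((r i : ℂ))‖ ^ 2 = (r i) ^ 2 := by
              rw [Complex.norm_real, Real.norm_eq_abs]; exact sq_abs _
            have hre : ((1 : ℂ) * (starRingEnd ℂ) (M i i * (r i : ℂ))).re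
                = (r i) * (M i i).re := by
              rw [one_mul, _root_.map_mul, Complex.conj_ofReal, Complex.mul_re]
              simp [Complex.conj_re, Complex.conj_im]
              ring
            rw [habs, hre]
            ring
          · simp only [if_neg hij]
            rw [zero_sub, Complex.normSq_neg, Complex.normSq_mul]
            simp [Complex.normSq_eq_norm_sq]
            ring
        rw [Finset.sum_congr rfl (fun i _ => this i)]
        rw [Finset.sum_sub_distrib, Finset.sum_add_distrib]
        simp [Finset.mul_sum]
      rw [expand, hMcol j]
      have h1 : -(M j j).re ≤ 1 := by
        have := Complex.abs_re_le_norm (M j j)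
        have := hMjj j
        cases abs_le.mp (le_trans (Complex.abs_re_le_norm (M j j)) (hMjj j)) with
        | intro h1 h2 => linarith
      nlinarith [hr0 j]
    calc Real.sqrt (∑ i, ‖(1 - M * D) i j‖ ^ 2)
        ≤ Real.sqrt ((1 + r j) ^ 2) := Real.sqrt_le_sqrt key
      _ = 1 + r j := Real.sqrt_sq (by linarith [hr0 j])
  -- assembly
  rw [partA]
  have hprodpos : ∀ k, (0:ℝ) < 1 + r k := fun k => by linarith [hr0 k]
  have hP0 : (0:ℝ) ≤ ∏ k, |1 - r k| / (1 + r k) :=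
    Finset.prod_nonneg fun k _ => div_nonneg (abs_nonneg _) (hprodpos k).le
  have habs2 : ‖(1 - U * Z).det‖ ^ 2 ≤ (∏ k, (1 + r k)) ^ 2 :=
    pow_le_pow_left₀ (norm_nonneg _) partB 2
  calc (∏ k, |1 - r k| / (1 + r k)) * ‖(1 - U * Z).det‖ ^ 2
      ≤ (∏ k, |1 - r k| / (1 + r k)) * (∏ k, (1 + r k)) ^ 2 :=
        mul_le_mul_of_nonneg_left habs2 hP0
    _ = ∏ k, |1 - r k| * (1 + r k) := by
        rw [← Finset.prod_pow, ← Finset.prod_mul_distrib]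
        refine Finset.prod_congr rfl (fun k _ => ?_)
        have h : (1:ℝ) + r k ≠ 0 := (hprodpos k).ne'
        field_simp
end

section
/- Let Z be an n×n positive semidefinite matrix with eigenvalues r_1,...,r_n, and let U be an n×n unitary matrix such that I - UZ is nonsingular. Then ∏_{k=1}^n |1-r_k|/(1+r_k) ≤ |det(I - Z²)|/|det(I - UZ)|². -/
open Matrix BigOperators
open scoped ComplexOrder

lemma psd_diag_re_nonneg {m : ℕ} {P : Matrix (Fin m) (Fin m) ℂ} (hP : P.PosSemidef)
    (i : Fin m) : 0 ≤ (P i i).re := by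
  have := hP.re_dotProduct_nonneg (Pi.single i 1)
  simpa [dotProduct, Pi.single_apply, apply_ite] using this

lemma abs_det_unitary {m : ℕ} {V : Matrix (Fin m) (Fin m) ℂ}
    (hV : V ∈ Matrix.unitaryGroup (Fin m) ℂ) : ‖V.det‖ = 1 := by
  have h := Matrix.det_of_mem_unitary hV
  have h1 : star V.det * V.det = 1 := (Unitary.mem_iff.mp h).1
  have h2 : (Complex.normSq V.det : ℂ) = 1 := by
    rw [Complex.normSq_eq_conj_mul_self]; exact h1
  have h3 : Complex.normSq V.det = 1 := by exact_mod_cast h2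
  rw [Complex.norm_def, h3, Real.sqrt_one]

open scoped MatrixOrder in
/-- **Hadamard's inequality** for positive semidefinite matrices: the absolute value of the
determinant is at most the product of the diagonal entries. -/
lemma hadamard_psd {m : ℕ} (P : Matrix (Fin m) (Fin m) ℂ) (hP : P.PosSemidef) :
    ‖P.det‖ ≤ ∏ i, (P i i).re := by
  rcases Nat.eq_zero_or_pos m with hm | hm
  · subst hm
    simp [Matrix.det_fin_zero]
  set S := CFC.sqrt P with hSdef
  have hS : S * S = P := CFC.sqrt_mul_sqrt_self P hP.nonneg
  have hSh : S.IsHermitian := (CFC.sqrt_nonneg P).posSemidef.1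
  have hdre : ∀ i, (P i i).re = ∑ k, Complex.normSq (S k i) := by
    intro i
    rw [← hS, Matrix.mul_apply]
    have : ∀ k, S i k * S k i = (Complex.normSq (S k i) : ℂ) := by
      intro k
      have : S i k = starRingEnd ℂ (S k i) := by
        conv_lhs => rw [← hSh]
        simp [Matrix.conjTranspose_apply]
      rw [this, ← Complex.normSq_eq_conj_mul_self]
    rw [Finset.sum_congr rfl fun k _ => this k]
    simp
  by_cases hdet : P.det = 0
  · rw [hdet]
    simpa using Finset.prod_nonneg fun i (_ : i ∈ Finset.univ) => psd_diag_re_nonneg hP i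
  have hdS : S.det ≠ 0 := by
    intro h
    apply hdet
    rw [← hS, Matrix.det_mul, h, mul_zero]
  have hdpos : ∀ i, 0 < (P i i).re := by
    intro i
    rw [hdre i]
    by_contra hle
    push_neg at hle
    have hz : ∀ k, S k i = 0 := by
      intro k
      have hnn := Finset.sum_nonneg (fun k (_ : k ∈ Finset.univ) => Complex.normSq_nonneg (S k i))
      have hsum0 : ∑ k, Complex.normSq (S k i) = 0 := le_antisymm hle hnn
      have := (Finset.sum_eq_zero_iff_of_nonneg
        (fun k _ => Complex.normSq_nonneg (S k i))).mp hsum0 k (Finset.mem_univ k)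
      exact Complex.normSq_eq_zero.mp this
    exact hdS (Matrix.det_eq_zero_of_column_eq_zero i hz)
  clear hdre hdS hS hSh
  -- scale `P` so that the diagonal becomes the identity
  set d : Fin m → ℝ := fun i => (P i i).re with hddef
  have hPii : ∀ i, P i i = (d i : ℂ) := by
    intro i
    have : starRingEnd ℂ (P i i) = P i i := by
      conv_lhs => rw [← hP.1]; simp [Matrix.conjTranspose_apply]
    exact (Complex.conj_eq_iff_re.mp this).symm
  set e : Fin m → ℂ := fun i => ((Real.sqrt (d i))⁻¹ : ℂ) with hedef
  set E := Matrix.diagonal e with hEdef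
  have hspos : ∀ i, 0 < Real.sqrt (d i) := fun i => Real.sqrt_pos.mpr (hdpos i)
  have hQ : (Eᴴ * P * E).PosSemidef := hP.conjTranspose_mul_mul_same E
  set Q := Eᴴ * P * E with hQdef
  have hstare : star e = e := by
    funext i
    simp [hedef]
  have hEH : Eᴴ = E := by
    rw [hEdef, Matrix.diagonal_conjTranspose, hstare]
  have hQii : ∀ i, Q i i = 1 := by
    intro i
    rw [hQdef, hEH, hEdef, Matrix.mul_diagonal, Matrix.diagonal_mul, hPii i, hedef]
    have hds : Real.sqrt (d i) * Real.sqrt (d i) = d i := Real.mul_self_sqrt (hdpos i).le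
    have h1 : (Real.sqrt (d i))⁻¹ * (d i) * (Real.sqrt (d i))⁻¹ = 1 := by
      rw [← hds]; field_simp
      rw [Real.sqrt_sq (Real.sqrt_nonneg _)]; exact div_self (pow_pos (hspos i) 2).ne'
    have := congrArg (Complex.ofReal) h1
    push_cast at this
    linear_combination this
  set μ := hQ.1.eigenvalues with hμdef
  have hμ0 : ∀ i, 0 ≤ μ i := hQ.eigenvalues_nonneg
  have htrQ : Q.trace = (m : ℂ) := by
    rw [Matrix.trace]
    simp only [Matrix.diag_apply, hQii]
    simp
  have htrμ : Q.trace = ∑ i, (μ i : ℂ) := by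
    conv_lhs => rw [hQ.1.spectral_theorem]
    rw [Unitary.conjStarAlgAut_apply]
    rw [Matrix.trace_mul_comm, ← mul_assoc]
    have h1 : star (hQ.1.eigenvectorUnitary : Matrix (Fin m) (Fin m) ℂ) *
        (hQ.1.eigenvectorUnitary : Matrix (Fin m) (Fin m) ℂ) = 1 := by
      exact_mod_cast Unitary.coe_star_mul_self hQ.1.eigenvectorUnitary
    rw [h1, one_mul, Matrix.trace_diagonal]
    simp [hμdef]
  have hsum : ∑ i, μ i = (m : ℝ) := by
    have := htrQ.symm.trans htrμ
    exact_mod_cast this.symm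
  have hdetQμ : Q.det = ((∏ i, μ i : ℝ) : ℂ) := by
    rw [hQ.1.det_eq_prod_eigenvalues]
    push_cast
    rfl
  have hQd : Q.det = E.det * P.det * E.det := by
    rw [hQdef, Matrix.det_mul, Matrix.det_mul, hEH]
  have habsQ : ‖E.det * P.det * E.det‖ = ∏ i, μ i := by
    rw [← hQd, hdetQμ, Complex.norm_real, Real.norm_eq_abs,
      abs_of_nonneg (Finset.prod_nonneg fun i _ => hμ0 i)]
  have hdetE : ‖E.det‖ = ∏ i, (Real.sqrt (d i))⁻¹ := by
    rw [hEdef, Matrix.det_diagonal, norm_prod]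
    refine Finset.prod_congr rfl fun i _ => ?_
    rw [hedef]
    simp [abs_of_nonneg (Real.sqrt_nonneg (d i))]
  -- AM-GM on the eigenvalues of `Q`
  have hmne : (m : ℝ) ≠ 0 := Nat.cast_ne_zero.mpr hm.ne'
  have hprodμ : ∏ i, μ i ≤ 1 := by
    have hw1 : ∑ _i : Fin m, (m:ℝ)⁻¹ = 1 := by
      rw [Finset.sum_const, Finset.card_univ, Fintype.card_fin, nsmul_eq_mul,
        mul_inv_cancel₀ hmne]
    have hgm := Real.geom_mean_le_arith_mean_weighted Finset.univ (fun _ => (m:ℝ)⁻¹) μ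
        (fun i _ => by positivity) hw1 (fun i _ => hμ0 i)
    have hrhs : ∑ i, (m:ℝ)⁻¹ * μ i = 1 := by
      rw [← Finset.mul_sum, hsum, inv_mul_cancel₀ hmne]
    rw [hrhs] at hgm
    have hprodnn : 0 ≤ ∏ i, μ i ^ ((m:ℝ)⁻¹) :=
      Finset.prod_nonneg fun i _ => Real.rpow_nonneg (hμ0 i) _
    calc ∏ i, μ i = (∏ i, μ i ^ ((m:ℝ)⁻¹)) ^ m := by
          rw [← Finset.prod_pow]
          refine Finset.prod_congr rfl fun i _ => ?_
          rw [← Real.rpow_natCast (μ i ^ ((m:ℝ)⁻¹)) m, ← Real.rpow_mul (hμ0 i),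
            inv_mul_cancel₀ hmne, Real.rpow_one]
      _ ≤ 1 := pow_le_one₀ hprodnn hgm
  have hsprod : 0 < ∏ i, Real.sqrt (d i) := Finset.prod_pos fun i _ => hspos i
  have key : ∏ i, μ i = (∏ i, Real.sqrt (d i))⁻¹ * ‖P.det‖
      * (∏ i, Real.sqrt (d i))⁻¹ := by
    rw [← habsQ, norm_mul, norm_mul, hdetE, ← Finset.prod_inv_distrib]
  have habsP : ‖P.det‖
      = (∏ i, μ i) * ((∏ i, Real.sqrt (d i)) * (∏ i, Real.sqrt (d i))) := by
    rw [key]; field_simp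
  have hdd : ∏ i, d i = (∏ i, Real.sqrt (d i)) * (∏ i, Real.sqrt (d i)) := by
    rw [← Finset.prod_mul_distrib]
    exact Finset.prod_congr rfl fun i _ => (Real.mul_self_sqrt (hdpos i).le).symm
  have : ‖P.det‖ ≤ ∏ i, d i := by
    rw [habsP, hdd]
    nlinarith [hsprod, hprodμ, Finset.prod_nonneg fun i (_ : i ∈ Finset.univ) => hμ0 i]
  exact this

set_option maxHeartbeats 1000000 in
/-- For a positive semidefinite `Z` with eigenvalues `r k` and a unitary `U` with `I - UZ`
nonsingular, `∏ |1 - r k|/(1 + r k) ≤ |det(I - Z²)|/|det(I - UZ)|²`. -/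
theorem harnack_lower_psd (n : ℕ) (Z : Matrix (Fin n) (Fin n) ℂ) (hZ : Z.PosSemidef)
    (r : Fin n → ℝ) (hr : ∀ k, r k = hZ.1.eigenvalues k)
    (U : Matrix (Fin n) (Fin n) ℂ) (hU : U ∈ Matrix.unitaryGroup (Fin n) ℂ)
    (hdet : (1 - U * Z).det ≠ 0) :
    ∏ k, |1 - r k| / (1 + r k)
      ≤ ‖(1 - Z ^ 2).det‖ / (‖(1 - U * Z).det‖) ^ 2 := by
  have hrnn : ∀ k, 0 ≤ r k := fun k => by rw [hr k]; exact hZ.eigenvalues_nonneg k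
  set W : Matrix (Fin n) (Fin n) ℂ := (hZ.1.eigenvectorUnitary : Matrix (Fin n) (Fin n) ℂ)
    with hWdef
  have hW : W ∈ Matrix.unitaryGroup (Fin n) ℂ := hZ.1.eigenvectorUnitary.2
  set D : Matrix (Fin n) (Fin n) ℂ := Matrix.diagonal (fun i => (r i : ℂ)) with hDdef
  have hZW : Z = W * D * star W := by
    have hfun : (RCLike.ofReal ∘ hZ.1.eigenvalues : Fin n → ℂ) = fun i => (r i : ℂ) := by
      funext i
      show (RCLike.ofReal (hZ.1.eigenvalues i) : ℂ) = _
      rw [hr i]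
      rfl
    conv_lhs => rw [hZ.1.spectral_theorem]
    rw [hfun]
    rw [Unitary.conjStarAlgAut_apply]
  have hWsW : star W * W = 1 := Matrix.mem_unitaryGroup_iff'.mp hW
  have hdetWsW : (star W).det * W.det = 1 := by
    rw [← Matrix.det_mul, hWsW, Matrix.det_one]
  set V : Matrix (Fin n) (Fin n) ℂ := star W * U * W with hVdef
  have hV : V ∈ Matrix.unitaryGroup (Fin n) ℂ :=
    mul_mem (mul_mem (Unitary.star_mem hW) hU) hW
  have hVVs : V * star V = 1 := Matrix.mem_unitaryGroup_iff.mp hV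
  -- reduce `det (1 - U*Z)` to `det (star V - D)`
  have e1 : star W * (1 - U * Z) * W = 1 - V * D := by
    rw [hZW]
    have h : star W * (1 - U * (W * D * star W)) * W
        = star W * W - star W * (U * (W * (D * (star W * W)))) := by
      noncomm_ring
    rw [h, hWsW, Matrix.mul_one, hVdef]
    congr 1
    noncomm_ring
  have e2 : (1 - U * Z).det = (1 - V * D).det := by
    have h := congrArg Matrix.det e1
    rw [Matrix.det_mul, Matrix.det_mul] at h
    calc (1 - U * Z).det = ((star W).det * W.det) * (1 - U * Z).det := by
          rw [hdetWsW, one_mul]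
      _ = (star W).det * (1 - U * Z).det * W.det := by ring
      _ = (1 - V * D).det := h
  set M : Matrix (Fin n) (Fin n) ℂ := star V - D with hMdef
  have e3 : (1 - V * D).det = V.det * M.det := by
    rw [← Matrix.det_mul]
    congr 1
    rw [hMdef]
    calc (1 : Matrix (Fin n) (Fin n) ℂ) - V * D = V * star V - V * D := by rw [hVVs]
      _ = V * (star V - D) := by noncomm_ring
  have habs1 : ‖(1 - U * Z).det‖ = ‖M.det‖ := by
    rw [e2, e3, norm_mul, abs_det_unitary hV, one_mul]
  -- bound the diagonal of the Gram matrix of `M`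
  have hDH : Dᴴ = D := by
    have hsf : (star fun i => ((r i : ℂ))) = fun i => ((r i : ℂ)) := by
      funext i
      simp
    rw [hDdef, Matrix.diagonal_conjTranspose, hsf]
  have hMH : Mᴴ = V - D := by
    rw [hMdef, Matrix.conjTranspose_sub, hDH, Matrix.star_eq_conjTranspose,
      Matrix.conjTranspose_conjTranspose]
  have hPexp : Mᴴ * M = 1 - V * D - D * star V + D * D := by
    rw [hMH, hMdef]
    have h : (V - D) * (star V - D) = V * star V - V * D - D * star V + D * D := by
      noncomm_ring
    rw [h, hVVs]
  have hPii : ∀ i, ((Mᴴ * M) i i).re ≤ (1 + r i) ^ 2 := by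
    intro i
    rw [hPexp]
    have h1 : ((1 : Matrix (Fin n) (Fin n) ℂ) - V * D - D * star V + D * D) i i
        = 1 - V i i * (r i : ℂ) - (r i : ℂ) * (starRingEnd ℂ) (V i i)
          + (r i : ℂ) * (r i : ℂ) := by
      simp only [Matrix.add_apply, Matrix.sub_apply, Matrix.one_apply_eq, hDdef,
        Matrix.mul_diagonal, Matrix.diagonal_mul, Matrix.diagonal_apply_eq,
        Matrix.star_eq_conjTranspose, Matrix.conjTranspose_apply]
      ring_nf
      rfl
    rw [h1]
    have hVre : |(V i i).re| ≤ 1 := by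
      have := entry_norm_bound_of_unitary hV i i
      exact (Complex.abs_re_le_norm (V i i)).trans this
    have habs := abs_le.mp hVre
    simp only [Complex.add_re, Complex.sub_re, Complex.one_re, Complex.mul_re,
      Complex.ofReal_re, Complex.ofReal_im, Complex.conj_re, Complex.conj_im]
    nlinarith [hrnn i, habs.1, habs.2]
  -- Hadamard's inequality gives `|det (1 - U*Z)|² ≤ ∏ (1 + r i)²`
  have hPsd := Matrix.posSemidef_conjTranspose_mul_self M
  have h6 : ‖(Mᴴ * M).det‖ = (‖M.det‖) ^ 2 := by
    rw [Matrix.det_mul, Matrix.det_conjTranspose, norm_mul]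
    have hst : ‖star M.det‖ = ‖M.det‖ := Complex.norm_conj M.det
    rw [hst, pow_two]
  have h8 : ∏ i, ((Mᴴ * M) i i).re ≤ ∏ i, (1 + r i) ^ 2 :=
    Finset.prod_le_prod (fun i _ => psd_diag_re_nonneg hPsd i) (fun i _ => hPii i)
  have hsq : (‖(1 - U * Z).det‖) ^ 2 ≤ (∏ k, (1 + r k)) ^ 2 := by
    rw [habs1, ← h6, ← Finset.prod_pow]
    exact (hadamard_psd (Mᴴ * M) hPsd).trans h8
  -- compute `|det (1 - Z²)|`
  have e4 : star W * (1 - Z ^ 2) * W = 1 - D * D := by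
    rw [pow_two, hZW]
    have h : star W * (1 - W * D * star W * (W * D * star W)) * W
        = star W * W - (star W * W) * D * (star W * W) * D * (star W * W) := by
      noncomm_ring
    rw [h, hWsW]
    simp only [Matrix.one_mul, Matrix.mul_one]
  have e5 : (1 - Z ^ 2).det = (1 - D * D).det := by
    have h := congrArg Matrix.det e4
    rw [Matrix.det_mul, Matrix.det_mul] at h
    calc (1 - Z ^ 2).det = ((star W).det * W.det) * (1 - Z ^ 2).det := by
          rw [hdetWsW, one_mul]
      _ = (star W).det * (1 - Z ^ 2).det * W.det := by ring
      _ = (1 - D * D).det := h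
  have hDD : (1 : Matrix (Fin n) (Fin n) ℂ) - D * D
      = Matrix.diagonal (fun i => 1 - (r i : ℂ) * (r i : ℂ)) := by
    rw [hDdef, Matrix.diagonal_mul_diagonal, ← Matrix.diagonal_one, Matrix.diagonal_sub]
  have habs2 : ‖(1 - Z ^ 2).det‖ = ∏ i, |1 - r i| * (1 + r i) := by
    rw [e5, hDD, Matrix.det_diagonal, norm_prod]
    refine Finset.prod_congr rfl fun i _ => ?_
    have h1 : (1 : ℂ) - (r i : ℂ) * (r i : ℂ) = ((1 - r i * r i : ℝ) : ℂ) := by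
      push_cast; ring
    rw [h1, Complex.norm_real, Real.norm_eq_abs]
    have h2 : (1 : ℝ) - r i * r i = (1 - r i) * (1 + r i) := by ring
    rw [h2, abs_mul, abs_of_nonneg (by linarith [hrnn i] : (0:ℝ) ≤ 1 + r i)]
  -- final assembly
  have hB : 0 < ∏ k, (1 + r k) := Finset.prod_pos fun k _ => by linarith [hrnn k]
  have hc : 0 < ‖(1 - U * Z).det‖ := norm_pos_iff.mpr hdet
  have hA : 0 ≤ ∏ k, |1 - r k| := Finset.prod_nonneg fun k _ => abs_nonneg _
  rw [habs2, Finset.prod_mul_distrib, Finset.prod_div_distrib,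
    div_le_div_iff₀ hB (pow_pos hc 2)]
  calc (∏ k, |1 - r k|) * ‖(1 - U * Z).det‖ ^ 2
      ≤ (∏ k, |1 - r k|) * (∏ k, (1 + r k)) ^ 2 :=
        mul_le_mul_of_nonneg_left hsq hA
    _ = (∏ k, |1 - r k|) * (∏ k, (1 + r k)) * (∏ k, (1 + r k)) := by ring
end

section
/- Let Z be an n×n positive definite matrix with all eigenvalues r_1,...,r_n in (0,1), and let U be a unitary matrix with U ≠ I. Then det(I - Z²)/|det(I - UZ)|² < ∏_{k=1}^n (1+r_k)/(1-r_k), i.e., the inequality is strict. -/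
open Matrix BigOperators
open scoped ComplexOrder

/-- det of `1 + c • T` for Hermitian `T` as product over eigenvalues. -/
lemma det_one_add_smul_herm (c : ℂ) {T : Matrix (Fin n) (Fin n) ℂ} (hT : T.IsHermitian) :
    (1 + c • T).det = ∏ i, (1 + c * (hT.eigenvalues i : ℂ)) := by
  set V : Matrix (Fin n) (Fin n) ℂ := (hT.eigenvectorUnitary : Matrix (Fin n) (Fin n) ℂ)
  have hVV : V * star V = 1 := (Matrix.mem_unitaryGroup_iff).mp hT.eigenvectorUnitary.2
  have hdec : 1 + c • T =
      V * (diagonal fun i => 1 + c * (hT.eigenvalues i : ℂ)) * star V := by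
    have hspec := hT.spectral_theorem
    rw [Unitary.conjStarAlgAut_apply] at hspec
    have : (diagonal fun i => 1 + c * (hT.eigenvalues i : ℂ)) =
        1 + c • diagonal (RCLike.ofReal ∘ hT.eigenvalues) := by
      rw [← diagonal_one, ← diagonal_smul, ← diagonal_add]
      rfl
    rw [this, mul_add, add_mul, mul_one, hVV, mul_smul_comm, smul_mul_assoc, ← hspec]
  rw [hdec, det_mul, det_mul, mul_comm, ← mul_assoc, ← det_mul, star_eq_conjTranspose,
    ← star_eq_conjTranspose, (hT.eigenvectorUnitary.2).1]
  simp [det_diagonal]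

lemma herm_eq_zero_of_eigenvalues {T : Matrix (Fin n) (Fin n) ℂ} (hT : T.IsHermitian)
    (h : ∀ i, hT.eigenvalues i = 0) : T = 0 := by
  have hd : (RCLike.ofReal ∘ hT.eigenvalues : Fin n → ℂ) = 0 := by
    funext i; simp [h i]
  rw [hT.spectral_theorem, hd]
  rw [show (diagonal (0 : Fin n → ℂ)) = 0 from diagonal_zero, map_zero]

lemma psd_real_smul {Q : Matrix (Fin n) (Fin n) ℂ} (hQ : Q.PosSemidef) {c : ℝ} (hc : 0 ≤ c) :
    ((c : ℂ) • Q).PosSemidef := by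
  refine PosSemidef.of_dotProduct_mulVec_nonneg ?_ fun x => ?_
  · have := hQ.1
    simp [IsHermitian, conjTranspose_smul, this.eq]
  · have h1 : star x ⬝ᵥ ((c : ℂ) • Q) *ᵥ x = (c : ℂ) * (star x ⬝ᵥ Q *ᵥ x) := by
      rw [smul_mulVec, dotProduct_smul, smul_eq_mul]
    rw [h1]
    exact mul_nonneg (Complex.zero_le_real.2 hc) (hQ.dotProduct_mulVec_nonneg x)

lemma posDef_unitary_conj {B V : Matrix (Fin n) (Fin n) ℂ} (hB : B.PosDef)
    (hV : V ∈ Matrix.unitaryGroup (Fin n) ℂ) : (V * B * Vᴴ).PosDef := by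
  refine PosDef.of_dotProduct_mulVec_pos ?_ fun x hx => ?_
  · have := hB.1
    simp [IsHermitian, conjTranspose_mul, this.eq, mul_assoc]
  · have h1 : star x ⬝ᵥ (V * B * Vᴴ) *ᵥ x = star (Vᴴ *ᵥ x) ⬝ᵥ B *ᵥ (Vᴴ *ᵥ x) := by
      have : V * B * Vᴴ = (Vᴴ)ᴴ * B * Vᴴ := by rw [conjTranspose_conjTranspose]
      rw [this]
      simp only [star_mulVec, dotProduct_mulVec, vecMul_vecMul]
    have h2 : (Vᴴ *ᵥ x) ≠ 0 := by
      intro h0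
      apply hx
      have : V *ᵥ (Vᴴ *ᵥ x) = x := by
        rw [mulVec_mulVec, ← star_eq_conjTranspose, (Matrix.mem_unitaryGroup_iff).mp hV, one_mulVec]
      rw [h0, mulVec_zero] at this
      exact this.symm
    rw [h1]
    exact hB.dotProduct_mulVec_pos h2

open scoped MatrixOrder in
/-- square root of a positive semidefinite matrix. -/
noncomputable def Matrix.PosSemidef.sqrt {n : ℕ} {Z : Matrix (Fin n) (Fin n) ℂ}
    (_hZ : Z.PosSemidef) : Matrix (Fin n) (Fin n) ℂ := CFC.sqrt Z

open scoped MatrixOrder in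
lemma Matrix.PosSemidef.posSemidef_sqrt {n : ℕ} {Z : Matrix (Fin n) (Fin n) ℂ}
    (hZ : Z.PosSemidef) : hZ.sqrt.PosSemidef :=
  nonneg_iff_posSemidef.mp (CFC.sqrt_nonneg Z)

open scoped MatrixOrder in
lemma Matrix.PosSemidef.sqrt_mul_self {n : ℕ} {Z : Matrix (Fin n) (Fin n) ℂ}
    (hZ : Z.PosSemidef) : hZ.sqrt * hZ.sqrt = Z :=
  CFC.sqrt_mul_sqrt_self Z (nonneg_iff_posSemidef.mpr hZ)

lemma posDef_sqrt' {Z : Matrix (Fin n) (Fin n) ℂ} (hZ : Z.PosDef) : hZ.posSemidef.sqrt.PosDef := by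
  set W := hZ.posSemidef.sqrt with hW
  have hps : W.PosSemidef := hZ.posSemidef.posSemidef_sqrt
  refine PosDef.of_dotProduct_mulVec_pos hps.1 fun x hx => lt_of_le_of_ne (hps.dotProduct_mulVec_nonneg x) ?_
  intro h0
  have h1 : W *ᵥ x = 0 := (hps.dotProduct_mulVec_zero_iff x).mp h0.symm
  have h2 : Z *ᵥ x = 0 := by
    rw [← hZ.posSemidef.sqrt_mul_self, ← mulVec_mulVec, h1, mulVec_zero]
  have h3 := hZ.dotProduct_mulVec_pos hx
  rw [h2, dotProduct_zero] at h3
  exact lt_irrefl _ h3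

lemma mul_inv_conj_cancel {W : Matrix (Fin n) (Fin n) ℂ} (hW : W.PosDef)
    (B : Matrix (Fin n) (Fin n) ℂ) : W * (W⁻¹ * B * W⁻¹) * W = B := by
  have hu : IsUnit W.det := (Matrix.isUnit_iff_isUnit_det W).mp hW.isUnit
  rw [mul_assoc, Matrix.mul_assoc _ W⁻¹ W, Matrix.nonsing_inv_mul W hu, mul_one,
    ← mul_assoc, Matrix.mul_nonsing_inv W hu, one_mul]

lemma det_real_of_posDef {W : Matrix (Fin n) (Fin n) ℂ} (hW : W.PosDef) :
    W.det = (W.det.re : ℂ) ∧ 0 < W.det.re := by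
  have h := hW.det_pos
  constructor
  · exact Complex.ext rfl (by simpa using ((Complex.lt_def.mp h).2).symm)
  · simpa using (Complex.lt_def.mp h).1

lemma one_le_prod_real {ι : Type*} {s : Finset ι} {f : ι → ℝ} (h : ∀ i ∈ s, 1 ≤ f i) :
    1 ≤ ∏ i ∈ s, f i := by
  calc (1:ℝ) = ∏ _i ∈ s, 1 := (Finset.prod_const_one).symm
  _ ≤ ∏ i ∈ s, f i := Finset.prod_le_prod (fun i _ => zero_le_one) h

lemma det_re_lt_det_re_add {P Q : Matrix (Fin n) (Fin n) ℂ} (hP : P.PosDef)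
    (hQ : Q.PosSemidef) (hQ0 : Q ≠ 0) : P.det.re < (P + Q).det.re := by
  classical
  set W := hP.posSemidef.sqrt with hWdef
  have hW : W.PosDef := posDef_sqrt' hP
  have hWW : W * W = P := hP.posSemidef.sqrt_mul_self
  set T := W⁻¹ * Q * W⁻¹ with hTdef
  have hTps : T.PosSemidef := by
    have h1 := hQ.conjTranspose_mul_mul_same W⁻¹
    rwa [hW.inv.1] at h1
  have hQeq : Q = W * T * W := (mul_inv_conj_cancel hW Q).symm
  have hT0 : T ≠ 0 := by
    intro h
    apply hQ0
    rw [hQeq, h, mul_zero, zero_mul]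
  have hdecomp : P + Q = W * (1 + T) * W := by
    rw [mul_add, add_mul, mul_one, hWW, hQeq]
  set μ := hTps.1.eigenvalues with hμdef
  have hμ0 : ∀ i, 0 ≤ μ i := hTps.eigenvalues_nonneg
  obtain ⟨j, hj⟩ : ∃ j, μ j ≠ 0 := by
    by_contra h
    push_neg at h
    exact hT0 (herm_eq_zero_of_eigenvalues hTps.1 h)
  have hdet1 : (1 + T).det = ((∏ i, (1 + μ i) : ℝ) : ℂ) := by
    have h := det_one_add_smul_herm 1 hTps.1
    rw [one_smul] at h
    rw [h]
    push_cast
    simp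
    rfl
  have hprod : 1 < ∏ i, (1 + μ i) := by
    have hj' : 0 < μ j := lt_of_le_of_ne (hμ0 j) (Ne.symm hj)
    calc (1:ℝ) = ∏ _i : Fin n, (1:ℝ) := (Finset.prod_const_one).symm
    _ < ∏ i, (1 + μ i) :=
      Finset.prod_lt_prod (fun i _ => zero_lt_one) (fun i _ => by linarith [hμ0 i])
        ⟨j, Finset.mem_univ j, by linarith⟩
  obtain ⟨hWre, hWpos⟩ := det_real_of_posDef hW
  set w := W.det.re with hwdef
  have hPdet : P.det = ((w ^ 2 : ℝ) : ℂ) := by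
    rw [← hWW, det_mul, hWre]
    push_cast
    ring
  have hPQdet : (P + Q).det = ((w ^ 2 * ∏ i, (1 + μ i) : ℝ) : ℂ) := by
    rw [hdecomp, det_mul, det_mul, hdet1, hWre]
    push_cast
    ring
  rw [hPdet, hPQdet, Complex.ofReal_re, Complex.ofReal_re]
  have h2 : w ^ 2 * 1 < w ^ 2 * ∏ i, (1 + μ i) :=
    mul_lt_mul_of_pos_left hprod (by positivity)
  linarith

lemma det_re_le_abs_det {H K : Matrix (Fin n) (Fin n) ℂ} (hH : H.PosDef) (hK : K.IsHermitian) :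
    H.det.re ≤ ‖(H + Complex.I • K).det‖ := by
  classical
  set W := hH.posSemidef.sqrt with hWdef
  have hW : W.PosDef := posDef_sqrt' hH
  have hWW : W * W = H := hH.posSemidef.sqrt_mul_self
  set T := W⁻¹ * K * W⁻¹ with hTdef
  have hTH : T.IsHermitian := by
    have h1 : Tᴴ = (W⁻¹)ᴴ * Kᴴ * (W⁻¹)ᴴ := by
      rw [hTdef, conjTranspose_mul, conjTranspose_mul, mul_assoc]
    rw [IsHermitian, h1, hW.inv.1, hK.eq]
  have hKeq : K = W * T * W := (mul_inv_conj_cancel hW K).symm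
  have hdecomp : H + Complex.I • K = W * (1 + Complex.I • T) * W := by
    rw [mul_add, add_mul, mul_one, hWW, mul_smul_comm, smul_mul_assoc, ← hKeq]
  set μ := hTH.eigenvalues with hμdef
  have hdet1 : (1 + Complex.I • T).det = ∏ i, (1 + Complex.I * (μ i : ℂ)) :=
    det_one_add_smul_herm Complex.I hTH
  have habs1 : 1 ≤ ‖(1 + Complex.I • T).det‖ := by
    rw [hdet1, norm_prod]
    refine one_le_prod_real fun i _ => ?_
    have hre : (1 + Complex.I * (μ i : ℂ)).re = 1 := by simp
    calc (1:ℝ) = |(1 + Complex.I * (μ i : ℂ)).re| := by rw [hre]; simp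
    _ ≤ ‖1 + Complex.I * (μ i : ℂ)‖ := Complex.abs_re_le_norm _
  obtain ⟨hWre, hWpos⟩ := det_real_of_posDef hW
  set w := W.det.re with hwdef
  have hHdet : H.det.re = w ^ 2 := by
    rw [← hWW, det_mul, hWre]
    simp [pow_two]
  rw [hHdet, hdecomp, det_mul, det_mul, norm_mul, norm_mul, hWre,
    Complex.norm_real, Real.norm_eq_abs, abs_of_pos hWpos]
  nlinarith [habs1, norm_nonneg ((1 + Complex.I • T).det)]

/-- For a positive definite `Z` with eigenvalues `r k ∈ (0,1)` and a unitary `U ≠ I`,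
the Harnack-type upper bound is strict:
`det(I - Z²)/|det(I - UZ)|² < ∏ (1 + r k)/(1 - r k)`. -/
theorem harnack_upper_strict (n : ℕ) (Z : Matrix (Fin n) (Fin n) ℂ) (hZ : Z.PosDef)
    (r : Fin n → ℝ) (hr : ∀ k, r k = hZ.1.eigenvalues k)
    (hr0 : ∀ k, 0 < r k) (hr1 : ∀ k, r k < 1)
    (U : Matrix (Fin n) (Fin n) ℂ) (hU : U ∈ Matrix.unitaryGroup (Fin n) ℂ) (hU1 : U ≠ 1) :
    ((1 - Z ^ 2).det).re / (‖(1 - U * Z).det‖) ^ 2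
      < ∏ k, (1 + r k) / (1 - r k) := by
  classical
  have hUU : Uᴴ * U = 1 := by
    rw [← star_eq_conjTranspose]
    exact (Unitary.mem_iff.mp hU).1
  -- determinants of 1 ± Z
  have hdet1Z : (1 - Z).det = ((∏ k, (1 - r k) : ℝ) : ℂ) := by
    have h := det_one_add_smul_herm (-1) hZ.1
    rw [neg_one_smul, ← sub_eq_add_neg] at h
    rw [h]
    push_cast
    refine Finset.prod_congr rfl fun k _ => ?_
    rw [← hr k]
    ring
  have hdet1pZ : (1 + Z).det = ((∏ k, (1 + r k) : ℝ) : ℂ) := by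
    have h := det_one_add_smul_herm 1 hZ.1
    rw [one_smul] at h
    rw [h]
    push_cast
    refine Finset.prod_congr rfl fun k _ => ?_
    rw [← hr k]
    ring
  have hdetZ2 : (1 - Z ^ 2).det = ((∏ k, (1 - r k ^ 2) : ℝ) : ℂ) := by
    have hf : (1 - Z ^ 2) = (1 - Z) * (1 + Z) := by noncomm_ring
    rw [hf, det_mul, hdet1Z, hdet1pZ, ← Complex.ofReal_mul, ← Finset.prod_mul_distrib]
    norm_cast
    refine Finset.prod_congr rfl fun k _ => by ring
  -- 1 - Z is positive definite
  have hP : (1 - Z).PosDef := by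
    have hdiag : PosDef (diagonal (fun k => (1 : ℂ) - (hZ.1.eigenvalues k : ℂ))) := by
      refine posDef_diagonal_iff.mpr fun k => ?_
      have : (1 : ℂ) - (hZ.1.eigenvalues k : ℂ) = ((1 - r k : ℝ) : ℂ) := by
        rw [← hr k]; push_cast; ring
      rw [this]
      exact Complex.zero_lt_real.2 (by linarith [hr1 k])
    have hdec : 1 - Z = (hZ.1.eigenvectorUnitary : Matrix (Fin n) (Fin n) ℂ) *
        (diagonal fun k => (1 : ℂ) - (hZ.1.eigenvalues k : ℂ)) *
        (hZ.1.eigenvectorUnitary : Matrix (Fin n) (Fin n) ℂ)ᴴ := by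
      have hVV : (hZ.1.eigenvectorUnitary : Matrix (Fin n) (Fin n) ℂ) *
          star (hZ.1.eigenvectorUnitary : Matrix (Fin n) (Fin n) ℂ) = 1 :=
        (Matrix.mem_unitaryGroup_iff).mp hZ.1.eigenvectorUnitary.2
      have hdd : (diagonal fun k => (1 : ℂ) - (hZ.1.eigenvalues k : ℂ)) =
          1 - diagonal (RCLike.ofReal ∘ hZ.1.eigenvalues) := by
        rw [← diagonal_one, ← diagonal_sub]
        rfl
      rw [← star_eq_conjTranspose, hdd, mul_sub, sub_mul, mul_one, hVV, ← Unitary.conjStarAlgAut_apply (S := ℂ), ← hZ.1.spectral_theorem]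
    rw [hdec]
    exact posDef_unitary_conj hdiag hZ.1.eigenvectorUnitary.2
  -- square root of Z
  set W := hZ.posSemidef.sqrt with hWdef
  have hW : W.PosDef := posDef_sqrt' hZ
  have hWH : Wᴴ = W := hW.1
  have hWW : W * W = Z := hZ.posSemidef.sqrt_mul_self
  have hWu : IsUnit W.det := (Matrix.isUnit_iff_isUnit_det W).mp hW.isUnit
  set S := W * U * W with hSdef
  have hSH : Sᴴ = W * Uᴴ * W := by
    rw [hSdef, conjTranspose_mul, conjTranspose_mul, hWH, mul_assoc]
  have hdetS : (1 - U * Z).det = (1 - S).det := by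
    have h1 : U * Z = (U * W) * W := by rw [mul_assoc, hWW]
    rw [h1, det_one_sub_mul_comm, hSdef, ← mul_assoc]
  -- the positive semidefinite perturbation
  set M := (1 - U)ᴴ * (1 - U) with hMdef
  have hMps : M.PosSemidef := posSemidef_conjTranspose_mul_self _
  have hM0 : M ≠ 0 := by
    intro h
    apply hU1
    have h2 := conjTranspose_mul_self_eq_zero.mp h
    rw [sub_eq_zero] at h2
    exact h2.symm
  set G := ((1/2 : ℝ) : ℂ) • M with hGdef
  have hGps : G.PosSemidef := psd_real_smul hMps (by norm_num)
  have hG0 : G ≠ 0 := by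
    simp only [hGdef]
    exact smul_ne_zero (by norm_num) hM0
  set Q := W * G * W with hQdef
  have hQps : Q.PosSemidef := by
    have h := hGps.mul_mul_conjTranspose_same W
    rwa [hWH] at h
  have hQ0 : Q ≠ 0 := by
    intro h
    apply hG0
    have hWinv : (W⁻¹)⁻¹ = W := Matrix.nonsing_inv_nonsing_inv W hWu
    have h2 := mul_inv_conj_cancel hW.inv G
    rw [hWinv, ← hQdef, h] at h2
    rw [← h2, mul_zero, zero_mul]
  set H := (1 - Z) + Q with hHdef
  have hHpd : H.PosDef := hP.add_posSemidef hQps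
  have hHgt : (1 - Z).det.re < H.det.re := det_re_lt_det_re_add hP hQps hQ0
  -- the Hermitian/skew decomposition of 1 - S
  set K := (Complex.I / 2) • (S - Sᴴ) with hKdef
  have hKH : K.IsHermitian := by
    have h1 : Kᴴ = (starRingEnd ℂ) (Complex.I / 2) • (Sᴴ - S) := by
      rw [hKdef, conjTranspose_smul, conjTranspose_sub, conjTranspose_conjTranspose]
      rfl
    have h2 : (starRingEnd ℂ) (Complex.I / 2) = -(Complex.I / 2) := by
      rw [map_div₀, Complex.conj_I]
      rw [show (starRingEnd ℂ) 2 = 2 from Complex.conj_ofNat 2]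
      ring
    rw [IsHermitian, h1, h2, hKdef]
    module
  have hWMW : W * M * W = Z + Z - S - Sᴴ := by
    have hM' : M = 1 - U - Uᴴ + Uᴴ * U := by
      rw [hMdef, conjTranspose_sub, conjTranspose_one]
      noncomm_ring
    have expand : W * (1 - U - Uᴴ + 1) * W = W * W + W * W - W * U * W - W * Uᴴ * W := by
      noncomm_ring
    rw [hM', hUU, expand, hWW, ← hSdef, ← hSH]
  have hQval : Q = ((1/2 : ℝ) : ℂ) • (Z + Z - S - Sᴴ) := by
    rw [hQdef, hGdef, mul_smul_comm, smul_mul_assoc, hWMW]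
  have hHK : 1 - S = H + Complex.I • K := by
    rw [hHdef, hQval, hKdef, smul_smul]
    have h3 : Complex.I * (Complex.I / 2) = (-1 : ℂ) / 2 := by
      rw [show Complex.I * (Complex.I / 2) = Complex.I * Complex.I / 2 by ring, Complex.I_mul_I]
    rw [h3]
    push_cast
    module
  -- putting the determinant bounds together
  have habs : (∏ k, (1 - r k) : ℝ) < ‖(1 - U * Z).det‖ := by
    have h1 : H.det.re ≤ ‖(H + Complex.I • K).det‖ := det_re_le_abs_det hHpd hKH
    rw [← hHK] at h1
    have h2 : (1 - Z).det.re = ∏ k, (1 - r k) := by rw [hdet1Z, Complex.ofReal_re]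
    rw [hdetS]
    calc (∏ k, (1 - r k) : ℝ) = (1 - Z).det.re := h2.symm
    _ < H.det.re := hHgt
    _ ≤ ‖(1 - S).det‖ := h1
  have hppos : (0:ℝ) < ∏ k, (1 - r k) := Finset.prod_pos fun k _ => by linarith [hr1 k]
  have hqpos : (0:ℝ) < ∏ k, (1 + r k) := Finset.prod_pos fun k _ => by linarith [hr0 k]
  have hNpos : (0:ℝ) < ∏ k, (1 - r k ^ 2) := Finset.prod_pos fun k _ => by
    nlinarith [hr0 k, hr1 k]
  have hnum : ((1 - Z ^ 2).det).re = ∏ k, (1 - r k ^ 2) := by rw [hdetZ2, Complex.ofReal_re]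
  have habs2 : (∏ k, (1 - r k)) ^ 2 < (‖(1 - U * Z).det‖) ^ 2 :=
    pow_lt_pow_left₀ habs (le_of_lt hppos) (by norm_num)
  have hkey : ((1 - Z ^ 2).det).re / (‖(1 - U * Z).det‖) ^ 2
      < (∏ k, (1 - r k ^ 2)) / (∏ k, (1 - r k)) ^ 2 := by
    rw [hnum]
    exact div_lt_div_of_pos_left hNpos (by positivity) habs2
  have hfinal : (∏ k, (1 - r k ^ 2)) / (∏ k, (1 - r k)) ^ 2 = ∏ k, (1 + r k) / (1 - r k) := by
    rw [← Finset.prod_pow, ← Finset.prod_div_distrib]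
    refine Finset.prod_congr rfl fun k _ => ?_
    have h1k : (1 : ℝ) - r k ≠ 0 := by linarith [hr1 k]
    field_simp
    ring
  rw [← hfinal]
  exact hkey
end

section
/- Let x = (x_1,...,x_n) and y = (y_1,...,y_n) be positive vectors with x log-majorized by y (i.e., the decreasing rearrangements satisfy ∏_{k=1}^ℓ x_k^↓ ≤ ∏_{k=1}^ℓ y_k^↓ for ℓ < n and ∏_{k=1}^n x_k = ∏_{k=1}^n y_k). Then the vector (1+x_1,...,1+x_n) is weakly log-majorized by (1+y_1,...,1+y_n); in particular ∏_{k=1}^n (1+x_k) ≤ ∏_{k=1}^n (1+y_k). -/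
open BigOperators

/-- Weighted AM-GM tangent inequality for `t ↦ log (1 + eᵗ)`. -/
lemma key_ineq (u v : ℝ) (hu : 0 < u) (hv : 0 < v) :
    u / (1 + u) * (Real.log v - Real.log u) ≤ Real.log (1 + v) - Real.log (1 + u) := by
  have h1u : (0:ℝ) < 1 + u := by linarith
  have h1v : (0:ℝ) < 1 + v := by linarith
  have hθ0 : (0:ℝ) ≤ u / (1 + u) := by positivity
  have hw2 : (0:ℝ) ≤ 1 / (1 + u) := by positivity
  have hsum : u / (1 + u) + 1 / (1 + u) = 1 := by field_simp; ring
  have hr : (0:ℝ) < v / u := by positivity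
  have amgm := Real.geom_mean_le_arith_mean2_weighted hθ0 hw2 hr.le zero_le_one hsum
  have hrhs : u / (1 + u) * (v / u) + 1 / (1 + u) * 1 = (1 + v) / (1 + u) := by
    field_simp; ring
  have h2 : (v / u) ^ (u / (1 + u)) ≤ (1 + v) / (1 + u) := by
    calc (v / u) ^ (u / (1 + u)) = (v / u) ^ (u / (1 + u)) * (1:ℝ) ^ (1 / (1 + u)) := by
          rw [Real.one_rpow, mul_one]
      _ ≤ u / (1 + u) * (v / u) + 1 / (1 + u) * 1 := amgm
      _ = (1 + v) / (1 + u) := hrhs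
  have h3 := Real.log_le_log (Real.rpow_pos_of_pos hr _) h2
  rw [Real.log_rpow hr, Real.log_div (ne_of_gt hv) (ne_of_gt hu),
      Real.log_div (ne_of_gt h1v) (ne_of_gt h1u)] at h3
  linarith

/-- Abel summation bound. -/
lemma abel_aux (c g : ℕ → ℝ) (hc : ∀ k, c (k + 1) ≤ c k)
    (hT : ∀ l, 0 ≤ ∑ k ∈ Finset.range l, g k) :
    ∀ L, c L * ∑ k ∈ Finset.range L, g k ≤ ∑ k ∈ Finset.range L, c k * g k := by
  intro L
  induction L with
  | zero => simp
  | succ L ih =>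
    have hTL : 0 ≤ ∑ k ∈ Finset.range (L + 1), g k := hT (L + 1)
    rw [Finset.sum_range_succ] at hTL ⊢
    rw [Finset.sum_range_succ]
    have h1 : c (L + 1) * (∑ k ∈ Finset.range L, g k + g L)
        ≤ c L * (∑ k ∈ Finset.range L, g k + g L) :=
      mul_le_mul_of_nonneg_right (hc L) hTL
    have h2 : c L * (∑ k ∈ Finset.range L, g k + g L)
        = c L * ∑ k ∈ Finset.range L, g k + c L * g L := mul_add _ _ _
    linarith

/-- Transfer a filtered sum over `Fin n` to a sum over `Finset.range l`. -/
lemma filter_sum_eq {n l : ℕ} (hl : l ≤ n) (g : Fin n → ℝ) :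
    ∑ k ∈ Finset.univ.filter (fun k : Fin n => (k : ℕ) < l), g k
      = ∑ k ∈ Finset.range l, (if h : k < n then g ⟨k, h⟩ else 0) := by
  refine Finset.sum_bij' (fun (k : Fin n) _ => (k : ℕ))
    (fun k hk => ⟨k, lt_of_lt_of_le (Finset.mem_range.1 hk) hl⟩) ?_ ?_ ?_ ?_ ?_
  · intro a ha
    exact Finset.mem_range.2 (Finset.mem_filter.1 ha).2
  · intro a ha
    simp only [Finset.mem_filter, Finset.mem_univ, true_and]
    exact Finset.mem_range.1 ha
  · intro a ha; rfl
  · intro a ha; rfl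
  · intro a ha
    simp [(Fin.is_lt a)]

/-- Main step: weak log-majorization of the shifted sequences, for sorted sequences. -/
lemma main_aux {n : ℕ} (a b : Fin n → ℝ) (ha : ∀ k, 0 < a k) (hb : ∀ k, 0 < b k)
    (haa : Antitone a)
    (hp : ∀ l : ℕ, ∏ k ∈ Finset.univ.filter (fun k : Fin n => (k : ℕ) < l), a k
        ≤ ∏ k ∈ Finset.univ.filter (fun k : Fin n => (k : ℕ) < l), b k) :
    ∀ l : ℕ, ∏ k ∈ Finset.univ.filter (fun k : Fin n => (k : ℕ) < l), (1 + a k)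
        ≤ ∏ k ∈ Finset.univ.filter (fun k : Fin n => (k : ℕ) < l), (1 + b k) := by
  set A : ℕ → ℝ := fun k => if h : k < n then Real.log (a ⟨k, h⟩) else 0 with hA
  set B : ℕ → ℝ := fun k => if h : k < n then Real.log (b ⟨k, h⟩) else 0 with hB
  set P : ℕ → ℝ := fun k => if h : k < n then Real.log (1 + a ⟨k, h⟩) else 0 with hP
  set Q : ℕ → ℝ := fun k => if h : k < n then Real.log (1 + b ⟨k, h⟩) else 0 with hQ
  set C : ℕ → ℝ := fun k => if h : k < n then a ⟨k, h⟩ / (1 + a ⟨k, h⟩) else 0 with hC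
  have hC0 : ∀ k, 0 ≤ C k := by
    intro k
    by_cases h : k < n
    · simp only [hC, dif_pos h]
      have := ha ⟨k, h⟩; positivity
    · simp [hC, dif_neg h]
  have hCanti : ∀ k, C (k + 1) ≤ C k := by
    intro k
    by_cases h1 : k + 1 < n
    · have h0 : k < n := Nat.lt_of_succ_lt h1
      simp only [hC, dif_pos h1, dif_pos h0]
      have hle : a ⟨k + 1, h1⟩ ≤ a ⟨k, h0⟩ := haa (by simp [Fin.mk_le_mk])
      have hp1 := ha ⟨k + 1, h1⟩
      have hp0 := ha ⟨k, h0⟩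
      rw [div_le_div_iff₀ (by linarith) (by linarith)]
      nlinarith
    · simp only [hC, dif_neg h1]
      exact hC0 k
  have hTle : ∀ j, j ≤ n → 0 ≤ ∑ k ∈ Finset.range j, (B k - A k) := by
    intro j hj
    rw [Finset.sum_sub_distrib]
    have hA' : ∑ k ∈ Finset.range j, A k
        = Real.log (∏ k ∈ Finset.univ.filter (fun k : Fin n => (k : ℕ) < j), a k) := by
      rw [Real.log_prod (fun i _ => (ha i).ne'), filter_sum_eq hj]
    have hB' : ∑ k ∈ Finset.range j, B k
        = Real.log (∏ k ∈ Finset.univ.filter (fun k : Fin n => (k : ℕ) < j), b k) := by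
      rw [Real.log_prod (fun i _ => (hb i).ne'), filter_sum_eq hj]
    have hxpos : 0 < ∏ k ∈ Finset.univ.filter (fun k : Fin n => (k : ℕ) < j), a k :=
      Finset.prod_pos (fun i _ => ha i)
    rw [hA', hB', sub_nonneg]
    exact Real.log_le_log hxpos (hp j)
  have hT : ∀ j, 0 ≤ ∑ k ∈ Finset.range j, (B k - A k) := by
    intro j
    rcases le_or_gt j n with h | h
    · exact hTle j h
    · have heq : ∑ k ∈ Finset.range n, (B k - A k) = ∑ k ∈ Finset.range j, (B k - A k) := by
        refine Finset.sum_subset (Finset.range_subset_range.2 h.le) ?_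
        intro k _ hk
        have hkn : ¬ k < n := fun hc => hk (Finset.mem_range.2 hc)
        simp [hA, hB, dif_neg hkn]
      rw [← heq]
      exact hTle n le_rfl
  have hpw : ∀ k, C k * (B k - A k) ≤ Q k - P k := by
    intro k
    by_cases h : k < n
    · simp only [hA, hB, hP, hQ, hC, dif_pos h]
      exact key_ineq _ _ (ha ⟨k, h⟩) (hb ⟨k, h⟩)
    · simp [hA, hB, hP, hQ, hC, dif_neg h]
  -- core sum inequality
  have hsum : ∀ l : ℕ, ∑ k ∈ Finset.range l, P k ≤ ∑ k ∈ Finset.range l, Q k := by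
    intro l
    have h5 : ∑ k ∈ Finset.range l, C k * (B k - A k)
        ≤ ∑ k ∈ Finset.range l, (Q k - P k) :=
      Finset.sum_le_sum (fun k _ => hpw k)
    have h6 := abel_aux C (fun k => B k - A k) hCanti hT l
    have h7 : 0 ≤ C l * ∑ k ∈ Finset.range l, (B k - A k) := mul_nonneg (hC0 l) (hT l)
    have h9 : ∑ k ∈ Finset.range l, (Q k - P k)
        = ∑ k ∈ Finset.range l, Q k - ∑ k ∈ Finset.range l, P k := Finset.sum_sub_distrib _ _
    linarith
  -- conclude for l ≤ n
  have key : ∀ l : ℕ, l ≤ n →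
      ∏ k ∈ Finset.univ.filter (fun k : Fin n => (k : ℕ) < l), (1 + a k)
        ≤ ∏ k ∈ Finset.univ.filter (fun k : Fin n => (k : ℕ) < l), (1 + b k) := by
    intro l hl
    have hPeq : ∑ k ∈ Finset.range l, P k
        = Real.log (∏ k ∈ Finset.univ.filter (fun k : Fin n => (k : ℕ) < l), (1 + a k)) := by
      rw [Real.log_prod (fun i _ => by have := ha i; positivity), filter_sum_eq hl]
    have hQeq : ∑ k ∈ Finset.range l, Q k
        = Real.log (∏ k ∈ Finset.univ.filter (fun k : Fin n => (k : ℕ) < l), (1 + b k)) := by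
      rw [Real.log_prod (fun i _ => by have := hb i; positivity), filter_sum_eq hl]
    have hppos : 0 < ∏ k ∈ Finset.univ.filter (fun k : Fin n => (k : ℕ) < l), (1 + a k) :=
      Finset.prod_pos (fun i _ => by have := ha i; positivity)
    have hqpos : 0 < ∏ k ∈ Finset.univ.filter (fun k : Fin n => (k : ℕ) < l), (1 + b k) :=
      Finset.prod_pos (fun i _ => by have := hb i; positivity)
    have := hsum l
    rw [hPeq, hQeq] at this
    exact (Real.log_le_log_iff hppos hqpos).1 this
  intro l
  have hfe : (Finset.univ.filter (fun k : Fin n => (k : ℕ) < l))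
      = (Finset.univ.filter (fun k : Fin n => (k : ℕ) < min l n)) := by
    apply Finset.filter_congr
    intro k _
    simp [lt_min_iff, k.is_lt]
  rw [hfe]
  exact key (min l n) (min_le_right l n)

/-- `x` is log-majorized by `y`: for decreasing rearrangements (given by permutations
`σ`, `τ`), the partial products of `x` are dominated by those of `y`, with equality of the
full products. -/
def IsLogMaj {n : ℕ} (x y : Fin n → ℝ) : Prop :=
  ∃ σ τ : Equiv.Perm (Fin n), Antitone (x ∘ σ) ∧ Antitone (y ∘ τ) ∧
    (∀ l : ℕ, ∏ k ∈ Finset.univ.filter (fun k : Fin n => (k : ℕ) < l), x (σ k)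
        ≤ ∏ k ∈ Finset.univ.filter (fun k : Fin n => (k : ℕ) < l), y (τ k)) ∧
    ∏ k, x k = ∏ k, y k

/-- `x` is weakly log-majorized by `y`: the partial products of the decreasing
rearrangement of `x` are dominated by those of `y`. -/
def IsWeakLogMaj {n : ℕ} (x y : Fin n → ℝ) : Prop :=
  ∃ σ τ : Equiv.Perm (Fin n), Antitone (x ∘ σ) ∧ Antitone (y ∘ τ) ∧
    (∀ l : ℕ, ∏ k ∈ Finset.univ.filter (fun k : Fin n => (k : ℕ) < l), x (σ k)
        ≤ ∏ k ∈ Finset.univ.filter (fun k : Fin n => (k : ℕ) < l), y (τ k))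

/-- If the positive vectors satisfy `x ≺_log y`, then `(1+x) ≺_wlog (1+y)`;
in particular `∏ (1 + x k) ≤ ∏ (1 + y k)`. -/
theorem one_add_weakLogMaj_of_logMaj {n : ℕ} (x y : Fin n → ℝ)
    (hx : ∀ k, 0 < x k) (hy : ∀ k, 0 < y k) (hmaj : IsLogMaj x y) :
    IsWeakLogMaj (fun k => 1 + x k) (fun k => 1 + y k) ∧
      ∏ k, (1 + x k) ≤ ∏ k, (1 + y k) := by
  unfold IsLogMaj at hmaj
  unfold IsWeakLogMaj
  obtain ⟨σ, τ, hxσ, hyτ, hpart, _⟩ := hmaj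
  have main := main_aux (fun k => x (σ k)) (fun k => y (τ k))
    (fun k => hx _) (fun k => hy _) hxσ hpart
  constructor
  · refine ⟨σ, τ, ?_, ?_, fun l => main l⟩
    · intro i j h
      exact add_le_add_right (hxσ h) 1
    · intro i j h
      exact add_le_add_right (hyτ h) 1
  · have h := main n
    have huniv : Finset.univ.filter (fun k : Fin n => (k : ℕ) < n) = Finset.univ := by
      apply Finset.filter_true_of_mem
      intro k _
      exact k.is_lt
    rw [huniv] at h
    calc ∏ k, (1 + x k) = ∏ k, (1 + x (σ k)) := (Equiv.prod_comp σ fun k => 1 + x k).symm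
      _ ≤ ∏ k, (1 + y (τ k)) := h
      _ = ∏ k, (1 + y k) := Equiv.prod_comp τ fun k => 1 + y k
end

section
/- Let x and y be positive vectors in ℝⁿ with x log-majorized by y, and suppose y is not a permutation of x (the multisets {x_k} and {y_k} differ). Then ∏_{k=1}^n (1+x_k) < ∏_{k=1}^n (1+y_k) strictly. -/
open BigOperators

section AuxLogMaj

noncomputable def ffLM (t : ℝ) : ℝ := Real.log (1 + Real.exp t)
noncomputable def ggLM (t : ℝ) : ℝ := Real.exp t / (1 + Real.exp t)

lemma one_add_exp_pos_LM (t : ℝ) : 0 < 1 + Real.exp t := by positivity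

lemma hasDerivAt_ffLM (t : ℝ) : HasDerivAt ffLM (ggLM t) t :=
  ((Real.hasDerivAt_exp t).const_add 1).log (one_add_exp_pos_LM t).ne'

lemma ggLM_strictMono : StrictMono ggLM := by
  intro s t hst
  unfold ggLM
  rw [div_lt_div_iff₀ (one_add_exp_pos_LM s) (one_add_exp_pos_LM t)]
  have := Real.exp_lt_exp.2 hst
  nlinarith [Real.exp_pos s, Real.exp_pos t]

lemma tangent_lt_LM {u v : ℝ} (huv : u ≠ v) : ggLM u * (v - u) < ffLM v - ffLM u := by
  rcases lt_or_gt_of_ne huv with h | h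
  · obtain ⟨c, hc, hceq⟩ := exists_hasDerivAt_eq_slope ffLM ggLM h
      (fun x _ => (hasDerivAt_ffLM x).continuousAt.continuousWithinAt)
      (fun x _ => hasDerivAt_ffLM x)
    have hgc : ggLM u < ggLM c := ggLM_strictMono hc.1
    have hveq : ffLM v - ffLM u = ggLM c * (v - u) := by
      rw [hceq, div_mul_cancel₀ _ (sub_ne_zero.2 h.ne')]
    rw [hveq]
    exact mul_lt_mul_of_pos_right hgc (by linarith)
  · obtain ⟨c, hc, hceq⟩ := exists_hasDerivAt_eq_slope ffLM ggLM h
      (fun x _ => (hasDerivAt_ffLM x).continuousAt.continuousWithinAt)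
      (fun x _ => hasDerivAt_ffLM x)
    have hgc : ggLM c < ggLM u := ggLM_strictMono hc.2
    have hveq : ffLM u - ffLM v = ggLM c * (u - v) := by
      rw [hceq, div_mul_cancel₀ _ (sub_ne_zero.2 h.ne')]
    nlinarith [hveq]

lemma tangent_le_LM (u v : ℝ) : ggLM u * (v - u) ≤ ffLM v - ffLM u := by
  rcases eq_or_ne u v with rfl | h
  · simp
  · exact (tangent_lt_LM h).le

lemma abel_nonneg_LM (n : ℕ) (c d : ℕ → ℝ) (hc : ∀ i, i + 1 < n → c (i + 1) ≤ c i)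
    (hS : ∀ l, l ≤ n → 0 ≤ ∑ i ∈ Finset.range l, d i)
    (hSn : ∑ i ∈ Finset.range n, d i = 0) :
    0 ≤ ∑ i ∈ Finset.range n, c i * d i := by
  have hparts := Finset.sum_range_by_parts (M := ℝ) c d n
  simp only [smul_eq_mul] at hparts
  rw [hparts, hSn, mul_zero, zero_sub, neg_nonneg]
  apply Finset.sum_nonpos
  intro i hi
  rw [Finset.mem_range] at hi
  have h1 : i + 1 < n := by omega
  exact mul_nonpos_of_nonpos_of_nonneg (sub_nonpos.2 (hc i h1)) (hS (i + 1) (by omega))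

lemma sum_filter_eq_range_LM {n : ℕ} (h : Fin n → ℝ) (l : ℕ) (hl : l ≤ n) :
    ∑ k ∈ Finset.univ.filter (fun k : Fin n => (k : ℕ) < l), h k
      = ∑ i ∈ Finset.range l, (if hi : i < n then h ⟨i, hi⟩ else 0) := by
  rw [Finset.sum_filter]
  have e1 : ∀ k : Fin n, (if (k : ℕ) < l then h k else 0)
      = (fun i : ℕ => if i < l then (if hi : i < n then h ⟨i, hi⟩ else 0) else 0) (k : ℕ) := by
    intro k; simp [k.isLt]
  rw [Finset.sum_congr rfl (fun k _ => e1 k),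
    Fin.sum_univ_eq_sum_range
      (fun i : ℕ => if i < l then (if hi : i < n then h ⟨i, hi⟩ else 0) else 0) n,
    ← Finset.sum_filter]
  congr 1
  ext i
  simp only [Finset.mem_filter, Finset.mem_range]
  omega

end AuxLogMaj

/-- If the positive vectors satisfy `x ≺_log y` and `y` is not a permutation of `x`,
then `∏ (1 + x k) < ∏ (1 + y k)` strictly. -/
theorem prod_one_add_lt_of_logMaj {n : ℕ} (x y : Fin n → ℝ)
    (hx : ∀ k, 0 < x k) (hy : ∀ k, 0 < y k) (hmaj : IsLogMaj x y)
    (hne : Finset.univ.val.map x ≠ Finset.univ.val.map y) :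
    ∏ k, (1 + x k) < ∏ k, (1 + y k) := by
  obtain ⟨σ, τ, hσ, hτ, hpart, htot⟩ := hmaj
  set a : Fin n → ℝ := fun k => Real.log (x (σ k)) with ha_def
  set b : Fin n → ℝ := fun k => Real.log (y (τ k)) with hb_def
  have ha : Antitone a := fun i j hij =>
    (Real.log_le_log_iff (hx _) (hx _)).2 (hσ hij)
  -- ℕ-extensions
  set A : ℕ → ℝ := fun i => if hi : i < n then a ⟨i, hi⟩ else 0 with hA_def
  set B : ℕ → ℝ := fun i => if hi : i < n then b ⟨i, hi⟩ else 0 with hB_def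
  set C : ℕ → ℝ := fun i => if hi : i < n then ggLM (a ⟨i, hi⟩) else 0 with hC_def
  -- log of partial products = partial sums
  have hsumA : ∀ l, l ≤ n →
      ∑ i ∈ Finset.range l, A i
        = Real.log (∏ k ∈ Finset.univ.filter (fun k : Fin n => (k : ℕ) < l), x (σ k)) := by
    intro l hl
    rw [← sum_filter_eq_range_LM a l hl, Real.log_prod (fun k _ => (hx (σ k)).ne')]
  have hsumB : ∀ l, l ≤ n →
      ∑ i ∈ Finset.range l, B i
        = Real.log (∏ k ∈ Finset.univ.filter (fun k : Fin n => (k : ℕ) < l), y (τ k)) := by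
    intro l hl
    rw [← sum_filter_eq_range_LM b l hl, Real.log_prod (fun k _ => (hy (τ k)).ne')]
  have hprodxpos : ∀ l, (0:ℝ) < ∏ k ∈ Finset.univ.filter (fun k : Fin n => (k : ℕ) < l), x (σ k) :=
    fun l => Finset.prod_pos (fun k _ => hx (σ k))
  have hprodypos : ∀ l, (0:ℝ) < ∏ k ∈ Finset.univ.filter (fun k : Fin n => (k : ℕ) < l), y (τ k) :=
    fun l => Finset.prod_pos (fun k _ => hy (τ k))
  have hS : ∀ l, l ≤ n → 0 ≤ ∑ i ∈ Finset.range l, (B i - A i) := by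
    intro l hl
    rw [Finset.sum_sub_distrib, sub_nonneg, hsumA l hl, hsumB l hl]
    exact (Real.log_le_log_iff (hprodxpos l) (hprodypos l)).2 (hpart l)
  have hfilter_univ : (Finset.univ.filter (fun k : Fin n => (k : ℕ) < n)) =
      (Finset.univ : Finset (Fin n)) :=
    Finset.filter_true_of_mem (fun k _ => k.isLt)
  have hprodσ : ∏ k, x (σ k) = ∏ k, x k := Equiv.prod_comp σ x
  have hprodτ : ∏ k, y (τ k) = ∏ k, y k := Equiv.prod_comp τ y
  have hSn : ∑ i ∈ Finset.range n, (B i - A i) = 0 := by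
    rw [Finset.sum_sub_distrib, hsumA n le_rfl, hsumB n le_rfl, hfilter_univ,
      hprodσ, hprodτ, htot, sub_self]
  have hC : ∀ i, i + 1 < n → C (i + 1) ≤ C i := by
    intro i hi
    have hi' : i < n := by omega
    simp only [hC_def, dif_pos hi, dif_pos hi']
    exact ggLM_strictMono.monotone (ha (by exact Fin.mk_le_mk.2 (Nat.le_succ i)))
  have habel : 0 ≤ ∑ i ∈ Finset.range n, C i * (B i - A i) :=
    abel_nonneg_LM n C (fun i => B i - A i) hC hS hSn
  -- convert the abel sum to a Fin sum
  have hconv : ∑ i ∈ Finset.range n, C i * (B i - A i)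
      = ∑ k : Fin n, ggLM (a k) * (b k - a k) := by
    rw [← Fin.sum_univ_eq_sum_range (fun i : ℕ => C i * (B i - A i)) n]
    apply Finset.sum_congr rfl
    intro k _
    simp only [hC_def, hA_def, hB_def, dif_pos k.isLt]
  -- existence of an index where a ≠ b
  have hk0 : ∃ k : Fin n, a k ≠ b k := by
    by_contra hcon
    push_neg at hcon
    apply hne
    have hxy : ∀ k, x (σ k) = y (τ k) := by
      intro k
      have := congrArg Real.exp (hcon k)
      rwa [ha_def, hb_def, Real.exp_log (hx _), Real.exp_log (hy _)] at this
    calc Finset.univ.val.map x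
        = (Finset.univ.val.map σ).map x := by rw [Multiset.map_univ_val_equiv]
      _ = Finset.univ.val.map (fun k => x (σ k)) := by rw [Multiset.map_map]; rfl
      _ = Finset.univ.val.map (fun k => y (τ k)) := by
          congr 1; funext k; exact hxy k
      _ = (Finset.univ.val.map τ).map y := by rw [Multiset.map_map]; rfl
      _ = Finset.univ.val.map y := by rw [Multiset.map_univ_val_equiv]
  obtain ⟨k0, hk0⟩ := hk0
  -- strict sum inequality
  have hstrict : ∑ k : Fin n, (ffLM (a k) + ggLM (a k) * (b k - a k)) < ∑ k : Fin n, ffLM (b k) := by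
    apply Finset.sum_lt_sum
    · intro k _
      linarith [tangent_le_LM (a k) (b k)]
    · exact ⟨k0, Finset.mem_univ _, by linarith [tangent_lt_LM hk0]⟩
  have hmain : ∑ k : Fin n, ffLM (a k) < ∑ k : Fin n, ffLM (b k) := by
    have h1 : ∑ k : Fin n, (ffLM (a k) + ggLM (a k) * (b k - a k))
        = ∑ k : Fin n, ffLM (a k) + ∑ k : Fin n, ggLM (a k) * (b k - a k) :=
      Finset.sum_add_distrib
    rw [h1] at hstrict
    rw [hconv] at habel
    linarith
  -- identify ffLM (a k) with log (1 + x (σ k))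
  have hfa : ∀ k, ffLM (a k) = Real.log (1 + x (σ k)) := by
    intro k; unfold ffLM; rw [ha_def]; simp [Real.exp_log (hx _)]
  have hfb : ∀ k, ffLM (b k) = Real.log (1 + y (τ k)) := by
    intro k; unfold ffLM; rw [hb_def]; simp [Real.exp_log (hy _)]
  have hlog1 : ∑ k : Fin n, ffLM (a k) = Real.log (∏ k, (1 + x k)) := by
    rw [Real.log_prod (fun k _ => by have := hx k; intro h; linarith)]
    rw [Finset.sum_congr rfl (fun k _ => hfa k)]
    rw [← Equiv.sum_comp σ (fun k => Real.log (1 + x k))]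
  have hlog2 : ∑ k : Fin n, ffLM (b k) = Real.log (∏ k, (1 + y k)) := by
    rw [Real.log_prod (fun k _ => by have := hy k; intro h; linarith)]
    rw [Finset.sum_congr rfl (fun k _ => hfb k)]
    rw [← Equiv.sum_comp τ (fun k => Real.log (1 + y k))]
  rw [hlog1, hlog2] at hmain
  exact (Real.log_lt_log_iff (Finset.prod_pos (fun k _ => by have := hx k; linarith))
    (Finset.prod_pos (fun k _ => by have := hy k; linarith))).1 hmain
end

section
/- Let x and y be vectors with all entries in (0,1), x log-majorized by y, and y not a permutation of x. Then ∏_{k=1}^n (1 - x_k) > ∏_{k=1}^n (1 - y_k). -/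
open BigOperators

/-- Tangent-line inequality for `t ↦ -log(1 - e^t)`, strict version, written
multiplicatively. -/
lemma logmaj_key_lt {u v : ℝ} (hu0 : 0 < u) (hu1 : u < 1) (hv0 : 0 < v) (hv1 : v < 1)
    (huv : u ≠ v) :
    u / (1 - u) * (Real.log v - Real.log u) + Real.log (1 - v) < Real.log (1 - u) := by
  have h1u : (0:ℝ) < 1 - u := by linarith
  have h1v : (0:ℝ) < 1 - v := by linarith
  -- Step A : log(1-v) - log(1-u) < (u - v)/(1-u)
  have hA : Real.log (1 - v) - Real.log (1 - u) < (u - v) / (1 - u) := by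
    have hpos : (0:ℝ) < (1 - v) / (1 - u) := div_pos h1v h1u
    have hne : (1 - v) / (1 - u) ≠ 1 := by
      intro h
      have : 1 - v = 1 - u := by field_simp at h; linarith
      exact huv (by linarith)
    have := Real.log_lt_sub_one_of_pos hpos hne
    rw [Real.log_div (by linarith) (by linarith)] at this
    have : Real.log (1 - v) - Real.log (1 - u) < (1 - v) / (1 - u) - 1 := this
    have heq : (1 - v) / (1 - u) - 1 = (u - v) / (1 - u) := by field_simp; ring
    linarith [heq ▸ this]
  -- Step B : u * (log v - log u) ≤ v - u
  have hB : u * (Real.log v - Real.log u) ≤ v - u := by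
    have hdiv : (0:ℝ) < v / u := div_pos hv0 hu0
    have h1 : Real.log (v / u) ≤ v / u - 1 := Real.log_le_sub_one_of_pos hdiv
    rw [Real.log_div (ne_of_gt hv0) (ne_of_gt hu0)] at h1
    have h2 : u * (Real.log v - Real.log u) ≤ u * (v / u - 1) :=
      mul_le_mul_of_nonneg_left h1 (le_of_lt hu0)
    have h3 : u * (v / u - 1) = v - u := by field_simp
    linarith [h3 ▸ h2]
  have hB' : u / (1 - u) * (Real.log v - Real.log u) ≤ (v - u) / (1 - u) := by
    rw [div_mul_eq_mul_div, div_le_div_iff_of_pos_right h1u]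
    linarith
  have hsum : (v - u) / (1 - u) = -((u - v) / (1 - u)) := by ring
  linarith

lemma logmaj_key_le {u v : ℝ} (hu0 : 0 < u) (hu1 : u < 1) (hv0 : 0 < v) (hv1 : v < 1) :
    u / (1 - u) * (Real.log v - Real.log u) + Real.log (1 - v) ≤ Real.log (1 - u) := by
  rcases eq_or_ne u v with rfl | h
  · simp
  · exact (logmaj_key_lt hu0 hu1 hv0 hv1 h).le

/-- The core inequality, stated for `ℕ`-indexed sequences. -/
lemma logmaj_core (n : ℕ) (u v : ℕ → ℝ)
    (hu0 : ∀ i < n, 0 < u i) (hu1 : ∀ i < n, u i < 1)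
    (hv0 : ∀ i < n, 0 < v i) (hv1 : ∀ i < n, v i < 1)
    (hanti : ∀ i j, i ≤ j → j < n → u j ≤ u i)
    (hpart : ∀ l ≤ n, ∏ i ∈ Finset.range l, u i ≤ ∏ i ∈ Finset.range l, v i)
    (heq : ∏ i ∈ Finset.range n, u i = ∏ i ∈ Finset.range n, v i)
    (hex : ∃ j, j < n ∧ u j ≠ v j) :
    ∏ i ∈ Finset.range n, (1 - v i) < ∏ i ∈ Finset.range n, (1 - u i) := by
  obtain ⟨j, hjn, hj⟩ := hex
  set c : ℕ → ℝ := fun i => u i / (1 - u i) with hc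
  set d : ℕ → ℝ := fun i => Real.log (v i) - Real.log (u i) with hd
  -- positivity of partial products
  have hupos : ∀ l ≤ n, (0:ℝ) < ∏ i ∈ Finset.range l, u i := by
    intro l hl
    exact Finset.prod_pos fun i hi => hu0 i (lt_of_lt_of_le (Finset.mem_range.mp hi) hl)
  have hvpos : ∀ l ≤ n, (0:ℝ) < ∏ i ∈ Finset.range l, v i := by
    intro l hl
    exact Finset.prod_pos fun i hi => hv0 i (lt_of_lt_of_le (Finset.mem_range.mp hi) hl)
  -- G l := ∑_{i<l} d i = log of ratio of partial products
  have hG : ∀ l ≤ n, ∑ i ∈ Finset.range l, d i =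
      Real.log (∏ i ∈ Finset.range l, v i) - Real.log (∏ i ∈ Finset.range l, u i) := by
    intro l hl
    rw [Real.log_prod (fun i hi => ne_of_gt (hv0 i (lt_of_lt_of_le (Finset.mem_range.mp hi) hl))),
      Real.log_prod (fun i hi => ne_of_gt (hu0 i (lt_of_lt_of_le (Finset.mem_range.mp hi) hl))),
      ← Finset.sum_sub_distrib]
  have hGnonneg : ∀ l ≤ n, 0 ≤ ∑ i ∈ Finset.range l, d i := by
    intro l hl
    rw [hG l hl]
    have := Real.log_le_log (hupos l hl) (hpart l hl)
    linarith
  have hGn : ∑ i ∈ Finset.range n, d i = 0 := by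
    rw [hG n le_rfl, heq]; ring
  -- Abel summation: ∑ c i * d i ≥ 0
  have habel : 0 ≤ ∑ i ∈ Finset.range n, c i * d i := by
    have hby := Finset.sum_range_by_parts c d n
    simp only [smul_eq_mul] at hby
    rw [hby, hGn, mul_zero]
    have : ∑ i ∈ Finset.range (n - 1), (c (i + 1) - c i) * ∑ j ∈ Finset.range (i + 1), d j ≤ 0 := by
      apply Finset.sum_nonpos
      intro i hi
      have hin : i + 1 < n := by
        have := Finset.mem_range.mp hi; omega
      have hcmono : c (i + 1) ≤ c i := by
        have h1 : 0 < u i := hu0 i (by omega)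
        have h2 : u i < 1 := hu1 i (by omega)
        have h3 : 0 < u (i + 1) := hu0 (i + 1) hin
        have h4 : u (i + 1) < 1 := hu1 (i + 1) hin
        have h5 : u (i + 1) ≤ u i := hanti i (i + 1) (by omega) hin
        simp only [hc]
        rw [div_le_div_iff₀ (by linarith) (by linarith)]
        nlinarith
      have hGpos : 0 ≤ ∑ j ∈ Finset.range (i + 1), d j := hGnonneg (i + 1) (by omega)
      exact mul_nonpos_of_nonpos_of_nonneg (by linarith) hGpos
    linarith
  -- strict pointwise sum inequality
  have hsum : ∑ i ∈ Finset.range n, (Real.log (1 - v i) + c i * d i) <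
      ∑ i ∈ Finset.range n, Real.log (1 - u i) := by
    apply Finset.sum_lt_sum
    · intro i hi
      have hi' := Finset.mem_range.mp hi
      have := logmaj_key_le (hu0 i hi') (hu1 i hi') (hv0 i hi') (hv1 i hi')
      simp only [hc, hd]; linarith
    · refine ⟨j, Finset.mem_range.mpr hjn, ?_⟩
      have := logmaj_key_lt (hu0 j hjn) (hu1 j hjn) (hv0 j hjn) (hv1 j hjn) hj
      simp only [hc, hd]; linarith
  rw [Finset.sum_add_distrib] at hsum
  have hlog : ∑ i ∈ Finset.range n, Real.log (1 - v i) <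
      ∑ i ∈ Finset.range n, Real.log (1 - u i) := by linarith
  have hexp : ∀ (w : ℕ → ℝ), (∀ i < n, w i < 1) →
      ∏ i ∈ Finset.range n, (1 - w i) =
        Real.exp (∑ i ∈ Finset.range n, Real.log (1 - w i)) := by
    intro w hw
    rw [Real.exp_sum]
    exact Finset.prod_congr rfl fun i hi =>
      (Real.exp_log (by have := hw i (Finset.mem_range.mp hi); linarith)).symm
  rw [hexp u hu1, hexp v hv1]
  exact Real.exp_lt_exp.mpr hlog

/-- If the vectors with entries in `(0,1)` satisfy `x ≺_log y` and `y` is not a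
permutation of `x`, then `∏ (1 - x k) > ∏ (1 - y k)`. -/
theorem prod_one_sub_gt_of_logMaj {n : ℕ} (x y : Fin n → ℝ)
    (hx0 : ∀ k, 0 < x k) (hx1 : ∀ k, x k < 1)
    (hy0 : ∀ k, 0 < y k) (hy1 : ∀ k, y k < 1)
    (hmaj : IsLogMaj x y)
    (hne : Finset.univ.val.map x ≠ Finset.univ.val.map y) :
    ∏ k, (1 - y k) < ∏ k, (1 - x k) := by
  obtain ⟨σ, τ, hxa, hya, hp, hprod⟩ := hmaj
  set U : ℕ → ℝ := fun i => if h : i < n then x (σ ⟨i, h⟩) else 1/2 with hU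
  set V : ℕ → ℝ := fun i => if h : i < n then y (τ ⟨i, h⟩) else 1/2 with hV
  -- bridge between Fin-filter products and range products
  have bridge : ∀ (g : Fin n → ℝ) (G : ℕ → ℝ), (∀ (i : ℕ) (h : i < n), G i = g ⟨i, h⟩) →
      ∀ l : ℕ, ∏ k ∈ Finset.univ.filter (fun k : Fin n => (k : ℕ) < l), g k =
        ∏ i ∈ Finset.range (min l n), G i := by
    intro g G hg l
    rw [Finset.prod_filter]
    have h1 : ∏ k : Fin n, (if (k : ℕ) < l then g k else 1) =
        ∏ i ∈ Finset.range n, (if i < l then G i else 1) := by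
      rw [← Fin.prod_univ_eq_prod_range (fun i => if i < l then G i else 1) n]
      apply Finset.prod_congr rfl
      intro k _
      by_cases h : (k : ℕ) < l
      · simp [h, hg k k.isLt]
      · simp [h]
    rw [h1, ← Finset.prod_filter]
    congr 1
    ext i
    simp [Finset.mem_range, Finset.mem_filter]
    omega
  have hUeq : ∀ k : Fin n, U (k : ℕ) = x (σ k) := by
    intro k; simp [hU, k.isLt]
  have hVeq : ∀ k : Fin n, V (k : ℕ) = y (τ k) := by
    intro k; simp [hV, k.isLt]
  -- existence of an index where they differ
  have hex : ∃ j, j < n ∧ U j ≠ V j := by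
    by_contra h
    push_neg at h
    have hfun : ∀ k : Fin n, x (σ k) = y (τ k) := by
      intro k
      have := h (k : ℕ) k.isLt
      rwa [hUeq k, hVeq k] at this
    apply hne
    have h1 : Finset.univ.val.map x = Finset.univ.val.map (x ∘ σ) := by
      conv_lhs => rw [← Finset.map_univ_equiv σ]
      rw [Finset.map_val, Multiset.map_map]
      rfl
    have h2 : Finset.univ.val.map y = Finset.univ.val.map (y ∘ τ) := by
      conv_lhs => rw [← Finset.map_univ_equiv τ]
      rw [Finset.map_val, Multiset.map_map]
      rfl
    rw [h1, h2]
    congr 1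
    funext k
    exact hfun k
  -- transfer products over all of Fin n to range n
  have htrans : ∀ (f : Fin n → ℝ) (F : ℕ → ℝ), (∀ k : Fin n, F (k : ℕ) = f k) →
      ∏ k, f k = ∏ i ∈ Finset.range n, F i := by
    intro f F hf
    rw [← Fin.prod_univ_eq_prod_range F n]
    exact Finset.prod_congr rfl fun k _ => (hf k).symm
  have hxU : ∏ k, x k = ∏ i ∈ Finset.range n, U i := by
    rw [← Equiv.prod_comp σ x]
    exact htrans (fun k => x (σ k)) U hUeq
  have hyV : ∏ k, y k = ∏ i ∈ Finset.range n, V i := by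
    rw [← Equiv.prod_comp τ y]
    exact htrans (fun k => y (τ k)) V hVeq
  have hxU1 : ∏ k, (1 - x k) = ∏ i ∈ Finset.range n, (1 - U i) := by
    rw [← Equiv.prod_comp σ (fun k => 1 - x k)]
    exact htrans (fun k => 1 - x (σ k)) (fun i => 1 - U i) (fun k => by show 1 - U ↑k = 1 - x (σ k); rw [hUeq k])
  have hyV1 : ∏ k, (1 - y k) = ∏ i ∈ Finset.range n, (1 - V i) := by
    rw [← Equiv.prod_comp τ (fun k => 1 - y k)]
    exact htrans (fun k => 1 - y (τ k)) (fun i => 1 - V i) (fun k => by show 1 - V ↑k = 1 - y (τ k); rw [hVeq k])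
  rw [hxU1, hyV1]
  apply logmaj_core n U V
  · intro i hi; simp only [hU]; rw [dif_pos hi]; exact hx0 _
  · intro i hi; simp only [hU]; rw [dif_pos hi]; exact hx1 _
  · intro i hi; simp only [hV]; rw [dif_pos hi]; exact hy0 _
  · intro i hi; simp only [hV]; rw [dif_pos hi]; exact hy1 _
  · intro i jj hij hjn
    have hin : i < n := lt_of_le_of_lt hij hjn
    simp only [hU]; rw [dif_pos hjn, dif_pos hin]
    exact hxa (show (⟨i, hin⟩ : Fin n) ≤ ⟨jj, hjn⟩ from hij)
  · intro l hl
    have hb1 := bridge (fun k => x (σ k)) U (fun i h => hUeq ⟨i, h⟩) l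
    have hb2 := bridge (fun k => y (τ k)) V (fun i h => hVeq ⟨i, h⟩) l
    rw [min_eq_left hl] at hb1 hb2
    rw [← hb1, ← hb2]
    exact hp l
  · rw [← hxU, ← hyV]; exact hprod
  · exact hex
end

section
/- Let A be an n×n complex matrix with eigenvalues λ_1,...,λ_n (ordered with |λ_1| ≥ ... ≥ |λ_n|) and singular values σ_1 ≥ ... ≥ σ_n. Then ∏_{k=1}^n (1 + |λ_k|) ≤ ∏_{k=1}^n (1 + σ_k). -/
open Matrix BigOperators
open scoped ComplexOrder
open Polynomial

lemma charpoly_conj_unitary {n : ℕ} (A U : Matrix (Fin n) (Fin n) ℂ)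
    (hU : star U * U = 1) : (star U * A * U).charpoly = A.charpoly := by
  have hU' : U * star U = 1 := mul_eq_one_comm.mp hU
  have hmap : ((star U).map (C : ℂ →+* ℂ[X])) * (U.map C) = 1 := by
    rw [← Matrix.map_mul, hU, Matrix.map_one _ (map_zero _) (map_one _)]
  have hmap' : (U.map (C : ℂ →+* ℂ[X])) * ((star U).map C) = 1 := by
    rw [← Matrix.map_mul, hU', Matrix.map_one _ (map_zero _) (map_one _)]
  have key : charmatrix (star U * A * U) = ((star U).map C) * charmatrix A * (U.map C) := by
    rw [charmatrix, charmatrix, mul_sub, sub_mul]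
    congr 1
    · rw [mul_assoc, (Matrix.scalar_commute (X : ℂ[X]) (Commute.all _) (U.map C)).eq,
        ← mul_assoc, hmap, one_mul]
    · simp only [RingHom.mapMatrix_apply, Matrix.map_mul]
  rw [Matrix.charpoly, Matrix.charpoly, key, Matrix.det_mul, Matrix.det_mul,
    mul_comm ((star U).map C).det, mul_assoc, ← Matrix.det_mul, hmap, Matrix.det_one, mul_one]

lemma charpoly_blockTriangular {n : ℕ} {T : Matrix (Fin n) (Fin n) ℂ}
    (hT : T.BlockTriangular id) :
    T.charpoly = ∏ k, (X - C (T k k)) := by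
  rw [Matrix.charpoly, Matrix.det_of_upperTriangular hT.charmatrix]
  simp [charmatrix_apply_eq]

lemma normSq_det_le_one {n : ℕ} (M : Matrix (Fin n) (Fin n) ℂ)
    (h : ∀ j, ∑ i, Complex.normSq (M i j) ≤ 1) :
    Complex.normSq M.det ≤ 1 := by
  rcases Nat.eq_zero_or_pos n with hn | hn
  · subst hn
    simp [Matrix.det_fin_zero]
  set G := Mᴴ * M with hG
  have hPSD : G.PosSemidef := Matrix.posSemidef_conjTranspose_mul_self M
  have hH : G.IsHermitian := hPSD.isHermitian
  set eig := hH.eigenvalues with heig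
  have hnonneg : ∀ i, 0 ≤ eig i := hPSD.eigenvalues_nonneg
  -- normSq det = prod of eigenvalues
  have hdet : Complex.normSq M.det = ∏ i, eig i := by
    have h1 : G.det = (Complex.normSq M.det : ℂ) := by
      rw [hG, Matrix.det_mul, Matrix.det_conjTranspose, Complex.star_def, Complex.normSq_eq_conj_mul_self]
    have h2 : G.det = ((∏ i, eig i : ℝ) : ℂ) := by
      rw [hH.det_eq_prod_eigenvalues]
      push_cast
      rfl
    exact_mod_cast h1.symm.trans h2
  -- sum of eigenvalues = trace ≤ n
  have htr : ∑ i, eig i ≤ (n : ℝ) := by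
    have h1 : G.trace = ((∑ i, eig i : ℝ) : ℂ) := by
      conv_lhs => rw [hH.spectral_theorem]
      rw [Unitary.conjStarAlgAut_apply, Matrix.trace_mul_cycle]
      rw [(Matrix.mem_unitaryGroup_iff').mp (Matrix.IsHermitian.eigenvectorUnitary hH).2, one_mul,
        Matrix.trace_diagonal]
      push_cast
      rfl
    have h2 : (G.trace).re = ∑ j, ∑ i, Complex.normSq (M i j) := by
      rw [Matrix.trace]
      rw [Complex.re_sum]
      congr 1; funext j
      simp only [Matrix.diag_apply, hG, Matrix.mul_apply, Matrix.conjTranspose_apply]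
      rw [Complex.re_sum]
      congr 1; funext i
      rw [Complex.star_def, ← Complex.normSq_eq_conj_mul_self]
      simp
    have h3 : (G.trace).re = ∑ i, eig i := by rw [h1, Complex.ofReal_re]
    rw [← h3, h2]
    calc ∑ j, ∑ i, Complex.normSq (M i j) ≤ ∑ _j : Fin n, (1:ℝ) := by
          exact Finset.sum_le_sum fun j _ => h j
      _ = n := by simp
  -- AM-GM
  have hne : (n : ℝ) ≠ 0 := Nat.cast_ne_zero.mpr hn.ne'
  have hAMGM : ∏ i, (eig i) ^ ((n : ℝ)⁻¹) ≤ 1 := by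
    have := Real.geom_mean_le_arith_mean_weighted Finset.univ (fun _ => (n:ℝ)⁻¹) eig
      (fun i _ => by positivity) (by simp [Finset.sum_const, hne]) (fun i _ => hnonneg i)
    calc ∏ i, (eig i) ^ ((n : ℝ)⁻¹) ≤ ∑ i, (n:ℝ)⁻¹ * eig i := this
      _ = (n:ℝ)⁻¹ * ∑ i, eig i := by rw [Finset.mul_sum]
      _ ≤ (n:ℝ)⁻¹ * n := by
          apply mul_le_mul_of_nonneg_left htr (by positivity)
      _ = 1 := by field_simp
  have hprodnn : 0 ≤ ∏ i, eig i := Finset.prod_nonneg fun i _ => hnonneg i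
  have hkey : (∏ i, eig i) ^ ((n:ℝ)⁻¹) ≤ 1 := by
    rwa [← Real.finset_prod_rpow Finset.univ eig (fun i _ => hnonneg i)]
  have : ∏ i, eig i ≤ 1 := by
    have h4 : ((∏ i, eig i) ^ ((n:ℝ)⁻¹)) ^ (n:ℕ) ≤ 1 := pow_le_one₀ (Real.rpow_nonneg hprodnn _) hkey
    rwa [← Real.rpow_natCast ((∏ i, eig i) ^ ((n:ℝ)⁻¹)) n, ← Real.rpow_mul hprodnn,
      inv_mul_cancel₀ hne, Real.rpow_one] at h4
  rw [hdet]; exact this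

lemma normSq_det_le_prod {n : ℕ} (N : Matrix (Fin n) (Fin n) ℂ) :
    Complex.normSq N.det ≤ ∏ j, ∑ i, Complex.normSq (N i j) := by
  set S := fun j => ∑ i, Complex.normSq (N i j) with hS
  have hSnn : ∀ j, 0 ≤ S j := fun j => Finset.sum_nonneg fun i _ => Complex.normSq_nonneg _
  by_cases hz : ∀ j, 0 < S j
  · set D := Matrix.diagonal (fun j => ((Real.sqrt (S j))⁻¹ : ℂ)) with hD
    have happ : ∀ j, ∑ i, Complex.normSq ((N * D) i j) ≤ 1 := by
      intro j
      have : ∀ i, Complex.normSq ((N * D) i j) = Complex.normSq (N i j) * (S j)⁻¹ := by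
        intro i
        rw [Matrix.mul_diagonal, Complex.normSq_mul, map_inv₀ Complex.normSq,
          Complex.normSq_ofReal, Real.mul_self_sqrt (hSnn j)]
      rw [Finset.sum_congr rfl fun i _ => this i, ← Finset.sum_mul]
      show S j * (S j)⁻¹ ≤ 1
      rw [mul_inv_cancel₀ (hz j).ne']
    have hle := normSq_det_le_one (N * D) happ
    rw [Matrix.det_mul, Complex.normSq_mul, Matrix.det_diagonal] at hle
    have hdD : Complex.normSq (∏ j, ((Real.sqrt (S j))⁻¹ : ℂ)) = (∏ j, S j)⁻¹ := by
      rw [map_prod Complex.normSq, ← Finset.prod_inv_distrib]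
      congr 1; funext j
      rw [map_inv₀ Complex.normSq, Complex.normSq_ofReal, Real.mul_self_sqrt (hSnn j)]
    rw [hdD] at hle
    have hp : 0 < ∏ j, S j := Finset.prod_pos fun j _ => hz j
    have h2 := mul_le_mul_of_nonneg_right hle (le_of_lt hp)
    rwa [one_mul, mul_assoc, inv_mul_cancel₀ hp.ne', mul_one] at h2
  · push_neg at hz
    obtain ⟨j, hj⟩ := hz
    have hj0 : S j = 0 := le_antisymm hj (hSnn j)
    have hcol : ∀ i, N i j = 0 := by
      intro i
      have := (Finset.sum_eq_zero_iff_of_nonneg (fun i _ => Complex.normSq_nonneg (N i j))).mp hj0 i (Finset.mem_univ i)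
      exact Complex.normSq_eq_zero.mp this
    have : N.det = 0 := Matrix.det_eq_zero_of_column_eq_zero j hcol
    rw [this]
    simpa using Finset.prod_nonneg fun j _ => hSnn j

lemma abs_det_one_add_le_aux {n : ℕ} (C : Matrix (Fin n) (Fin n) ℂ) (eig : Fin n → ℝ)
    (hnonneg : ∀ i, 0 ≤ eig i)
    (hCC : Cᴴ * C = Matrix.diagonal (Complex.ofReal ∘ eig)) :
    ‖(1 + C).det‖ ≤ ∏ k, (1 + Real.sqrt (eig k)) := by
  have hcol : ∀ j, ∑ i, Complex.normSq ((1 + C) i j) ≤ (1 + Real.sqrt (eig j))^2 := by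
    intro j
    have hd : ∑ i, Complex.normSq (C i j) = eig j := by
      have h3 : (Cᴴ * C) j j = ((∑ i, Complex.normSq (C i j) : ℝ) : ℂ) := by
        rw [Matrix.mul_apply]
        push_cast
        congr 1; funext i
        rw [Matrix.conjTranspose_apply, Complex.star_def, ← Complex.normSq_eq_conj_mul_self]
      rw [hCC] at h3
      simp only [Matrix.diagonal_apply_eq, Function.comp_apply] at h3
      exact_mod_cast h3.symm
    have hsplit : ∑ i, Complex.normSq ((1 + C) i j)
        = 1 + 2 * (C j j).re + ∑ i, Complex.normSq (C i j) := by
      rw [show ∑ i, Complex.normSq ((1 + C) i j)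
          = ∑ i, (Complex.normSq (C i j) + (if i = j then 1 + 2 * (C j j).re else 0)) from ?_]
      · rw [Finset.sum_add_distrib, Finset.sum_ite_eq' Finset.univ j fun _ => 1 + 2*(C j j).re]
        simp [add_comm]
      · congr 1; funext i
        by_cases hij : i = j
        · subst hij
          simp only [Matrix.add_apply, Matrix.one_apply_eq, if_pos rfl]
          rw [Complex.normSq_add, Complex.normSq_one, one_mul, Complex.conj_re]
          simp only [if_true]
          ring
        · simp [Matrix.one_apply, hij]
    have hre : (C j j).re ≤ Real.sqrt (eig j) := by
      have h4 : Complex.normSq (C j j) ≤ eig j := by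
        rw [← hd]
        exact Finset.single_le_sum (f := fun i => Complex.normSq (C i j)) (fun i _ => Complex.normSq_nonneg _) (Finset.mem_univ j)
      calc (C j j).re ≤ ‖C j j‖ := Complex.re_le_norm _
        _ = Real.sqrt (Complex.normSq (C j j)) := Complex.norm_def _
        _ ≤ Real.sqrt (eig j) := Real.sqrt_le_sqrt h4
    rw [hsplit, hd]
    have hsq : (1 + Real.sqrt (eig j))^2 = 1 + 2 * Real.sqrt (eig j) + eig j := by
      have := Real.sq_sqrt (hnonneg j)
      nlinarith [Real.sqrt_nonneg (eig j)]
    nlinarith [hre]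
  have hmain := normSq_det_le_prod (1 + C)
  have hprod : ∏ j, ∑ i, Complex.normSq ((1 + C) i j) ≤ ∏ j, (1 + Real.sqrt (eig j))^2 :=
    Finset.prod_le_prod (fun j _ => Finset.sum_nonneg fun i _ => Complex.normSq_nonneg _)
      (fun j _ => hcol j)
  have hfin : Complex.normSq ((1 + C).det) ≤ (∏ j, (1 + Real.sqrt (eig j)))^2 := by
    rw [← Finset.prod_pow]
    exact le_trans hmain hprod
  have hnn : 0 ≤ ∏ j, (1 + Real.sqrt (eig j)) :=
    Finset.prod_nonneg fun j _ => by positivity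
  rw [Complex.norm_def]
  calc Real.sqrt (Complex.normSq ((1+C).det)) ≤ Real.sqrt ((∏ j, (1 + Real.sqrt (eig j)))^2) :=
        Real.sqrt_le_sqrt hfin
    _ = ∏ j, (1 + Real.sqrt (eig j)) := Real.sqrt_sq hnn

lemma abs_det_one_add_le {n : ℕ} (B : Matrix (Fin n) (Fin n) ℂ) :
    ‖(1 + B).det‖ ≤
      ∏ k, (1 + Real.sqrt ((Matrix.isHermitian_conjTranspose_mul_self B).eigenvalues k)) := by
  have hH := Matrix.isHermitian_conjTranspose_mul_self B
  have hnonneg : ∀ i, 0 ≤ hH.eigenvalues i :=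
    (Matrix.posSemidef_conjTranspose_mul_self B).eigenvalues_nonneg
  set U : Matrix (Fin n) (Fin n) ℂ :=
    (Matrix.IsHermitian.eigenvectorUnitary hH : Matrix (Fin n) (Fin n) ℂ) with hUdef
  have hU : star U * U = 1 :=
    Matrix.mem_unitaryGroup_iff'.mp (Matrix.IsHermitian.eigenvectorUnitary hH).2
  have hU' : U * star U = 1 := mul_eq_one_comm.mp hU
  have hCC : (star U * B * U)ᴴ * (star U * B * U)
      = Matrix.diagonal (Complex.ofReal ∘ hH.eigenvalues) := by
    have hsd : star U * (Bᴴ * B) * U = Matrix.diagonal (Complex.ofReal ∘ hH.eigenvalues) := by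
      have h := hH.conjStarAlgAut_star_eigenvectorUnitary
      rw [Unitary.conjStarAlgAut_star_apply] at h
      exact h
    calc (star U * B * U)ᴴ * (star U * B * U)
        = star U * Bᴴ * (U * star U) * B * U := by
          rw [Matrix.star_eq_conjTranspose]
          simp only [Matrix.conjTranspose_mul, Matrix.conjTranspose_conjTranspose]
          noncomm_ring
      _ = star U * (Bᴴ * B) * U := by rw [hU']; noncomm_ring
      _ = Matrix.diagonal (Complex.ofReal ∘ hH.eigenvalues) := hsd
  have hdet : ‖(1 + star U * B * U).det‖ = ‖(1 + B).det‖ := by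
    have h1 : star U * (1 + B) * U = 1 + star U * B * U := by
      rw [mul_add, mul_one, add_mul, hU]
    have h2 : ‖(star U).det * U.det‖ = 1 := by
      rw [← Matrix.det_mul, hU, Matrix.det_one, norm_one]
    rw [← h1, Matrix.det_mul, Matrix.det_mul]
    rw [show (star U).det * (1+B).det * U.det = ((star U).det * U.det) * (1+B).det by ring]
    rw [norm_mul, h2, one_mul]
  rw [← hdet]
  exact abs_det_one_add_le_aux (star U * B * U) hH.eigenvalues hnonneg hCC

lemma charpoly_isHermitian {n : ℕ} {H : Matrix (Fin n) (Fin n) ℂ} (hH : H.IsHermitian) :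
    H.charpoly = ∏ k, (X - C ((hH.eigenvalues k : ℝ) : ℂ)) := by
  have hU : star (hH.eigenvectorUnitary : Matrix (Fin n) (Fin n) ℂ)
      * (hH.eigenvectorUnitary : Matrix (Fin n) (Fin n) ℂ) = 1 :=
    Matrix.mem_unitaryGroup_iff'.mp hH.eigenvectorUnitary.2
  rw [← charpoly_conj_unitary H _ hU, show star (hH.eigenvectorUnitary : Matrix (Fin n) (Fin n) ℂ) * H
      * (hH.eigenvectorUnitary : Matrix (Fin n) (Fin n) ℂ) = Matrix.diagonal (Complex.ofReal ∘ hH.eigenvalues)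
      from by
        have h := hH.conjStarAlgAut_star_eigenvectorUnitary
        rw [Unitary.conjStarAlgAut_star_apply] at h
        exact h,
    charpoly_blockTriangular (Matrix.blockTriangular_diagonal _)]
  simp [Matrix.diagonal_apply_eq]

lemma eigenvalues_multiset_eq {n : ℕ} {H₁ H₂ : Matrix (Fin n) (Fin n) ℂ}
    (hH₁ : H₁.IsHermitian) (hH₂ : H₂.IsHermitian) (h : H₁.charpoly = H₂.charpoly) :
    Finset.univ.val.map hH₁.eigenvalues = Finset.univ.val.map hH₂.eigenvalues := by
  have key : ∀ (H : Matrix (Fin n) (Fin n) ℂ) (hH : H.IsHermitian),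
      H.charpoly.roots = Finset.univ.val.map (fun k => ((hH.eigenvalues k : ℝ) : ℂ)) := by
    intro H hH
    rw [charpoly_isHermitian hH, Finset.prod_eq_multiset_prod,
      show (Multiset.map (fun k => X - C ((hH.eigenvalues k : ℝ) : ℂ)) Finset.univ.val)
        = Multiset.map (fun a : ℂ => X - C a)
            (Multiset.map (fun k => ((hH.eigenvalues k : ℝ) : ℂ)) Finset.univ.val) from by
        rw [Multiset.map_map]; rfl,
      Polynomial.roots_multiset_prod_X_sub_C]
  have h2 : Finset.univ.val.map (fun k => ((hH₁.eigenvalues k : ℝ) : ℂ))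
      = Finset.univ.val.map (fun k => ((hH₂.eigenvalues k : ℝ) : ℂ)) := by
    rw [← key H₁ hH₁, ← key H₂ hH₂, h]
  have h3 : Multiset.map (fun x : ℝ => (x : ℂ)) (Finset.univ.val.map hH₁.eigenvalues)
      = Multiset.map (fun x : ℝ => (x : ℂ)) (Finset.univ.val.map hH₂.eigenvalues) := by
    rw [Multiset.map_map, Multiset.map_map]
    exact h2
  exact Multiset.map_injective Complex.ofReal_injective h3

lemma prod_eigenvalues_congr {n : ℕ} {H₁ H₂ : Matrix (Fin n) (Fin n) ℂ}
    (hH₁ : H₁.IsHermitian) (hH₂ : H₂.IsHermitian) (h : H₁.charpoly = H₂.charpoly)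
    (f : ℝ → ℝ) : ∏ k, f (hH₁.eigenvalues k) = ∏ k, f (hH₂.eigenvalues k) := by
  have h3 := eigenvalues_multiset_eq hH₁ hH₂ h
  rw [Finset.prod_eq_multiset_prod, Finset.prod_eq_multiset_prod,
    show (Multiset.map (fun k => f (hH₁.eigenvalues k)) Finset.univ.val)
      = Multiset.map f (Multiset.map hH₁.eigenvalues Finset.univ.val) from by
      rw [Multiset.map_map]; rfl,
    show (Multiset.map (fun k => f (hH₂.eigenvalues k)) Finset.univ.val)
      = Multiset.map f (Multiset.map hH₂.eigenvalues Finset.univ.val) from by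
      rw [Multiset.map_map]; rfl,
    h3]

-- a unitary matrix with prescribed first column
lemma exists_unitary_first_col {n : ℕ} (w : EuclideanSpace ℂ (Fin (n+1))) (hw : ‖w‖ = 1) :
    ∃ U : Matrix (Fin (n+1)) (Fin (n+1)) ℂ, star U * U = 1 ∧ ∀ k, U k 0 = w k := by
  have hcard : Module.finrank ℂ (EuclideanSpace ℂ (Fin (n+1))) = Fintype.card (Fin (n+1)) := by
    simp [finrank_euclideanSpace]
  have horth : Orthonormal ℂ (({0} : Set (Fin (n+1))).restrict (fun _ => w)) := by
    constructor
    · intro i; exact hw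
    · intro i j hij
      exfalso
      apply hij
      have hi := i.2; have hj := j.2
      simp only [Set.mem_singleton_iff] at hi hj
      exact Subtype.ext (hi.trans hj.symm)
  obtain ⟨b, hb⟩ := Orthonormal.exists_orthonormalBasis_extension_of_card_eq hcard horth
  refine ⟨Matrix.of fun i j => (b j : EuclideanSpace ℂ (Fin (n+1))) i, ?_, ?_⟩
  · ext i j
    simp only [Matrix.mul_apply, Matrix.star_apply, Matrix.of_apply]
    have := orthonormal_iff_ite.mp b.orthonormal i j
    rw [PiLp.inner_apply] at this
    simp only [RCLike.inner_apply] at this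
    calc ∑ k, star ((b i : EuclideanSpace ℂ (Fin (n+1))) k) * (b j : EuclideanSpace ℂ (Fin (n+1))) k
        = if i = j then 1 else 0 := by
          rw [← this]; exact Finset.sum_congr rfl fun k _ => mul_comm _ _
      _ = (1 : Matrix (Fin (n+1)) (Fin (n+1)) ℂ) i j := (Matrix.one_apply).symm
  · intro k
    simp only [Matrix.of_apply]
    rw [hb 0 rfl]

lemma schur_triangulation : ∀ (n : ℕ) (A : Matrix (Fin n) (Fin n) ℂ),
    ∃ U : Matrix (Fin n) (Fin n) ℂ, star U * U = 1 ∧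
      (star U * A * U).BlockTriangular (id : Fin n → Fin n) := by
  intro n
  induction n with
  | zero =>
    intro A
    exact ⟨1, by simp, fun i j _ => i.elim0⟩
  | succ n ih =>
    intro A
    -- eigenvector
    obtain ⟨μ, hμ⟩ := Module.End.exists_eigenvalue (Matrix.mulVecLin A)
    obtain ⟨v, hv⟩ := hμ.exists_hasEigenvector
    have hv0 : v ≠ 0 := hv.right
    have hAv : A *ᵥ v = μ • v := hv.apply_eq_smul
    -- normalized eigenvector in EuclideanSpace
    set v' : EuclideanSpace ℂ (Fin (n+1)) := (WithLp.equiv 2 _).symm v with hv'def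
    have hv'0 : v' ≠ 0 := by
      simp only [hv'def, ne_eq]
      intro h
      exact hv0 (by simpa using congrArg (WithLp.equiv 2 _) h)
    set w : EuclideanSpace ℂ (Fin (n+1)) := (‖v'‖⁻¹ : ℂ) • v' with hwdef
    have hw1 : ‖w‖ = 1 := norm_smul_inv_norm hv'0
    obtain ⟨U, hU, hUcol⟩ := exists_unitary_first_col w hw1
    have hU' : U * star U = 1 := mul_eq_one_comm.mp hU
    -- the first column of U is an eigenvector of A
    have hAU0 : ∀ k, (A * U) k 0 = μ * U k 0 := by
      intro k
      have hcol : (fun l => U l 0) = (‖v'‖⁻¹ : ℂ) • v := by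
        funext l
        rw [hUcol l]
        rfl
      have : (A *ᵥ fun l => U l 0) = μ • fun l => U l 0 := by
        rw [hcol, Matrix.mulVec_smul, hAv, smul_comm]
      calc (A * U) k 0 = (A *ᵥ fun l => U l 0) k := by
            rw [Matrix.mul_apply, Matrix.mulVec]
            rfl
        _ = μ * U k 0 := by rw [this]; rfl
    set B : Matrix (Fin (n+1)) (Fin (n+1)) ℂ := star U * A * U with hBdef
    have hB0 : ∀ i : Fin n, B i.succ 0 = 0 := by
      intro i
      have : B i.succ 0 = μ * (star U * U) i.succ 0 := by
        rw [hBdef, mul_assoc, Matrix.mul_apply, Matrix.mul_apply, Finset.mul_sum]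
        congr 1; funext k
        rw [hAU0 k]
        ring
      rw [this, hU, Matrix.one_apply_ne (Fin.succ_ne_zero i)]
      ring
    -- inductive step on the lower-right block
    set A₁ : Matrix (Fin n) (Fin n) ℂ := B.submatrix Fin.succ Fin.succ with hA₁def
    obtain ⟨V₁, hV₁, hT₁⟩ := ih A₁
    set V : Matrix (Fin (n+1)) (Fin (n+1)) ℂ := Matrix.of fun i j =>
      Fin.cases (Fin.cases (1:ℂ) (fun _ => 0) j) (fun i' => Fin.cases 0 (fun j' => V₁ i' j') j) i
      with hVdef
    have hV_zz : V 0 0 = (1:ℂ) := by simp [hVdef]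
    have hV_zs : ∀ j' : Fin n, V 0 j'.succ = 0 := by intro j'; simp [hVdef]
    have hV_sz : ∀ i' : Fin n, V i'.succ 0 = 0 := by intro i'; simp [hVdef]
    have hV_ss : ∀ i' j' : Fin n, V i'.succ j'.succ = V₁ i' j' := by intro i' j'; simp [hVdef]
    have hVU : star V * V = 1 := by
      ext i j
      rw [Matrix.mul_apply, Fin.sum_univ_succ]
      simp only [Matrix.star_apply]
      induction i using Fin.cases with
      | zero =>
        induction j using Fin.cases with
        | zero => simp [hV_zz, hV_sz]
        | succ j' =>
          simp [hV_zz, hV_zs, hV_sz, Matrix.one_apply_ne (Fin.succ_ne_zero j').symm]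
      | succ i' =>
        induction j using Fin.cases with
        | zero => simp [hV_zz, hV_zs, hV_sz, Matrix.one_apply_ne (Fin.succ_ne_zero i')]
        | succ j' =>
          have h1 := congrFun (congrFun hV₁ i') j'
          rw [Matrix.mul_apply] at h1
          simp only [Matrix.star_apply] at h1
          calc star (V 0 i'.succ) * V 0 j'.succ
                + ∑ k : Fin n, star (V k.succ i'.succ) * V k.succ j'.succ
              = ∑ k : Fin n, star (V₁ k i') * V₁ k j' := by
                rw [hV_zs i', hV_zs j']
                simp only [hV_ss]
                simp
            _ = (1 : Matrix (Fin n) (Fin n) ℂ) i' j' := h1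
            _ = (1 : Matrix (Fin (n+1)) (Fin (n+1)) ℂ) i'.succ j'.succ := by
                rw [Matrix.one_apply, Matrix.one_apply]
                simp [Fin.succ_inj]
    refine ⟨U * V, ?_, ?_⟩
    · rw [Matrix.star_mul, mul_assoc, ← mul_assoc (star U), hU, one_mul, hVU]
    · have hconj : star (U * V) * A * (U * V) = star V * B * V := by
        rw [Matrix.star_mul, hBdef]
        noncomm_ring
      rw [hconj]
      -- entries of star V * B * V
      have hBV_0 : ∀ k, (B * V) k 0 = B k 0 := by
        intro k
        rw [Matrix.mul_apply, Fin.sum_univ_succ, hV_zz]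
        simp [hV_sz]
      have hBV_s : ∀ (k : Fin (n+1)) (j' : Fin n), (B * V) k j'.succ = ∑ l, B k l.succ * V₁ l j' := by
        intro k j'
        rw [Matrix.mul_apply, Fin.sum_univ_succ, hV_zs]
        simp [hV_ss]
      intro i j hij
      induction i using Fin.cases with
      | zero => exact absurd hij (Fin.not_lt_zero _)
      | succ i' =>
        induction j using Fin.cases with
        | zero =>
          rw [mul_assoc, Matrix.mul_apply, Fin.sum_univ_succ]
          simp only [Matrix.star_apply]
          rw [hV_zs i']
          calc star (0:ℂ) * (B * V) 0 0
                + ∑ k : Fin n, star (V k.succ i'.succ) * (B * V) k.succ 0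
              = ∑ k : Fin n, star (V₁ k i') * B k.succ 0 := by
                simp only [hV_ss, hBV_0]
                simp
            _ = 0 := by
                apply Finset.sum_eq_zero
                intro k _
                rw [hB0 k]
                ring
        | succ j' =>
          have hlt : j' < i' := by
            simpa [Fin.succ_lt_succ_iff] using hij
          have htri := hT₁ (show (id j' : Fin n) < id i' from hlt)
          rw [mul_assoc, Matrix.mul_apply, Fin.sum_univ_succ]
          simp only [Matrix.star_apply]
          rw [hV_zs i']
          calc star (0:ℂ) * (B * V) 0 j'.succ
                + ∑ k : Fin n, star (V k.succ i'.succ) * (B * V) k.succ j'.succ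
              = ∑ k : Fin n, star (V₁ k i') * ∑ l, A₁ k l * V₁ l j' := by
                simp only [hV_ss, hBV_s, hA₁def, Matrix.submatrix_apply]
                simp
            _ = (star V₁ * A₁ * V₁) i' j' := by
                rw [mul_assoc, Matrix.mul_apply]
                simp [Matrix.mul_apply, Matrix.star_apply]
            _ = 0 := htri

/-- For an `n×n` complex matrix `A` with eigenvalues `λ` (the roots of its characteristic
polynomial, with multiplicity) and singular values `σ k`,
`∏ (1 + |λ k|) ≤ ∏ (1 + σ k)`. -/
theorem prod_one_add_abs_eigenvalues_le (n : ℕ) (A : Matrix (Fin n) (Fin n) ℂ)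
    (σ : Fin n → ℝ)
    (hσ : ∀ k, σ k = Real.sqrt ((Matrix.isHermitian_conjTranspose_mul_self A).eigenvalues k)) :
    (A.charpoly.roots.map (fun z => 1 + ‖z‖)).prod ≤ ∏ k, (1 + σ k) := by
  obtain ⟨U, hU, hT⟩ := schur_triangulation n A
  have hU' : U * star U = 1 := mul_eq_one_comm.mp hU
  set T : Matrix (Fin n) (Fin n) ℂ := star U * A * U with hTdef
  -- roots of the charpoly are the diagonal entries of T
  have hroots : A.charpoly.roots = Finset.univ.val.map (fun k => T k k) := by
    rw [← charpoly_conj_unitary A U hU, ← hTdef, charpoly_blockTriangular hT,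
      Finset.prod_eq_multiset_prod,
      show (Multiset.map (fun k => X - C (T k k)) Finset.univ.val)
        = Multiset.map (fun a : ℂ => X - C a) (Multiset.map (fun k => T k k) Finset.univ.val) from
        by rw [Multiset.map_map]; rfl,
      Polynomial.roots_multiset_prod_X_sub_C]
  have hLHS : (A.charpoly.roots.map (fun z => 1 + ‖z‖)).prod
      = ∏ k, (1 + ‖T k k‖) := by
    rw [hroots, Multiset.map_map, Finset.prod_eq_multiset_prod]
    rfl
  -- phase trick
  set θ : Fin n → ℂ := fun k => if T k k = 0 then 1 else (starRingEnd ℂ) (T k k) / ‖T k k‖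
    with hθdef
  have hθ1 : ∀ k, star (θ k) * θ k = 1 := by
    intro k
    rw [hθdef]
    by_cases h : T k k = 0
    · simp [h]
    · simp only [if_neg h]
      have habs : ‖(starRingEnd ℂ) (T k k) / (norm (T k k) : ℂ)‖ = 1 := by
        rw [norm_div, Complex.norm_conj, Complex.norm_real, norm_norm,
          div_self (norm_ne_zero_iff.mpr h)]
      rw [Complex.star_def, ← Complex.normSq_eq_conj_mul_self, ← Complex.sq_norm, habs]
      norm_num
  have hθT : ∀ k, θ k * T k k = (‖T k k‖ : ℂ) := by
    intro k
    rw [hθdef]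
    by_cases h : T k k = 0
    · simp [h]
    · simp only [if_neg h]
      rw [div_mul_eq_mul_div, mul_comm, Complex.mul_conj]
      rw [Complex.normSq_eq_norm_sq]
      push_cast
      rw [pow_two, mul_div_assoc, div_self, mul_one]
      exact_mod_cast norm_ne_zero_iff.mpr h
  set B : Matrix (Fin n) (Fin n) ℂ := Matrix.diagonal θ * T with hBdef
  have hBtri : B.BlockTriangular id := by
    intro i j hij
    rw [hBdef, Matrix.diagonal_mul, hT hij, mul_zero]
  have hdet1B : ‖(1 + B).det‖ = ∏ k, (1 + ‖T k k‖) := by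
    have h1B : (1 + B).BlockTriangular id := Matrix.blockTriangular_one.add hBtri
    rw [Matrix.det_of_upperTriangular h1B]
    have : ∀ k, (1 + B) k k = ((1 + ‖T k k‖ : ℝ) : ℂ) := by
      intro k
      rw [Matrix.add_apply, Matrix.one_apply_eq, hBdef, Matrix.diagonal_mul, hθT k]
      push_cast
      rfl
    rw [Finset.prod_congr rfl fun k _ => this k, ← Complex.ofReal_prod, Complex.norm_real, Real.norm_eq_abs,
      abs_of_nonneg]
    exact Finset.prod_nonneg fun k _ => by positivity
  -- charpoly of BᴴB equals charpoly of AᴴA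
  have hBB : Bᴴ * B = star U * (Aᴴ * A) * U := by
    have h1 : Bᴴ * B = Tᴴ * T := by
      rw [hBdef, Matrix.conjTranspose_mul, Matrix.diagonal_conjTranspose]
      calc Tᴴ * Matrix.diagonal (star θ) * (Matrix.diagonal θ * T)
          = Tᴴ * ((Matrix.diagonal (star θ) * Matrix.diagonal θ) * T) := by noncomm_ring
        _ = Tᴴ * T := by
            rw [Matrix.diagonal_mul_diagonal,
              show (fun k => (star θ) k * θ k) = fun _ => (1:ℂ) from funext fun k => hθ1 k,
              Matrix.diagonal_one, one_mul]
    rw [h1, hTdef]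
    calc (star U * A * U)ᴴ * (star U * A * U)
        = star U * Aᴴ * (U * star U) * A * U := by
          rw [Matrix.star_eq_conjTranspose]
          simp only [Matrix.conjTranspose_mul, Matrix.conjTranspose_conjTranspose]
          noncomm_ring
      _ = star U * (Aᴴ * A) * U := by rw [hU']; noncomm_ring
  have hcharBB : (Bᴴ * B).charpoly = (Aᴴ * A).charpoly := by
    rw [hBB]
    exact charpoly_conj_unitary (Aᴴ * A) U hU
  have htransfer := prod_eigenvalues_congr (Matrix.isHermitian_conjTranspose_mul_self B)
    (Matrix.isHermitian_conjTranspose_mul_self A) hcharBB (fun x => 1 + Real.sqrt x)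
  calc (A.charpoly.roots.map (fun z => 1 + ‖z‖)).prod
      = ‖(1 + B).det‖ := by rw [hLHS, hdet1B]
    _ ≤ ∏ k, (1 + Real.sqrt ((Matrix.isHermitian_conjTranspose_mul_self B).eigenvalues k)) :=
        abs_det_one_add_le B
    _ = ∏ k, (1 + Real.sqrt ((Matrix.isHermitian_conjTranspose_mul_self A).eigenvalues k)) := htransfer
    _ = ∏ k, (1 + σ k) := by
        apply Finset.prod_congr rfl
        intro k _
        rw [hσ k]
end

section
/- Let Z_1,...,Z_m be n×n positive semidefinite matrices where Z_i has eigenvalues r_{i1},...,r_{in} all in [0,1). Let U be unitary and w_1,...,w_m > 0 with Σ w_i = 1. Then det(I - (Σ_i w_i Z_i)²)/|det(I - U Σ_i w_i Z_i)|² ≤ ∏_{k=1}^n ∏_{i=1}^m ((1+r_{ik})/(1-r_{ik}))^{w_i}. -/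
open Matrix BigOperators
open scoped ComplexOrder

lemma mh_norm_mulVec (n : ℕ) (V : Matrix (Fin n) (Fin n) ℂ) (hV : V ∈ Matrix.unitaryGroup (Fin n) ℂ)
    (y : Fin n → ℂ) : ∑ l, Complex.normSq ((V *ᵥ y) l) = ∑ l, Complex.normSq (y l) := by
  have h : star (V *ᵥ y) ⬝ᵥ (V *ᵥ y) = star y ⬝ᵥ y := by
    rw [Matrix.star_mulVec, Matrix.dotProduct_mulVec, Matrix.vecMul_vecMul,
      ← Matrix.star_eq_conjTranspose, Matrix.mem_unitaryGroup_iff'.mp hV, Matrix.vecMul_one]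
  have h2 : ∀ v : Fin n → ℂ, star v ⬝ᵥ v = ((∑ l, Complex.normSq (v l) : ℝ) : ℂ) := by
    intro v
    simp [dotProduct, Complex.normSq_eq_conj_mul_self]
  rw [h2, h2] at h
  exact_mod_cast h

lemma mh_lemG (n : ℕ) (V : Matrix (Fin n) (Fin n) ℂ) (hV : V ∈ Matrix.unitaryGroup (Fin n) ℂ)
    (d : Fin n → ℝ) (h0 : ∀ j, 0 ≤ d j) (h1 : ∀ j, d j ≤ 1) (k : Fin n) (hk : d k = 0)
    (y : Fin n → ℂ) (c : ℂ)
    (hy : (V - Matrix.diagonal (fun j => (d j : ℂ))) *ᵥ y = c • (Pi.single k 1 : Fin n → ℂ)) :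
    Complex.normSq (y k) ≤ Complex.normSq c := by
  set D := Matrix.diagonal (fun j => (d j : ℂ)) with hD
  have hz : V *ᵥ y = c • (Pi.single k 1 : Fin n → ℂ) + D *ᵥ y := by
    rw [← hy, Matrix.sub_mulVec]; abel
  have hnorm := mh_norm_mulVec n V hV y
  rw [hz] at hnorm
  have hDy : ∀ l, (D *ᵥ y) l = (d l : ℂ) * y l := by
    intro l; rw [hD, Matrix.mulVec_diagonal]
  have hcomp : ∀ l, (c • (Pi.single k 1 : Fin n → ℂ) + D *ᵥ y) l
      = (if l = k then c else 0) + (d l : ℂ) * y l := by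
    intro l
    simp [hDy, Pi.single_apply]
  -- value at k: c + 0 = c
  have hvk : (c • (Pi.single k 1 : Fin n → ℂ) + D *ᵥ y) k = c := by
    rw [hcomp k, if_pos rfl, hk]; simp
  -- sum identity
  have hsum : ∑ l, Complex.normSq ((c • (Pi.single k 1 : Fin n → ℂ) + D *ᵥ y) l)
      = Complex.normSq c + ∑ l ∈ Finset.univ.erase k, Complex.normSq ((d l : ℂ) * y l) := by
    rw [← Finset.add_sum_erase _ _ (Finset.mem_univ k), hvk]
    congr 1
    apply Finset.sum_congr rfl
    intro l hl
    rw [hcomp l, if_neg (Finset.mem_erase.mp hl).1, zero_add]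
  rw [hsum] at hnorm
  have hbound : ∑ l ∈ Finset.univ.erase k, Complex.normSq ((d l : ℂ) * y l)
      ≤ ∑ l ∈ Finset.univ.erase k, Complex.normSq (y l) := by
    apply Finset.sum_le_sum
    intro l _
    rw [Complex.normSq_mul]
    have : Complex.normSq ((d l : ℂ)) ≤ 1 := by
      rw [Complex.normSq_ofReal]
      nlinarith [h0 l, h1 l]
    nlinarith [Complex.normSq_nonneg (y l)]
  have hy_split : ∑ l, Complex.normSq (y l)
      = Complex.normSq (y k) + ∑ l ∈ Finset.univ.erase k, Complex.normSq (y l) := by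
    rw [← Finset.add_sum_erase _ _ (Finset.mem_univ k)]
  linarith [hnorm, hbound, hy_split ▸ hnorm]

lemma mh_abs_det_unitary (n : ℕ) (V : Matrix (Fin n) (Fin n) ℂ)
    (hV : V ∈ Matrix.unitaryGroup (Fin n) ℂ) : ‖V.det‖ = 1 := by
  have h : V.det * star V.det = 1 := by
    have := Matrix.mem_unitaryGroup_iff.mp hV
    calc V.det * star V.det = (V * star V).det := by
          rw [Matrix.det_mul, Matrix.star_eq_conjTranspose, Matrix.det_conjTranspose]
      _ = 1 := by rw [this, Matrix.det_one]
  have h2 : ‖V.det‖ * ‖V.det‖ = 1 := by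
    have := congrArg (‖·‖) h
    simp only [norm_mul, norm_one, Complex.star_def, Complex.norm_conj] at this
    exact this
  nlinarith [norm_nonneg V.det]

lemma mh_det_update (n : ℕ) (A : Matrix (Fin n) (Fin n) ℂ) (k : Fin n) (c : ℂ) :
    (A.updateCol k (fun i => A i k - c * (Pi.single k 1 : Fin n → ℂ) i)).det
      = A.det - c * (A.updateCol k (Pi.single k 1 : Fin n → ℂ)).det := by
  have : (fun i => A i k - c * (Pi.single k 1 : Fin n → ℂ) i)
      = (fun i => A i k) + (-c) • (Pi.single k 1 : Fin n → ℂ) := by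
    funext i; simp; ring
  rw [this, Matrix.det_updateCol_add, Matrix.det_updateCol_smul,
    Matrix.updateCol_eq_self]
  ring

lemma mh_entry (n : ℕ) (M : Matrix (Fin n) (Fin n) ℂ) (c : Fin n → ℝ) (k : Fin n) :
    (star M * (Matrix.diagonal (fun j => (c j : ℂ)) * M)) k k
      = ((∑ j, c j * Complex.normSq (M j k) : ℝ) : ℂ) := by
  rw [Matrix.mul_apply]
  push_cast
  apply Finset.sum_congr rfl
  intro j _
  rw [Matrix.star_apply, Matrix.diagonal_mul]
  calc star (M j k) * ((c j : ℂ) * M j k)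
      = (c j : ℂ) * ((starRingEnd ℂ) (M j k) * M j k) := by rw [Complex.star_def]; ring
    _ = (c j : ℂ) * (Complex.normSq (M j k) : ℂ) := by rw [← Complex.normSq_eq_conj_mul_self]

lemma mh_col_sum (n : ℕ) (M : Matrix (Fin n) (Fin n) ℂ)
    (hM : M ∈ Matrix.unitaryGroup (Fin n) ℂ) (k : Fin n) :
    ∑ j, Complex.normSq (M j k) = 1 := by
  have h := Matrix.mem_unitaryGroup_iff'.mp hM
  have h2 := congrFun (congrFun h k) k
  rw [Matrix.mul_apply, Matrix.one_apply_eq] at h2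
  have h3 : ∀ j, (star M) k j * M j k = (Complex.normSq (M j k) : ℂ) := by
    intro j
    rw [Matrix.star_eq_conjTranspose, Matrix.conjTranspose_apply]
    exact (Complex.normSq_eq_conj_mul_self).symm
  rw [Finset.sum_congr rfl (fun j _ => h3 j)] at h2
  exact_mod_cast h2

lemma mh_row_sum (n : ℕ) (M : Matrix (Fin n) (Fin n) ℂ)
    (hM : M ∈ Matrix.unitaryGroup (Fin n) ℂ) (j : Fin n) :
    ∑ k, Complex.normSq (M j k) = 1 := by
  have h := Matrix.mem_unitaryGroup_iff.mp hM
  have h2 := congrFun (congrFun h j) j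
  rw [Matrix.mul_apply, Matrix.one_apply_eq] at h2
  have h3 : ∀ k, M j k * (star M) k j = (Complex.normSq (M j k) : ℂ) := by
    intro k
    rw [Matrix.star_eq_conjTranspose, Matrix.conjTranspose_apply, mul_comm]
    exact (Complex.normSq_eq_conj_mul_self).symm
  rw [Finset.sum_congr rfl (fun k _ => h3 k)] at h2
  exact_mod_cast h2

lemma mh_convex : ConvexOn ℝ (Set.Ico (0:ℝ) 1)
    (fun x => Real.log (1 + x) - Real.log (1 - x)) := by
  have hint : interior (Set.Ico (0:ℝ) 1) = Set.Ioo 0 1 := interior_Ico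
  apply convexOn_of_hasDerivWithinAt2_nonneg (f' := fun x => (1+x)⁻¹ + (1-x)⁻¹)
    (f'' := fun x => (1-x)⁻¹ * (1-x)⁻¹ - (1+x)⁻¹ * (1+x)⁻¹) (convex_Ico 0 1)
  · apply ContinuousOn.sub
    · apply ContinuousOn.log
      · exact (continuous_const.add continuous_id).continuousOn
      · intro x hx; simp only [Set.mem_Ico] at hx; nlinarith [hx.1]
    · apply ContinuousOn.log
      · exact (continuous_const.sub continuous_id).continuousOn
      · intro x hx; simp only [Set.mem_Ico] at hx; nlinarith [hx.2]
  · intro x hx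
    rw [hint] at hx ⊢
    obtain ⟨hx0, hx1⟩ := hx
    have h1 : (1:ℝ) + x ≠ 0 := by nlinarith
    have h2 : (1:ℝ) - x ≠ 0 := by nlinarith
    have d1 : HasDerivAt (fun x : ℝ => Real.log (1 + x)) ((1+x)⁻¹) x := by
      have := (Real.hasDerivAt_log h1).comp x ((hasDerivAt_id x).const_add 1)
      simpa [Function.comp_def] using this
    have d2 : HasDerivAt (fun x : ℝ => Real.log (1 - x)) (-(1-x)⁻¹) x := by
      have := (Real.hasDerivAt_log h2).comp x ((hasDerivAt_id x).const_sub 1)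
      simpa [Function.comp_def] using this
    exact ((d1.sub d2).hasDerivWithinAt).congr_deriv (by ring)
  · intro x hx
    rw [hint] at hx ⊢
    obtain ⟨hx0, hx1⟩ := hx
    have h1 : (1:ℝ) + x ≠ 0 := by nlinarith
    have h2 : (1:ℝ) - x ≠ 0 := by nlinarith
    have d1 : HasDerivAt (fun x : ℝ => (1+x)⁻¹) (-((1+x)⁻¹*(1+x)⁻¹)) x := by
      have := ((hasDerivAt_id x).const_add 1).inv h1
      simpa [div_eq_mul_inv, mul_comm, sq, Pi.inv_def] using this
    have d2 : HasDerivAt (fun x : ℝ => (1-x)⁻¹) ((1-x)⁻¹*(1-x)⁻¹) x := by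
      have := ((hasDerivAt_id x).const_sub 1).inv h2
      simpa [div_eq_mul_inv, mul_comm, sq, Pi.inv_def] using this
    exact ((d1.add d2).hasDerivWithinAt).congr_deriv (by ring)
  · intro x hx
    rw [hint] at hx
    obtain ⟨hx0, hx1⟩ := hx
    have h1 : (0:ℝ) < 1 + x := by nlinarith
    have h2 : (0:ℝ) < 1 - x := by nlinarith
    have : (1:ℝ)+x ≥ 1 - x := by nlinarith
    have i1 : (1+x)⁻¹ ≤ (1-x)⁻¹ := by
      apply inv_anti₀ h2 this
    have i2 : (0:ℝ) ≤ (1+x)⁻¹ := by positivity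
    nlinarith
lemma mh_lemB_aux (n : ℕ) (V : Matrix (Fin n) (Fin n) ℂ)
    (hV : V ∈ Matrix.unitaryGroup (Fin n) ℂ) (s : Finset (Fin n)) :
    ∀ d : Fin n → ℝ, (∀ j, 0 ≤ d j) → (∀ j, d j < 1) → (∀ j, j ∉ s → d j = 0) →
    ∏ j, (1 - d j) ≤ ‖(V - Matrix.diagonal (fun j => (d j : ℂ))).det‖ := by
  induction s using Finset.induction_on with
  | empty =>
    intro d h0 h1 hs
    have hd : ∀ j, d j = 0 := fun j => hs j (Finset.notMem_empty j)
    have : (fun j => (d j : ℂ)) = fun _ => 0 := by funext j; rw [hd j]; simp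
    rw [this]
    simp only [Matrix.diagonal_zero, sub_zero, mh_abs_det_unitary n V hV]
    have : ∀ j : Fin n, (1 : ℝ) - d j = 1 := by intro j; rw [hd j]; ring
    simp [this]
  | @insert k s hk ih =>
    intro d h0 h1 hs
    set d' : Fin n → ℝ := Function.update d k 0 with hd'
    have hd'0 : ∀ j, 0 ≤ d' j := by
      intro j; by_cases hj : j = k <;> simp [hd', hj, Function.update_apply, h0 j]
    have hd'1 : ∀ j, d' j < 1 := by
      intro j; by_cases hj : j = k <;> simp [hd', hj, Function.update_apply, h1 j]
    have hd'k : d' k = 0 := by simp [hd']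
    have hd'eq : ∀ j, j ≠ k → d' j = d j := by
      intro j hj; simp [hd', Function.update_apply, hj]
    have IH : ∏ j, (1 - d' j) ≤ ‖(V - Matrix.diagonal (fun j => (d' j : ℂ))).det‖ := by
      apply ih
      · exact hd'0
      · exact hd'1
      · intro j hj
        by_cases hjk : j = k
        · rw [hjk]; exact hd'k
        · rw [hd'eq j hjk]; exact hs j (by simp [hjk, hj])
    set A := V - Matrix.diagonal (fun j => (d' j : ℂ)) with hA
    -- matrix identity
    have hmat : V - Matrix.diagonal (fun j => (d j : ℂ))
        = A.updateCol k (fun i => A i k - (d k : ℂ) * (Pi.single k 1 : Fin n → ℂ) i) := by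
      funext i j
      by_cases hj : j = k
      · subst hj
        rw [Matrix.updateCol_self]
        by_cases hij : i = j
        · subst hij
          simp [hA, Matrix.diagonal_apply_eq, hd'k, Pi.single_apply]
        · simp [hA, Matrix.sub_apply, Matrix.diagonal_apply_ne _ hij, Pi.single_apply, hij]
      · rw [Matrix.updateCol_ne hj]
        by_cases hij : i = j
        · subst hij
          simp [hA, Matrix.diagonal_apply_eq, hd'eq i hj]
        · simp [hA, Matrix.sub_apply, Matrix.diagonal_apply_ne _ hij]
    -- cramer vector
    set y : Fin n → ℂ := Matrix.cramer A (Pi.single k 1 : Fin n → ℂ) with hy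
    have hyk : y k = (A.updateCol k (Pi.single k 1 : Fin n → ℂ)).det := by
      rw [hy, Matrix.cramer_apply]
    have hAy : A *ᵥ y = A.det • (Pi.single k 1 : Fin n → ℂ) := by
      rw [hy, Matrix.mulVec_cramer]
    have hG := mh_lemG n V hV d' hd'0 (fun j => le_of_lt (hd'1 j)) k hd'k y A.det hAy
    have habs : ‖y k‖ ≤ ‖A.det‖ := by
      rw [Complex.norm_def, Complex.norm_def]
      exact Real.sqrt_le_sqrt hG
    have hprod : ∏ j, (1 - d j) = (1 - d k) * ∏ j, (1 - d' j) := by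
      rw [← Finset.mul_prod_erase Finset.univ (fun j => (1:ℝ) - d j) (Finset.mem_univ k),
        ← Finset.mul_prod_erase Finset.univ (fun j => (1:ℝ) - d' j) (Finset.mem_univ k), hd'k]
      rw [sub_zero, one_mul]
      congr 1
      apply Finset.prod_congr rfl
      intro j hj
      rw [hd'eq j (Finset.mem_erase.mp hj).1]
    have hdet : ‖(V - Matrix.diagonal (fun j => (d j : ℂ))).det‖
        = ‖(A.det - (d k : ℂ) * y k)‖ := by
      rw [hmat, mh_det_update, hyk]
    have hdk0 : (0:ℝ) ≤ d k := h0 k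
    have hdk1 : d k ≤ 1 := le_of_lt (h1 k)
    have t1 : ‖A.det‖ ≤ ‖(A.det - (d k : ℂ) * y k)‖
        + ‖((d k : ℂ) * y k)‖ := by
      have : A.det = (A.det - (d k : ℂ) * y k) + (d k : ℂ) * y k := by ring
      rw [this]
      -- note: after rw the subtractions reassemble; use triangle inequality
      exact (norm_add_le _ _).trans_eq (by rw [← this])
    have t2 : ‖((d k : ℂ) * y k)‖ = d k * ‖(y k)‖ := by
      rw [norm_mul, Complex.norm_real, Real.norm_eq_abs, abs_of_nonneg hdk0]
    have t3 : d k * ‖(y k)‖ ≤ d k * ‖A.det‖ :=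
      mul_le_mul_of_nonneg_left habs hdk0
    rw [hdet, hprod]
    have hP' : ∏ j, (1 - d' j) ≤ ‖A.det‖ := IH
    have hPnn : (0:ℝ) ≤ ∏ j, (1 - d' j) :=
      Finset.prod_nonneg fun j _ => by linarith [hd'1 j]
    nlinarith [t1, t2, t3, hP', hPnn, hdk0, hdk1]

lemma mh_lemB (n : ℕ) (V : Matrix (Fin n) (Fin n) ℂ)
    (hV : V ∈ Matrix.unitaryGroup (Fin n) ℂ) (d : Fin n → ℝ)
    (h0 : ∀ j, 0 ≤ d j) (h1 : ∀ j, d j < 1) :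
    ∏ j, (1 - d j) ≤ ‖(V - Matrix.diagonal (fun j => (d j : ℂ))).det‖ :=
  mh_lemB_aux n V hV Finset.univ d h0 h1 (fun j hj => absurd (Finset.mem_univ j) hj)



/-- Multi-matrix Harnack-type upper bound: for positive semidefinite `Z i` with eigenvalues
`r i k ∈ [0,1)`, unitary `U`, and weights `w i > 0` with `Σ w i = 1`,
`det(I - (Σ w i Z i)²)/|det(I - U Σ w i Z i)|² ≤ ∏_k ∏_i ((1 + r i k)/(1 - r i k))^(w i)`. -/
theorem multi_harnack_upper (n m : ℕ) (Z : Fin m → Matrix (Fin n) (Fin n) ℂ)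
    (hZ : ∀ i, (Z i).PosSemidef)
    (r : Fin m → Fin n → ℝ) (hr : ∀ i k, r i k = (hZ i).1.eigenvalues k)
    (hr0 : ∀ i k, 0 ≤ r i k) (hr1 : ∀ i k, r i k < 1)
    (U : Matrix (Fin n) (Fin n) ℂ) (hU : U ∈ Matrix.unitaryGroup (Fin n) ℂ)
    (w : Fin m → ℝ) (hw : ∀ i, 0 < w i) (hw1 : ∑ i, w i = 1) :
    ((1 - (∑ i, (w i : ℂ) • Z i) ^ 2).det).re
        / ‖(1 - U * ∑ i, (w i : ℂ) • Z i).det‖ ^ 2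
      ≤ ∏ k, ∏ i, ((1 + r i k) / (1 - r i k)) ^ (w i) := by
  have hZh : ∀ i, (Z i).IsHermitian := fun i => (hZ i).1
  set W : Matrix (Fin n) (Fin n) ℂ := ∑ i, (w i : ℂ) • Z i with hWdef
  have hW : W.IsHermitian := by
    show Wᴴ = W
    rw [hWdef, Matrix.conjTranspose_sum]
    apply Finset.sum_congr rfl
    intro i _
    rw [Matrix.conjTranspose_smul, hZh i, Complex.star_def, Complex.conj_ofReal]
  set lam : Fin n → ℝ := hW.eigenvalues with hlamdef
  set Q : Matrix (Fin n) (Fin n) ℂ := (hW.eigenvectorUnitary : Matrix (Fin n) (Fin n) ℂ)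
    with hQdef
  have hQ : Q ∈ Matrix.unitaryGroup (Fin n) ℂ := hW.eigenvectorUnitary.2
  have hQs : star Q * Q = 1 := Matrix.mem_unitaryGroup_iff'.mp hQ
  have hQs2 : Q * star Q = 1 := Matrix.mem_unitaryGroup_iff.mp hQ
  set D : Matrix (Fin n) (Fin n) ℂ := Matrix.diagonal (fun k => (lam k : ℂ)) with hDdef
  have hcast : (RCLike.ofReal ∘ hW.eigenvalues : Fin n → ℂ) = fun k => ((lam k : ℝ) : ℂ) := rfl
  have hdiagW : star Q * W * Q = D := by
    rw [hDdef, ← hcast]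
    have h := hW.conjStarAlgAut_star_eigenvectorUnitary
    rw [Unitary.conjStarAlgAut_apply, Unitary.coe_star, star_star] at h
    exact h
  have hspec : W = Q * D * star Q := by
    rw [hDdef, ← hcast]
    have h := hW.spectral_theorem
    rw [Unitary.conjStarAlgAut_apply] at h
    exact h
  -- eigenvector unitaries of the Z i
  set V : Fin m → Matrix (Fin n) (Fin n) ℂ :=
    fun i => ((hZh i).eigenvectorUnitary : Matrix (Fin n) (Fin n) ℂ) with hVdef
  have hVmem : ∀ i, V i ∈ Matrix.unitaryGroup (Fin n) ℂ := fun i => (hZh i).eigenvectorUnitary.2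
  set M : Fin m → Matrix (Fin n) (Fin n) ℂ := fun i => star (V i) * Q with hMdef
  have hMmem : ∀ i, M i ∈ Matrix.unitaryGroup (Fin n) ℂ :=
    fun i => mul_mem (Unitary.star_mem (hVmem i)) hQ
  set p : Fin m → Fin n → Fin n → ℝ := fun i j k => Complex.normSq (M i j k) with hpdef
  set q : Fin m → Fin n → ℝ := fun i k => ∑ j, r i j * p i j k with hqdef
  have hp0 : ∀ i j k, 0 ≤ p i j k := fun i j k => Complex.normSq_nonneg _
  have hpcol : ∀ i k, ∑ j, p i j k = 1 := fun i k => mh_col_sum n (M i) (hMmem i) k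
  have hprow : ∀ i j, ∑ k, p i j k = 1 := fun i j => mh_row_sum n (M i) (hMmem i) j
  have hZspec : ∀ i, Z i = V i * Matrix.diagonal (fun j => (r i j : ℂ)) * star (V i) := by
    intro i
    have : (RCLike.ofReal ∘ (hZh i).eigenvalues : Fin n → ℂ) = fun j => ((r i j : ℝ) : ℂ) := by
      funext j; rw [hr i j]; rfl
    rw [← this, hVdef]
    have h := (hZh i).spectral_theorem
    rw [Unitary.conjStarAlgAut_apply] at h
    exact h
  have hSQZQ : ∀ i k, (star Q * Z i * Q) k k = ((q i k : ℝ) : ℂ) := by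
    intro i k
    have hrw : star Q * Z i * Q = star (M i) * (Matrix.diagonal (fun j => (r i j : ℂ)) * M i) := by
      rw [hZspec i, hMdef]
      simp only [Matrix.star_mul, star_star, Matrix.mul_assoc]
    rw [hrw, mh_entry]
  have hlam_eq : ∀ k, lam k = ∑ i, w i * q i k := by
    intro k
    have h1 : star Q * W * Q = ∑ i, (w i : ℂ) • (star Q * Z i * Q) := by
      rw [hWdef, Finset.mul_sum, Finset.sum_mul]
      apply Finset.sum_congr rfl
      intro i _
      rw [Matrix.mul_smul, Matrix.smul_mul]
    have h2 := congrFun (congrFun (hdiagW.symm.trans h1) k) k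
    rw [hDdef, Matrix.diagonal_apply_eq, Matrix.sum_apply] at h2
    have h3 : ∀ i, ((w i : ℂ) • (star Q * Z i * Q)) k k = ((w i * q i k : ℝ) : ℂ) := by
      intro i
      rw [Matrix.smul_apply, hSQZQ i k, smul_eq_mul]
      push_cast; ring
    rw [Finset.sum_congr rfl (fun i _ => h3 i)] at h2
    exact_mod_cast h2
  -- bounds on q and lam
  have hq0 : ∀ i k, 0 ≤ q i k := by
    intro i k
    apply Finset.sum_nonneg
    intro j _
    exact mul_nonneg (hr0 i j) (hp0 i j k)
  have hq1 : ∀ i k, q i k < 1 := by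
    intro i k
    calc q i k = ∑ j, r i j * p i j k := rfl
      _ < ∑ j, p i j k := by
          apply Finset.sum_lt_sum
          · intro j _
            nlinarith [hr0 i j, hr1 i j, hp0 i j k]
          · have hne : ∃ j, p i j k ≠ 0 := by
              by_contra hc
              push_neg at hc
              have := hpcol i k
              rw [Finset.sum_congr rfl (fun j _ => hc j)] at this
              simp at this
            obtain ⟨j, hj⟩ := hne
            refine ⟨j, Finset.mem_univ j, ?_⟩
            have hpj : 0 < p i j k := lt_of_le_of_ne (hp0 i j k) (Ne.symm hj)
            nlinarith [hr1 i j, hr0 i j]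
      _ = 1 := hpcol i k
  have hlam0 : ∀ k, 0 ≤ lam k := by
    intro k
    rw [hlam_eq k]
    apply Finset.sum_nonneg
    intro i _
    exact mul_nonneg (le_of_lt (hw i)) (hq0 i k)
  have hlam1 : ∀ k, lam k < 1 := by
    intro k
    rw [hlam_eq k, ← hw1]
    apply Finset.sum_lt_sum
    · intro i _
      nlinarith [hw i, hq1 i k, hq0 i k]
    · have : ∃ i, i ∈ (Finset.univ : Finset (Fin m)) := by
        by_contra hc
        push_neg at hc
        have : (Finset.univ : Finset (Fin m)) = ∅ := Finset.eq_empty_of_forall_notMem hc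
        rw [this] at hw1
        simp at hw1
      obtain ⟨i, hi⟩ := this
      refine ⟨i, hi, ?_⟩
      nlinarith [hw i, hq1 i k]
  -- cancellation helpers
  have cancel1 : ∀ X : Matrix (Fin n) (Fin n) ℂ, star Q * (Q * X) = X := by
    intro X; rw [← Matrix.mul_assoc, hQs, Matrix.one_mul]
  have cancel2 : ∀ X : Matrix (Fin n) (Fin n) ℂ, Q * (star Q * X) = X := by
    intro X; rw [← Matrix.mul_assoc, hQs2, Matrix.one_mul]
  have hdetconj : ∀ X : Matrix (Fin n) (Fin n) ℂ, (Q * X * star Q).det = X.det := by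
    intro X
    rw [Matrix.det_mul, Matrix.det_mul]
    have : Q.det * (star Q).det = 1 := by rw [← Matrix.det_mul, hQs2, Matrix.det_one]
    calc Q.det * X.det * (star Q).det = X.det * (Q.det * (star Q).det) := by ring
      _ = X.det := by rw [this, mul_one]
  -- first determinant identity
  have hdet1 : ((1 - W ^ 2).det).re = ∏ k, (1 - lam k ^ 2) := by
    have hWsq : 1 - W ^ 2 = Q * (1 - D * D) * star Q := by
      rw [Matrix.mul_sub, Matrix.sub_mul, Matrix.mul_one, hQs2, pow_two, hspec]
      simp only [Matrix.mul_assoc, cancel1]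
    have hDD : (1 : Matrix (Fin n) (Fin n) ℂ) - D * D
        = Matrix.diagonal (fun k => ((1 - lam k ^ 2 : ℝ) : ℂ)) := by
      rw [hDdef, Matrix.diagonal_mul_diagonal, ← Matrix.diagonal_one, Matrix.diagonal_sub]
      congr 1
      funext k
      push_cast
      ring
    rw [hWsq, hdetconj, hDD, Matrix.det_diagonal]
    rw [show ∏ k, ((1 - lam k ^ 2 : ℝ) : ℂ) = ((∏ k, (1 - lam k ^ 2) : ℝ) : ℂ) by push_cast; rfl]
    rw [Complex.ofReal_re]
  -- second determinant inequality
  have hdet2 : ∏ k, (1 - lam k) ≤ ‖(1 - U * W).det‖ := by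
    set V₀ : Matrix (Fin n) (Fin n) ℂ := star Q * U * Q with hV₀def
    have hV₀mem : V₀ ∈ Matrix.unitaryGroup (Fin n) ℂ :=
      mul_mem (mul_mem (Unitary.star_mem hQ) hU) hQ
    have h2a : 1 - U * W = Q * (1 - V₀ * D) * star Q := by
      rw [Matrix.mul_sub, Matrix.sub_mul, Matrix.mul_one, hQs2, hspec, hV₀def]
      simp only [Matrix.mul_assoc, cancel1, cancel2]
    have h2b : 1 - V₀ * D = V₀ * (star V₀ - D) := by
      rw [Matrix.mul_sub, Matrix.mem_unitaryGroup_iff.mp hV₀mem]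
    rw [h2a, hdetconj, h2b, Matrix.det_mul, norm_mul,
      mh_abs_det_unitary n V₀ hV₀mem, one_mul]
    exact mh_lemB n (star V₀) (Unitary.star_mem hV₀mem) lam hlam0 hlam1
  -- positivity facts
  set P : ℝ := ∏ k, (1 - lam k) with hPdef
  have hPpos : 0 < P := Finset.prod_pos fun k _ => by linarith [hlam1 k]
  have hnum0 : 0 ≤ ∏ k, (1 - lam k ^ 2) :=
    Finset.prod_nonneg fun k _ => by nlinarith [hlam0 k, hlam1 k]
  have hden : P ^ 2 ≤ (‖(1 - U * W).det‖) ^ 2 :=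
    pow_le_pow_left₀ (le_of_lt hPpos) hdet2 2
  -- reduce to the eigenvalue product bound
  have hstep1 : ((1 - W ^ 2).det).re / (‖(1 - U * W).det‖) ^ 2
      ≤ ∏ k, ((1 + lam k) / (1 - lam k)) := by
    have h1 : ((1 - W ^ 2).det).re / (‖(1 - U * W).det‖) ^ 2
        ≤ ((1 - W ^ 2).det).re / P ^ 2 := by
      rw [hdet1]
      apply div_le_div_of_nonneg_left hnum0 (by positivity) hden
    have h2 : ((1 - W ^ 2).det).re / P ^ 2 = ∏ k, ((1 + lam k) / (1 - lam k)) := by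
      rw [hdet1, hPdef, ← Finset.prod_pow, ← Finset.prod_div_distrib]
      apply Finset.prod_congr rfl
      intro k _
      have hk : (1 : ℝ) - lam k ≠ 0 := by linarith [hlam1 k]
      rw [show (1 : ℝ) - lam k ^ 2 = (1 + lam k) * (1 - lam k) by ring, pow_two,
        mul_div_mul_right _ _ hk]
    linarith
  refine le_trans hstep1 ?_
  -- Jensen part
  set g : ℝ → ℝ := fun x => Real.log (1 + x) - Real.log (1 - x) with hgdef
  have hip : ∀ x : ℝ, 0 ≤ x → x < 1 → x ∈ Set.Ico (0:ℝ) 1 := fun x h1 h2 => ⟨h1, h2⟩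
  have hJ1 : ∀ k, g (lam k) ≤ ∑ i, w i * g (q i k) := by
    intro k
    have := mh_convex.map_sum_le (t := Finset.univ) (w := w) (p := fun i => q i k)
      (fun i _ => le_of_lt (hw i)) hw1 (fun i _ => hip _ (hq0 i k) (hq1 i k))
    simpa [smul_eq_mul, ← hlam_eq k, hgdef] using this
  have hJ2 : ∀ i k, g (q i k) ≤ ∑ j, p i j k * g (r i j) := by
    intro i k
    have := mh_convex.map_sum_le (t := Finset.univ) (w := fun j => p i j k)
      (p := fun j => r i j) (fun j _ => hp0 i j k) (hpcol i k)
      (fun j _ => hip _ (hr0 i j) (hr1 i j))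
    have hqq : (∑ j, p i j k * r i j) = q i k := by
      rw [hqdef]; exact Finset.sum_congr rfl fun j _ => mul_comm _ _
    simpa [smul_eq_mul, hgdef, hqq] using this
  have hsum : ∑ k, g (lam k) ≤ ∑ i, w i * ∑ j, g (r i j) := by
    calc ∑ k, g (lam k) ≤ ∑ k, ∑ i, w i * g (q i k) := Finset.sum_le_sum fun k _ => hJ1 k
      _ ≤ ∑ k, ∑ i, w i * ∑ j, p i j k * g (r i j) := by
          apply Finset.sum_le_sum
          intro k _
          apply Finset.sum_le_sum
          intro i _
          exact mul_le_mul_of_nonneg_left (hJ2 i k) (le_of_lt (hw i))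
      _ = ∑ i, w i * ∑ j, g (r i j) := by
          rw [Finset.sum_comm]
          apply Finset.sum_congr rfl
          intro i _
          rw [← Finset.mul_sum]
          congr 1
          rw [Finset.sum_comm]
          apply Finset.sum_congr rfl
          intro j _
          rw [← Finset.sum_mul, hprow i j, one_mul]
  -- convert products to exponentials
  have hL : ∏ k, ((1 + lam k) / (1 - lam k)) = Real.exp (∑ k, g (lam k)) := by
    rw [Real.exp_sum]
    apply Finset.prod_congr rfl
    intro k _
    rw [hgdef, Real.exp_sub, Real.exp_log (by linarith [hlam0 k] : (0:ℝ) < 1 + lam k),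
      Real.exp_log (by linarith [hlam1 k] : (0:ℝ) < 1 - lam k)]
  have hR : ∏ k, ∏ i, ((1 + r i k) / (1 - r i k)) ^ (w i)
      = Real.exp (∑ i, w i * ∑ j, g (r i j)) := by
    have : ∀ k i, ((1 + r i k) / (1 - r i k)) ^ (w i) = Real.exp (w i * g (r i k)) := by
      intro k i
      have hb : (0:ℝ) < (1 + r i k) / (1 - r i k) := by
        apply div_pos <;> [linarith [hr0 i k]; linarith [hr1 i k]]
      rw [Real.rpow_def_of_pos hb, hgdef,
        Real.log_div (by linarith [hr0 i k]) (by linarith [hr1 i k]), mul_comm]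
    calc ∏ k, ∏ i, ((1 + r i k) / (1 - r i k)) ^ (w i)
        = ∏ k, ∏ i, Real.exp (w i * g (r i k)) := by
          apply Finset.prod_congr rfl; intro k _
          exact Finset.prod_congr rfl fun i _ => this k i
      _ = Real.exp (∑ k, ∑ i, w i * g (r i k)) := by
          rw [Real.exp_sum]
          exact Finset.prod_congr rfl fun k _ => (Real.exp_sum _ _).symm
      _ = Real.exp (∑ i, w i * ∑ j, g (r i j)) := by
          rw [Finset.sum_comm]
          congr 1
          exact Finset.sum_congr rfl fun i _ => (Finset.mul_sum _ _ _).symm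
  rw [hL, hR]
  exact Real.exp_le_exp.mpr hsum
end
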